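/- arXiv:2010.14486 — 5 statements merged into one kernel-verified Lean document; each statement's English description precedes it below -/
import Mathlib

section
/- (Hardy–Poincaré inequality, case (a).) Suppose there exists θ ∈ (0,1) such that the function x ↦ a(x)/x^θ is nonincreasing on (0,1]. Then there exists a constant C_H > 0 such that for every function w : [0,1] → ℝ that is locally absolutely continuous on (0,1], continuous at 0, and satisfies w(0)=0 and ∫₀¹ a(x) |w'(x)|² dx < +∞, one has ∫₀¹ (a(x)/x²) w(x)² dx ≤ C_H ∫₀¹ a(x) |w'(x)|² dx. -/
open MeasureTheory Set Real Filter Topology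
open scoped ENNReal NNReal

lemma lintA {s : ℝ} (hs : s < 1) {x : ℝ} (hx : 0 < x) :
    ∫⁻ t in Ioo (0:ℝ) x, ENNReal.ofReal (t ^ (-s)) = ENNReal.ofReal (x ^ (1-s) / (1-s)) := by
  have hii : IntervalIntegrable (fun t : ℝ => t ^ (-s)) volume 0 x :=
    intervalIntegral.intervalIntegrable_rpow' (by linarith)
  have hInt : IntegrableOn (fun t : ℝ => t ^ (-s)) (Ioo 0 x) volume :=
    (intervalIntegrable_iff_integrableOn_Ioo_of_le hx.le).1 hii
  rw [← ofReal_integral_eq_lintegral_ofReal hInt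
      ((ae_restrict_iff' measurableSet_Ioo).2 (ae_of_all _ fun t ht => Real.rpow_nonneg ht.1.le _))]
  congr 1
  rw [setIntegral_congr_set Ioo_ae_eq_Ioc, ← intervalIntegral.integral_of_le hx.le,
    integral_rpow (Or.inl (by linarith))]
  rw [Real.zero_rpow (by linarith)]
  ring_nf

lemma lintB {γ : ℝ} (hγ : 0 < γ) {t : ℝ} (ht : 0 < t) (ht1 : t < 1) :
    ∫⁻ x in Ioo t 1, ENNReal.ofReal (x ^ (-1-γ)) ≤ ENNReal.ofReal (t ^ (-γ) / γ) := by
  have hco : ContinuousOn (fun x : ℝ => x ^ (-1-γ)) (uIcc t 1) := by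
    apply ContinuousOn.rpow_const continuousOn_id
    intro x hx
    rw [uIcc_of_le ht1.le] at hx
    exact Or.inl (ne_of_gt (lt_of_lt_of_le ht hx.1))
  have hii : IntervalIntegrable (fun x : ℝ => x ^ (-1-γ)) volume t 1 :=
    hco.intervalIntegrable
  have hInt : IntegrableOn (fun x : ℝ => x ^ (-1-γ)) (Ioo t 1) volume :=
    (intervalIntegrable_iff_integrableOn_Ioo_of_le ht1.le).1 hii
  rw [← ofReal_integral_eq_lintegral_ofReal hInt
      ((ae_restrict_iff' measurableSet_Ioo).2 (ae_of_all _ fun x hx => Real.rpow_nonneg (ht.trans hx.1).le _))]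
  apply ENNReal.ofReal_le_ofReal
  rw [setIntegral_congr_set Ioo_ae_eq_Ioc, ← intervalIntegral.integral_of_le ht1.le,
    integral_rpow (Or.inr ⟨by intro h; linarith, by rw [uIcc_of_le ht1.le]; intro h; exact absurd h.1 (by linarith)⟩)]
  rw [Real.one_rpow]
  have h1 : -1 - γ + 1 = -γ := by ring
  rw [h1]
  have h2 : (1 - t ^ (-γ)) / (-γ) = (t ^ (-γ) - 1) / γ := by
    rw [div_neg]; ring
  rw [h2, div_le_div_iff₀ hγ hγ]
  nlinarith [Real.rpow_pos_of_pos ht (-γ)]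

lemma ftc_bound (w w' : ℝ → ℝ) (hw : ∀ x ∈ Ioc (0:ℝ) 1, HasDerivAt w (w' x) x)
    (hw0c : ContinuousWithinAt w (Icc 0 1) 0) (hw00 : w 0 = 0)
    {x : ℝ} (hx1 : 0 < x) (hx2 : x < 1) :
    ENNReal.ofReal |w x| ≤ ∫⁻ t in Ioc (0:ℝ) x, ENNReal.ofReal |w' t| := by
  by_cases hK : (∫⁻ t in Ioc (0:ℝ) x, ENNReal.ofReal |w' t|) = ⊤
  · exact hK ▸ le_top
  have hdeq : ∀ᵐ t ∂(volume.restrict (Ioc (0:ℝ) x)), deriv w t = w' t :=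
    (ae_restrict_iff' measurableSet_Ioc).2 (ae_of_all _ fun t ht =>
      (hw t ⟨ht.1, ht.2.trans hx2.le⟩).deriv)
  have hmeas : AEStronglyMeasurable w' (volume.restrict (Ioc (0:ℝ) x)) :=
    ((measurable_deriv w).aestronglyMeasurable).congr hdeq
  have hInt : IntegrableOn w' (Ioc 0 x) volume := by
    refine ⟨hmeas, ?_⟩
    rw [hasFiniteIntegral_iff_norm, lt_top_iff_ne_top]
    simpa [Real.norm_eq_abs] using hK
  set C := ∫ t in Ioc (0:ℝ) x, |w' t| with hC
  have key : ∀ ε ∈ Ioo (0:ℝ) x, |w x| ≤ |w ε| + C := by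
    intro ε hε
    have hsub : Icc ε x ⊆ Ioc 0 x := fun t ht => ⟨lt_of_lt_of_le hε.1 ht.1, ht.2⟩
    have hii : IntervalIntegrable w' volume ε x := by
      rw [intervalIntegrable_iff_integrableOn_Icc_of_le hε.2.le]
      exact hInt.mono_set hsub
    have hftc : ∫ t in ε..x, w' t = w x - w ε := by
      apply intervalIntegral.integral_eq_sub_of_hasDerivAt _ hii
      intro t ht
      rw [uIcc_of_le hε.2.le] at ht
      exact hw t ⟨lt_of_lt_of_le hε.1 ht.1, ht.2.trans hx2.le⟩
    have h1 : |w x - w ε| ≤ C := by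
      rw [← hftc]
      calc |∫ t in ε..x, w' t| ≤ ∫ t in ε..x, |w' t| :=
              intervalIntegral.abs_integral_le_integral_abs hε.2.le
        _ ≤ C := by
              rw [intervalIntegral.integral_of_le hε.2.le]
              apply setIntegral_mono_set hInt.abs
                (ae_of_all _ fun t => abs_nonneg _)
                (HasSubset.Subset.eventuallyLE (Ioc_subset_Ioc_left hε.1.le))
    calc |w x| ≤ |w ε| + |w x - w ε| := by
          have := abs_add_le (w ε) (w x - w ε); simpa using this
      _ ≤ |w ε| + C := by linarith
  have hten : Tendsto (fun ε => |w ε| + C) (𝓝[Ioo (0:ℝ) x] 0) (𝓝 C) := by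
    have h0 : Tendsto w (𝓝[Ioo (0:ℝ) x] 0) (𝓝 0) := by
      have := hw0c.mono (fun t (ht : t ∈ Ioo (0:ℝ) x) => ⟨ht.1.le, ht.2.le.trans hx2.le⟩)
      rw [ContinuousWithinAt, hw00] at this
      exact this
    have : Tendsto (fun ε => |w ε| + C) (𝓝[Ioo (0:ℝ) x] 0) (𝓝 (|(0:ℝ)| + C)) :=
      (h0.abs).add tendsto_const_nhds
    simpa using this
  have hNB : (𝓝[Ioo (0:ℝ) x] (0:ℝ)).NeBot := left_nhdsWithin_Ioo_neBot hx1
  have hwxC : |w x| ≤ C :=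
    ge_of_tendsto hten (eventually_nhdsWithin_of_forall (fun ε hε => key ε hε))
  calc ENNReal.ofReal |w x| ≤ ENNReal.ofReal C := ENNReal.ofReal_le_ofReal hwxC
    _ = ∫⁻ t in Ioc (0:ℝ) x, ENNReal.ofReal |w' t| := by
        apply ofReal_integral_eq_lintegral_ofReal hInt.abs
          (ae_of_all _ fun t => abs_nonneg _)

/-- Hardy–Poincaré inequality, case (a): if `x ↦ a(x)/x^θ` is nonincreasing on `(0,1]`
for some `θ ∈ (0,1)`, then `∫₀¹ (a/x²) w² ≤ C_H ∫₀¹ a |w'|²` for every `w` that is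
differentiable on `(0,1]`, continuous at `0`, vanishes at `0`, and has
`∫₀¹ a |w'|² < ∞`. -/
theorem hardy_poincare_case_a (a : ℝ → ℝ)
    (ha_cont : ContinuousOn a (Icc 0 1))
    (ha0 : a 0 = 0)
    (ha_pos : ∀ x ∈ Ioc (0:ℝ) 1, 0 < a x)
    (θ : ℝ) (hθ : θ ∈ Ioo (0:ℝ) 1)
    (hmono : AntitoneOn (fun x => a x / x ^ θ) (Ioc 0 1)) :
    ∃ C_H > (0:ℝ), ∀ w w' : ℝ → ℝ,
      (∀ x ∈ Ioc (0:ℝ) 1, HasDerivAt w (w' x) x) →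
      ContinuousWithinAt w (Icc 0 1) 0 →
      w 0 = 0 →
      (∫⁻ x in Ioo (0:ℝ) 1, ENNReal.ofReal (a x * w' x ^ 2)) < ⊤ →
      (∫⁻ x in Ioo (0:ℝ) 1, ENNReal.ofReal (a x / x ^ 2 * w x ^ 2)) ≤
        ENNReal.ofReal C_H * ∫⁻ x in Ioo (0:ℝ) 1, ENNReal.ofReal (a x * w' x ^ 2) := by
  obtain ⟨hθ0, hθ1⟩ := hθ
  set γ : ℝ := (1 - θ)/2 with hγdef
  have hγ0 : 0 < γ := by rw [hγdef]; linarith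
  have hγθ1 : 1 - (γ + θ) = γ := by rw [hγdef]; ring
  have hγθlt : γ + θ < 1 := by linarith
  have hγθpos : 0 < γ + θ := by linarith
  refine ⟨(1/γ) * (1/γ), by positivity, ?_⟩
  intro w w' hw hw0c hw00 _hfin
  -- measurable modification of a
  set b : ℝ → ℝ := fun x => a (max 0 (min x 1)) with hbdef
  have hbc : Continuous b := by
    apply ha_cont.comp_continuous
    · exact continuous_const.max (continuous_id.min continuous_const)
    · intro x
      constructor
      · exact le_max_left _ _
      · exact max_le (by norm_num) (min_le_right _ _)
  have hba : ∀ x ∈ Icc (0:ℝ) 1, b x = a x := by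
    intro x hx
    rw [hbdef]
    simp only
    rw [min_eq_left hx.2, max_eq_right hx.1]
  set d : ℝ → ℝ := deriv w with hddef
  have hdw : ∀ t ∈ Ioc (0:ℝ) 1, d t = w' t := fun t ht => (hw t ht).deriv
  have hdm : Measurable d := measurable_deriv w
  set G : ℝ → ℝ≥0∞ := fun t => ENNReal.ofReal (b t * t ^ γ * d t ^ 2) with hGdef
  have hGm : Measurable G := by
    apply Measurable.ennreal_ofReal
    exact ((hbc.measurable.mul (measurable_id.pow measurable_const)).mul (hdm.pow measurable_const))
  set c : ℝ → ℝ≥0∞ := fun x => ENNReal.ofReal (x ^ (-1-γ)) with hcdef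
  have hcm : Measurable c := by
    apply Measurable.ennreal_ofReal
    exact measurable_id.pow measurable_const
  set I : ℝ≥0∞ := ∫⁻ x in Ioo (0:ℝ) 1, ENNReal.ofReal (a x * w' x ^ 2) with hI
  -- Step 1: pointwise bound
  have S1 : ∀ x ∈ Ioo (0:ℝ) 1, ENNReal.ofReal (a x / x ^ 2 * w x ^ 2)
      ≤ ENNReal.ofReal (1/γ) * (c x * ∫⁻ t in Ioo (0:ℝ) x, G t) := by
    intro x hx
    obtain ⟨hx1, hx2⟩ := hx
    have hax : 0 < a x := ha_pos x ⟨hx1, hx2.le⟩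
    set H : ℝ → ℝ≥0∞ := fun t => ENNReal.ofReal (t ^ (-γ) / b t) with hHdef
    have hHm : Measurable H := by
      apply Measurable.ennreal_ofReal
      exact (measurable_id.pow measurable_const).div hbc.measurable
    set Jx : ℝ≥0∞ := ∫⁻ t in Ioo (0:ℝ) x, G t with hJx
    -- FTC bound
    have K1 : ENNReal.ofReal |w x| ≤ ∫⁻ t in Ioo (0:ℝ) x, ENNReal.ofReal |w' t| := by
      rw [setLIntegral_congr Ioo_ae_eq_Ioc]
      exact ftc_bound w w' hw hw0c hw00 hx1 hx2
    -- pointwise factorization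
    have K2 : ∀ t ∈ Ioo (0:ℝ) x, ENNReal.ofReal |w' t|
        = (G t) ^ (1/2 : ℝ) * (H t) ^ (1/2 : ℝ) := by
      intro t ht
      have ht0 : 0 < t := ht.1
      have htI : t ∈ Ioc (0:ℝ) 1 := ⟨ht0, (ht.2.trans hx2).le⟩
      have hbt : b t = a t := hba t ⟨ht0.le, htI.2⟩
      have hat : 0 < a t := ha_pos t htI
      have hbt0 : 0 < b t := hbt ▸ hat
      have htγ : (0:ℝ) < t ^ γ := Real.rpow_pos_of_pos ht0 _
      have htγ' : (0:ℝ) < t ^ (-γ) := Real.rpow_pos_of_pos ht0 _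
      have hprod : (b t * t ^ γ * d t ^ 2) * (t ^ (-γ) / b t) = w' t ^ 2 := by
        rw [hdw t htI]
        have h1 : t ^ γ * t ^ (-γ) = 1 := by
          rw [← Real.rpow_add ht0]; simp
        field_simp
        rw [show t ^ γ * w' t ^ 2 * t ^ (-γ) = w' t ^ 2 * (t ^ γ * t ^ (-γ)) from by
          ring, h1, mul_one]
      have hGH : G t * H t = ENNReal.ofReal (w' t ^ 2) := by
        rw [hGdef, hHdef]
        simp only
        rw [← ENNReal.ofReal_mul (by positivity), hprod]
      rw [← ENNReal.mul_rpow_of_nonneg _ _ (by norm_num : (0:ℝ) ≤ 1/2), hGH]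
      have habs : w' t ^ 2 = |w' t| ^ 2 := (sq_abs _).symm
      rw [habs, ENNReal.ofReal_pow (abs_nonneg _), ← ENNReal.rpow_natCast _ 2,
        ← ENNReal.rpow_mul]
      norm_num
    -- Hölder
    have hpq : Real.HolderConjugate 2 2 := Real.holderConjugate_iff.mpr ⟨one_lt_two, by norm_num⟩
    have K3 : (∫⁻ t in Ioo (0:ℝ) x, ENNReal.ofReal |w' t|)
        ≤ Jx ^ (1/2 : ℝ) * (∫⁻ t in Ioo (0:ℝ) x, H t) ^ (1/2 : ℝ) := by
      rw [setLIntegral_congr_fun measurableSet_Ioo K2]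
      have hh := ENNReal.lintegral_mul_le_Lp_mul_Lq (volume.restrict (Ioo (0:ℝ) x)) hpq
        (f := fun t => (G t) ^ (1/2:ℝ)) (g := fun t => (H t) ^ (1/2:ℝ))
        ((hGm.pow measurable_const).aemeasurable)
        ((hHm.pow measurable_const).aemeasurable)
      have e1 : ∫⁻ t in Ioo (0:ℝ) x, ((G t) ^ (1/2:ℝ)) ^ (2:ℝ) = Jx := by
        apply lintegral_congr
        intro t
        rw [← ENNReal.rpow_mul]
        norm_num
      have e2 : ∫⁻ t in Ioo (0:ℝ) x, ((H t) ^ (1/2:ℝ)) ^ (2:ℝ)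
          = ∫⁻ t in Ioo (0:ℝ) x, H t := by
        apply lintegral_congr
        intro t
        rw [← ENNReal.rpow_mul]
        norm_num
      calc (∫⁻ t in Ioo (0:ℝ) x, (G t) ^ (1/2:ℝ) * (H t) ^ (1/2:ℝ))
          = ∫⁻ t in Ioo (0:ℝ) x,
              ((fun t => (G t) ^ (1/2:ℝ)) * fun t => (H t) ^ (1/2:ℝ)) t := rfl
        _ ≤ (∫⁻ t in Ioo (0:ℝ) x, ((G t) ^ (1/2:ℝ)) ^ (2:ℝ)) ^ (1/2:ℝ)
              * (∫⁻ t in Ioo (0:ℝ) x, ((H t) ^ (1/2:ℝ)) ^ (2:ℝ)) ^ (1/2:ℝ) := hh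
        _ = Jx ^ (1/2:ℝ) * (∫⁻ t in Ioo (0:ℝ) x, H t) ^ (1/2:ℝ) := by rw [e1, e2]
    -- bound on ∫ H
    have K4 : (∫⁻ t in Ioo (0:ℝ) x, H t) ≤ ENNReal.ofReal (x ^ (1-γ) / (γ * a x)) := by
      have hpt : ∀ t ∈ Ioo (0:ℝ) x, H t
          ≤ ENNReal.ofReal (x ^ θ / a x) * ENNReal.ofReal (t ^ (-(γ+θ))) := by
        intro t ht
        have ht0 : 0 < t := ht.1
        have htI : t ∈ Ioc (0:ℝ) 1 := ⟨ht0, (ht.2.trans hx2).le⟩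
        have hbt : b t = a t := hba t ⟨ht0.le, htI.2⟩
        have hat : 0 < a t := ha_pos t htI
        have htθ : (0:ℝ) < t ^ θ := Real.rpow_pos_of_pos ht0 _
        have hxθ : (0:ℝ) < x ^ θ := Real.rpow_pos_of_pos hx1 _
        have hmm := hmono htI ⟨hx1, hx2.le⟩ ht.2.le
        simp only at hmm
        have hcross : t ^ θ / a t ≤ x ^ θ / a x := by
          rw [div_le_div_iff₀ hat hax]
          rw [div_le_div_iff₀ hxθ htθ] at hmm
          nlinarith
        have hre : t ^ (-γ) / b t = t ^ (-(γ+θ)) * (t ^ θ / a t) := by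
          rw [hbt]
          have : t ^ (-(γ+θ)) * t ^ θ = t ^ (-γ) := by
            rw [← Real.rpow_add ht0]; ring_nf
          field_simp
          rw [← this]
        rw [hHdef]
        simp only
        rw [hre, ← ENNReal.ofReal_mul (by positivity)]
        apply ENNReal.ofReal_le_ofReal
        have hnn : (0:ℝ) ≤ t ^ (-(γ+θ)) := Real.rpow_nonneg ht0.le _
        calc t ^ (-(γ+θ)) * (t ^ θ / a t) ≤ t ^ (-(γ+θ)) * (x ^ θ / a x) :=
              mul_le_mul_of_nonneg_left hcross hnn
          _ = x ^ θ / a x * t ^ (-(γ+θ)) := by ring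
      calc (∫⁻ t in Ioo (0:ℝ) x, H t)
          ≤ ∫⁻ t in Ioo (0:ℝ) x,
              ENNReal.ofReal (x ^ θ / a x) * ENNReal.ofReal (t ^ (-(γ+θ))) :=
            setLIntegral_mono' measurableSet_Ioo hpt
        _ = ENNReal.ofReal (x ^ θ / a x) * ∫⁻ t in Ioo (0:ℝ) x, ENNReal.ofReal (t ^ (-(γ+θ))) :=
            lintegral_const_mul' _ _ ENNReal.ofReal_ne_top
        _ = ENNReal.ofReal (x ^ θ / a x) * ENNReal.ofReal (x ^ (1-(γ+θ)) / (1-(γ+θ))) := by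
            rw [lintA hγθlt hx1]
        _ = ENNReal.ofReal (x ^ (1-γ) / (γ * a x)) := by
            rw [← ENNReal.ofReal_mul (by positivity)]
            congr 1
            rw [hγθ1]
            have hxsum : x ^ θ * x ^ γ = x ^ (1-γ) := by
              rw [← Real.rpow_add hx1]
              congr 1
              rw [hγdef]; ring
            field_simp
            rw [← hxsum]
    -- combine
    have hwsq : ENNReal.ofReal (w x ^ 2) = (ENNReal.ofReal |w x|) ^ (2:ℕ) := by
      rw [← sq_abs, ENNReal.ofReal_pow (abs_nonneg _)]
    have hsq : (ENNReal.ofReal |w x|) ^ (2:ℕ)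
        ≤ Jx * ∫⁻ t in Ioo (0:ℝ) x, H t := by
      calc (ENNReal.ofReal |w x|) ^ (2:ℕ)
          ≤ (Jx ^ (1/2:ℝ) * (∫⁻ t in Ioo (0:ℝ) x, H t) ^ (1/2:ℝ)) ^ (2:ℕ) :=
            pow_le_pow_left' (K1.trans K3) 2
        _ = Jx * ∫⁻ t in Ioo (0:ℝ) x, H t := by
            rw [mul_pow, ← ENNReal.rpow_natCast (Jx ^ (1/2:ℝ)) 2,
              ← ENNReal.rpow_natCast ((∫⁻ t in Ioo (0:ℝ) x, H t) ^ (1/2:ℝ)) 2,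
              ← ENNReal.rpow_mul, ← ENNReal.rpow_mul]
            norm_num
    have hreal : a x / x ^ 2 * (x ^ (1-γ) / (γ * a x)) = 1/γ * x ^ (-1-γ) := by
      have hx2r : (x:ℝ) ^ (2:ℕ) = x ^ (2:ℝ) := (Real.rpow_natCast x 2).symm
      have hsplit : x ^ (1-γ) = x ^ (-1-γ) * x ^ (2:ℝ) := by
        rw [← Real.rpow_add hx1]; ring_nf
      rw [hx2r, hsplit]
      have h2 : (0:ℝ) < x ^ (2:ℝ) := Real.rpow_pos_of_pos hx1 _
      field_simp
    calc ENNReal.ofReal (a x / x ^ 2 * w x ^ 2)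
        = ENNReal.ofReal (a x / x ^ 2) * ENNReal.ofReal (w x ^ 2) := by
          rw [← ENNReal.ofReal_mul (by positivity)]
      _ ≤ ENNReal.ofReal (a x / x ^ 2) * (Jx * ∫⁻ t in Ioo (0:ℝ) x, H t) := by
          rw [hwsq]; exact mul_le_mul_right hsq _
      _ ≤ ENNReal.ofReal (a x / x ^ 2) * (Jx * ENNReal.ofReal (x ^ (1-γ) / (γ * a x))) := by
          exact mul_le_mul_right (mul_le_mul_right K4 _) _
      _ = (ENNReal.ofReal (a x / x ^ 2) * ENNReal.ofReal (x ^ (1-γ) / (γ * a x))) * Jx := by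
          ring
      _ = ENNReal.ofReal (1/γ * x ^ (-1-γ)) * Jx := by
          rw [← ENNReal.ofReal_mul (by positivity), hreal]
      _ = ENNReal.ofReal (1/γ) * (c x * Jx) := by
          rw [ENNReal.ofReal_mul (by positivity), hcdef, mul_assoc]
  -- Tonelli part
  set F : ℝ → ℝ → ℝ≥0∞ := fun x t =>
    ({q : ℝ × ℝ | 0 < q.2 ∧ q.2 < q.1}.indicator (fun q => c q.1 * G q.2)) (x, t) with hFdef
  have hSmeas : MeasurableSet {q : ℝ × ℝ | 0 < q.2 ∧ q.2 < q.1} :=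
    (measurableSet_lt measurable_const measurable_snd).inter
      (measurableSet_lt measurable_snd measurable_fst)
  have hFm : Measurable (Function.uncurry F) := by
    have : Function.uncurry F
        = {q : ℝ × ℝ | 0 < q.2 ∧ q.2 < q.1}.indicator (fun q => c q.1 * G q.2) := rfl
    rw [this]
    exact ((hcm.comp measurable_fst).mul (hGm.comp measurable_snd)).indicator hSmeas
  have hFx : ∀ x ∈ Ioo (0:ℝ) 1,
      (c x * ∫⁻ t in Ioo (0:ℝ) x, G t) = ∫⁻ t in Ioo (0:ℝ) 1, F x t := by
    intro x hx
    have hptw : ∀ t : ℝ, F x t = c x * (Ioo (0:ℝ) x).indicator G t := by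
      intro t
      by_cases h : t ∈ Ioo (0:ℝ) x
      · rw [indicator_of_mem h]
        have : (x, t) ∈ {q : ℝ × ℝ | 0 < q.2 ∧ q.2 < q.1} := ⟨h.1, h.2⟩
        rw [hFdef]; simp only
        rw [indicator_of_mem this]
      · rw [indicator_of_notMem h, mul_zero]
        have : (x, t) ∉ {q : ℝ × ℝ | 0 < q.2 ∧ q.2 < q.1} := by
          intro hc'; exact h ⟨hc'.1, hc'.2⟩
        rw [hFdef]; simp only
        rw [indicator_of_notMem this]
    calc (c x * ∫⁻ t in Ioo (0:ℝ) x, G t)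
        = c x * ∫⁻ t in Ioo (0:ℝ) 1, (Ioo (0:ℝ) x).indicator G t := by
          congr 1
          rw [lintegral_indicator measurableSet_Ioo, Measure.restrict_restrict measurableSet_Ioo,
            inter_eq_self_of_subset_left (Ioo_subset_Ioo_right hx.2.le)]
      _ = ∫⁻ t in Ioo (0:ℝ) 1, c x * (Ioo (0:ℝ) x).indicator G t :=
          (lintegral_const_mul' _ _ ENNReal.ofReal_ne_top).symm
      _ = ∫⁻ t in Ioo (0:ℝ) 1, F x t := by
          apply lintegral_congr
          intro t
          rw [hptw t]
  have hswap : (∫⁻ x in Ioo (0:ℝ) 1, ∫⁻ t in Ioo (0:ℝ) 1, F x t)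
      = ∫⁻ t in Ioo (0:ℝ) 1, ∫⁻ x in Ioo (0:ℝ) 1, F x t := by
    apply lintegral_lintegral_swap
    exact hFm.aemeasurable
  have hinner : ∀ t ∈ Ioo (0:ℝ) 1,
      (∫⁻ x in Ioo (0:ℝ) 1, F x t) ≤ ENNReal.ofReal (1/γ) * ENNReal.ofReal (a t * w' t ^ 2) := by
    intro t ht
    have ht0 : 0 < t := ht.1
    have ht1 : t < 1 := ht.2
    have hbt : b t = a t := hba t ⟨ht0.le, ht1.le⟩
    have hptw : ∀ x : ℝ, F x t = (Ioi t).indicator (fun x => c x * G t) x := by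
      intro x
      by_cases h : t < x
      · have h1 : (x, t) ∈ {q : ℝ × ℝ | 0 < q.2 ∧ q.2 < q.1} := ⟨ht0, h⟩
        rw [hFdef]; simp only
        rw [indicator_of_mem h1, indicator_of_mem (by exact h : x ∈ Ioi t)]
      · have h1 : (x, t) ∉ {q : ℝ × ℝ | 0 < q.2 ∧ q.2 < q.1} := fun hc' => h hc'.2
        rw [hFdef]; simp only
        rw [indicator_of_notMem h1, indicator_of_notMem (by exact h : x ∉ Ioi t)]
    have hIoi : Ioi t ∩ Ioo (0:ℝ) 1 = Ioo t 1 := by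
      ext x
      constructor
      · rintro ⟨h1, h2⟩; exact ⟨h1, h2.2⟩
      · rintro ⟨h1, h2⟩; exact ⟨h1, ht0.trans h1, h2⟩
    calc (∫⁻ x in Ioo (0:ℝ) 1, F x t)
        = ∫⁻ x in Ioo (0:ℝ) 1, (Ioi t).indicator (fun x => c x * G t) x := by
          apply lintegral_congr; intro x; rw [hptw x]
      _ = ∫⁻ x in Ioo t 1, c x * G t := by
          rw [lintegral_indicator measurableSet_Ioi, Measure.restrict_restrict measurableSet_Ioi,
            hIoi]
      _ = (∫⁻ x in Ioo t 1, c x) * G t := lintegral_mul_const' _ _ ENNReal.ofReal_ne_top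
      _ ≤ ENNReal.ofReal (t ^ (-γ) / γ) * G t := mul_le_mul_left (lintB hγ0 ht0 ht1) _
      _ = ENNReal.ofReal (1/γ) * ENNReal.ofReal (a t * w' t ^ 2) := by
          rw [hGdef]; simp only
          rw [← ENNReal.ofReal_mul (div_nonneg (Real.rpow_nonneg ht0.le _) hγ0.le),
            ← ENNReal.ofReal_mul (by positivity : (0:ℝ) ≤ 1/γ),
            hbt, hdw t ⟨ht0, ht1.le⟩]
          congr 1
          have h1 : t ^ (-γ) * t ^ γ = 1 := by
            rw [← Real.rpow_add ht0]; simp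
          field_simp
          rw [show t ^ (-γ) * a t * t ^ γ * w' t ^ 2 = a t * w' t ^ 2 * (t ^ (-γ) * t ^ γ) from
            by ring, h1, mul_one]
  -- final chain
  calc (∫⁻ x in Ioo (0:ℝ) 1, ENNReal.ofReal (a x / x ^ 2 * w x ^ 2))
      ≤ ∫⁻ x in Ioo (0:ℝ) 1, ENNReal.ofReal (1/γ) * (c x * ∫⁻ t in Ioo (0:ℝ) x, G t) :=
        setLIntegral_mono' measurableSet_Ioo S1
    _ = ENNReal.ofReal (1/γ) * ∫⁻ x in Ioo (0:ℝ) 1, (c x * ∫⁻ t in Ioo (0:ℝ) x, G t) :=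
        lintegral_const_mul' _ _ ENNReal.ofReal_ne_top
    _ = ENNReal.ofReal (1/γ) * ∫⁻ x in Ioo (0:ℝ) 1, ∫⁻ t in Ioo (0:ℝ) 1, F x t := by
        congr 1
        exact setLIntegral_congr_fun measurableSet_Ioo hFx
    _ = ENNReal.ofReal (1/γ) * ∫⁻ t in Ioo (0:ℝ) 1, ∫⁻ x in Ioo (0:ℝ) 1, F x t := by
        rw [hswap]
    _ ≤ ENNReal.ofReal (1/γ) * ∫⁻ t in Ioo (0:ℝ) 1,
          ENNReal.ofReal (1/γ) * ENNReal.ofReal (a t * w' t ^ 2) :=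
        mul_le_mul_right (setLIntegral_mono' measurableSet_Ioo hinner) _
    _ = ENNReal.ofReal (1/γ) * (ENNReal.ofReal (1/γ) * I) := by
        rw [lintegral_const_mul' _ _ ENNReal.ofReal_ne_top]
    _ = ENNReal.ofReal (1/γ * (1/γ)) * I := by
        rw [ENNReal.ofReal_mul (by positivity), mul_assoc]
end

section
/- (Hardy–Poincaré inequality, case (b).) Suppose there exists θ ∈ (1,2) such that the function x ↦ a(x)/x^θ is nondecreasing in a neighborhood of x=0. Then there exists a constant C_H > 0 such that for every function w : (0,1] → ℝ that is locally absolutely continuous on (0,1] and satisfies w(1)=0 and ∫₀¹ a(x) |w'(x)|² dx < +∞, one has ∫₀¹ (a(x)/x²) w(x)² dx ≤ C_H ∫₀¹ a(x) |w'(x)|² dx. -/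
open MeasureTheory Set Real
open scoped ENNReal NNReal

lemma my_lintegral_CS (μ : Measure ℝ) (f g : ℝ → ℝ≥0∞)
    (hf : AEMeasurable f μ) (hg : AEMeasurable g μ) :
    (∫⁻ x, (f x * g x) ^ (1/2 : ℝ) ∂μ) ^ 2 ≤ (∫⁻ x, f x ∂μ) * (∫⁻ x, g x ∂μ) := by
  have hconj : Real.HolderConjugate 2 2 := Real.HolderConjugate.two_two
  have h := ENNReal.lintegral_mul_le_Lp_mul_Lq μ hconj
      (hf.pow_const (1/2 : ℝ)) (hg.pow_const (1/2 : ℝ))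
  have h2 : ∀ (h : ℝ → ℝ≥0∞), (fun x => (h x ^ (1/2:ℝ)) ^ (2:ℝ)) = fun x => h x := by
    intro h; funext x
    rw [← ENNReal.rpow_mul]; norm_num
  calc (∫⁻ x, (f x * g x) ^ (1/2 : ℝ) ∂μ) ^ 2
      = (∫⁻ x, ((fun x => f x ^ (1/2:ℝ)) * fun x => g x ^ (1/2:ℝ)) x ∂μ) ^ 2 := by
        congr 1; apply lintegral_congr; intro x
        simp only [Pi.mul_apply]
        exact ENNReal.mul_rpow_of_nonneg _ _ (by norm_num)
    _ ≤ ((∫⁻ x, (f x ^ (1/2:ℝ)) ^ (2:ℝ) ∂μ) ^ (1/2:ℝ) * (∫⁻ x, (g x ^ (1/2:ℝ)) ^ (2:ℝ) ∂μ) ^ (1/2:ℝ)) ^ 2 := by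
        gcongr <;> exact h
    _ = ((∫⁻ x, f x ∂μ) ^ (1/2:ℝ) * (∫⁻ x, g x ∂μ) ^ (1/2:ℝ)) ^ 2 := by rw [h2 f, h2 g]
    _ = (∫⁻ x, f x ∂μ) * (∫⁻ x, g x ∂μ) := by
        rw [mul_pow, ← ENNReal.rpow_natCast (_ ^ (1/2:ℝ)), ← ENNReal.rpow_natCast (_ ^ (1/2:ℝ)),
          ← ENNReal.rpow_mul, ← ENNReal.rpow_mul]
        norm_num

lemma my_lint_rpow (x r p : ℝ) (h0 : 0 ≤ x) (hxr : x < r) (hp : p ≠ -1) (hx : 0 < x ∨ -1 < p) :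
    ∫⁻ t in Ioo x r, ENNReal.ofReal (t ^ p) = ENNReal.ofReal ((r^(p+1) - x^(p+1))/(p+1)) := by
  have hii : IntervalIntegrable (fun t => t ^ p) volume x r := by
    rcases hx with hx | hp'
    · exact intervalIntegral.intervalIntegrable_rpow (r := p) (Or.inr (by
        rw [uIcc_of_le hxr.le]; intro h; exact absurd (h.1) (by linarith)))
    · exact intervalIntegral.intervalIntegrable_rpow' hp'
  have hi : IntegrableOn (fun t => t ^ p) (Ioo x r) volume := by
    have := (intervalIntegrable_iff_integrableOn_Ioo_of_le hxr.le).mp hii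
    exact this
  rw [← ofReal_integral_eq_lintegral_ofReal hi]
  · congr 1
    have : ∫ t in Ioo x r, t ^ p = ∫ t in x..r, t ^ p := by
      rw [intervalIntegral.integral_of_le hxr.le]
      exact setIntegral_congr_set Ioo_ae_eq_Ioc
    rw [this, integral_rpow]
    rcases hx with hx | hp'
    · exact Or.inr ⟨hp, by rw [uIcc_of_le hxr.le]; intro h; exact absurd h.1 (by linarith)⟩
    · exact Or.inl hp'
  · filter_upwards [self_mem_ae_restrict measurableSet_Ioo] with t ht
    exact rpow_nonneg (le_of_lt (lt_of_le_of_lt h0 ht.1)) p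

lemma my_integrable (A v : ℝ → ℝ) (hA : Continuous A) (hv : Measurable v)
    (x : ℝ) (hx : 0 < x) (hx1 : x ≤ 1) (hpos : ∀ t ∈ Icc x 1, 0 < A t)
    (hE : (∫⁻ t in Ioo x 1, ENNReal.ofReal (A t * v t ^ 2)) < ⊤) :
    IntervalIntegrable v volume x 1 := by
  rw [intervalIntegrable_iff_integrableOn_Ioo_of_le hx1]
  obtain ⟨z, hz, hzmin⟩ := (isCompact_Icc (a := x) (b := 1)).exists_isMinOn
    (nonempty_Icc.mpr hx1) (hA.continuousOn)
  set m := A z with hm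
  have hm0 : 0 < m := hpos z hz
  have h2 : (∫⁻ t in Ioo x 1, ENNReal.ofReal (v t ^ 2)) < ⊤ := by
    have hb : (∫⁻ t in Ioo x 1, ENNReal.ofReal (v t ^ 2)) ≤
        ∫⁻ t in Ioo x 1, ENNReal.ofReal (1/m) * ENNReal.ofReal (A t * v t ^ 2) := by
      apply setLIntegral_mono' measurableSet_Ioo
      intro t ht
      rw [← ENNReal.ofReal_mul (by positivity)]
      apply ENNReal.ofReal_le_ofReal
      have hAt : m ≤ A t := hzmin ⟨ht.1.le, ht.2.le⟩
      rw [div_mul_eq_mul_div, one_mul, le_div_iff₀ hm0]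
      nlinarith [sq_nonneg (v t)]
    refine lt_of_le_of_lt hb ?_
    rw [lintegral_const_mul' _ _ ENNReal.ofReal_ne_top]
    exact ENNReal.mul_lt_top ENNReal.ofReal_lt_top hE
  constructor
  · exact hv.aestronglyMeasurable
  · rw [hasFiniteIntegral_iff_norm]
    calc (∫⁻ t in Ioo x 1, ENNReal.ofReal ‖v t‖) ≤ ∫⁻ t in Ioo x 1, 1 + ENNReal.ofReal (v t ^ 2) := by
          apply lintegral_mono
          intro t

          simp only [norm_eq_abs]
          rcases le_or_gt |v t| 1 with h | h
          · exact le_add_of_le_of_nonneg (by simpa using ENNReal.ofReal_le_ofReal h) zero_le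
          · refine le_add_of_nonneg_of_le zero_le (ENNReal.ofReal_le_ofReal ?_)
            nlinarith [sq_abs (v t), mul_le_mul_of_nonneg_left h.le (abs_nonneg (v t))]
      _ < ⊤ := by
          rw [lintegral_add_left measurable_const]
          refine ENNReal.add_lt_top.mpr ⟨?_, h2⟩
          simp [lt_top_iff_ne_top]

lemma my_sqrt_sq (s : ℝ) : (ENNReal.ofReal (s^2)) ^ (1/2:ℝ) = ENNReal.ofReal |s| := by
  rw [ENNReal.ofReal_rpow_of_nonneg (sq_nonneg s) (by norm_num : (0:ℝ) ≤ 1/2)]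
  congr 1
  rw [← sq_abs, ← Real.rpow_natCast |s| 2, ← Real.rpow_mul (abs_nonneg _)]
  norm_num

lemma my_measurable_rpow_const (c : ℝ) : Measurable fun t : ℝ => t ^ c := by
  have h : (fun t : ℝ => t ^ c)
      = fun t => if t = 0 then (if c = 0 then 1 else 0)
          else (if 0 < t then Real.exp (Real.log t * c)
            else Real.exp (Real.log t * c) * Real.cos (c * π)) := by
    funext t
    rcases lt_trichotomy t 0 with ht | ht | ht
    · rw [if_neg ht.ne, if_neg (by linarith), Real.rpow_def_of_neg ht]
    · subst ht
      by_cases hc : c = 0 <;> simp [hc, Real.zero_rpow]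
    · rw [if_neg ht.ne', if_pos ht, Real.rpow_def_of_pos ht]
  rw [h]
  exact Measurable.ite (by simpa using (measurableSet_singleton (0:ℝ)))
    measurable_const
    (Measurable.ite (measurableSet_lt measurable_const measurable_id)
      ((Real.measurable_log.mul measurable_const).exp)
      (((Real.measurable_log.mul measurable_const).exp).mul measurable_const))

set_option maxHeartbeats 2000000 in
/-- Hardy–Poincaré inequality, case (b): if `x ↦ a(x)/x^θ` is nondecreasing near `0`
for some `θ ∈ (1,2)`, then `∫₀¹ (a/x²) w² ≤ C_H ∫₀¹ a |w'|²` for every `w` that is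
differentiable on `(0,1]`, vanishes at `1`, and has `∫₀¹ a |w'|² < ∞`. -/
theorem hardy_poincare_case_b (a : ℝ → ℝ)
    (ha_cont : ContinuousOn a (Icc 0 1))
    (ha0 : a 0 = 0)
    (ha_pos : ∀ x ∈ Ioc (0:ℝ) 1, 0 < a x)
    (θ : ℝ) (hθ : θ ∈ Ioo (1:ℝ) 2)
    (hmono : ∃ δ ∈ Ioc (0:ℝ) 1, MonotoneOn (fun x => a x / x ^ θ) (Ioc 0 δ)) :
    ∃ C_H > (0:ℝ), ∀ w w' : ℝ → ℝ,
      (∀ x ∈ Ioc (0:ℝ) 1, HasDerivAt w (w' x) x) →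
      w 1 = 0 →
      (∫⁻ x in Ioo (0:ℝ) 1, ENNReal.ofReal (a x * w' x ^ 2)) < ⊤ →
      (∫⁻ x in Ioo (0:ℝ) 1, ENNReal.ofReal (a x / x ^ 2 * w x ^ 2)) ≤
        ENNReal.ofReal C_H * ∫⁻ x in Ioo (0:ℝ) 1, ENNReal.ofReal (a x * w' x ^ 2) := by
  obtain ⟨δ, ⟨hδ0, hδ1⟩, hmono⟩ := hmono
  obtain ⟨hθ1, hθ2⟩ := hθ
  -- continuous extension of `a`
  set A : ℝ → ℝ := fun x => a (max 0 (min x 1)) with hAdef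
  have hclamp : ∀ x : ℝ, max 0 (min x 1) ∈ Icc (0:ℝ) 1 :=
    fun x => ⟨le_max_left _ _, max_le (by norm_num) (min_le_right _ _)⟩
  have hAcont : Continuous A := by
    apply ha_cont.comp_continuous
    · exact continuous_const.max (continuous_id.min continuous_const)
    · exact fun x => hclamp x
  have hAeq : ∀ x ∈ Icc (0:ℝ) 1, A x = a x := by
    intro x hx
    simp only [hAdef]
    rw [min_eq_left hx.2, max_eq_right hx.1]
  have hApos : ∀ x ∈ Ioc (0:ℝ) 1, 0 < A x := by
    intro x hx
    rw [hAeq x ⟨hx.1.le, hx.2⟩]; exact ha_pos x hx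
  have hAδpos : 0 < A δ := hApos δ ⟨hδ0, hδ1⟩
  have hAmono : ∀ x ∈ Ioc (0:ℝ) δ, ∀ y ∈ Ioc (0:ℝ) δ, x ≤ y →
      A x / x ^ θ ≤ A y / y ^ θ := by
    intro x hx y hy hxy
    rw [hAeq x ⟨hx.1.le, hx.2.trans hδ1⟩, hAeq y ⟨hy.1.le, hy.2.trans hδ1⟩]
    exact hmono hx hy hxy
  -- min and max of A on [δ, 1]
  obtain ⟨zm, hzm, hzmin⟩ := (isCompact_Icc (a := δ) (b := 1)).exists_isMinOn
    (nonempty_Icc.mpr hδ1) hAcont.continuousOn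
  set m := A zm with hmdef
  have hm0 : 0 < m := hApos zm ⟨hδ0.trans_le hzm.1, hzm.2⟩
  obtain ⟨zM, hzM, hzmax⟩ := (isCompact_Icc (a := δ) (b := 1)).exists_isMaxOn
    (nonempty_Icc.mpr hδ1) hAcont.continuousOn
  set M := A zM with hMdef
  have hM0 : 0 < M := hApos zM ⟨hδ0.trans_le hzM.1, hzM.2⟩
  obtain ⟨β, hβdef⟩ : ∃ b : ℝ, b = (θ - 1)/2 := ⟨_, rfl⟩
  have hβ0 : 0 < β := by rw [hβdef]; linarith
  have hβne : β ≠ 0 := hβ0.ne'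
  have hβθ : θ - β = β + 1 := by rw [hβdef]; ring
  set C := 2*(A δ)/(δ*(θ-1))*(1/m) + 2/β^2 + M/(δ^2*m) + 1 with hCdef
  have hc1 : 0 ≤ 2*(A δ)/(δ*(θ-1))*(1/m) := by
    have h1 : 0 < A δ := hApos δ ⟨hδ0, hδ1⟩
    have h2 : 0 < δ*(θ-1) := mul_pos hδ0 (by linarith)
    exact mul_nonneg (div_nonneg (by linarith) h2.le) (one_div_nonneg.mpr hm0.le)
  have hc2 : 0 ≤ 2/β^2 := by positivity
  have hc3 : 0 ≤ M/(δ^2*m) :=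
    div_nonneg hM0.le (mul_pos (pow_pos hδ0 2) hm0).le
  have hC0 : 0 < C := by rw [hCdef]; linarith
  refine ⟨C, hC0, ?_⟩
  intro w w' hderiv hw1 hEfin
  set v : ℝ → ℝ := deriv w with hvdef
  have hvm : Measurable v := measurable_deriv w
  have hv : ∀ x ∈ Ioc (0:ℝ) 1, HasDerivAt w (v x) x := by
    intro x hx
    have := (hderiv x hx).deriv
    rw [hvdef, this]; exact hderiv x hx
  have hvw' : ∀ x ∈ Ioc (0:ℝ) 1, v x = w' x := fun x hx => (hderiv x hx).deriv
  -- replace (a, w') by (A, v) in integrals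
  have hEcongr : (∫⁻ x in Ioo (0:ℝ) 1, ENNReal.ofReal (A x * v x ^ 2))
      = ∫⁻ x in Ioo (0:ℝ) 1, ENNReal.ofReal (a x * w' x ^ 2) := by
    apply setLIntegral_congr_fun measurableSet_Ioo
    intro x hx
    dsimp only
    rw [hAeq x ⟨hx.1.le, hx.2.le⟩, hvw' x ⟨hx.1, hx.2.le⟩]
  have hTcongr : (∫⁻ x in Ioo (0:ℝ) 1, ENNReal.ofReal (A x / x ^ 2 * w x ^ 2))
      = ∫⁻ x in Ioo (0:ℝ) 1, ENNReal.ofReal (a x / x ^ 2 * w x ^ 2) := by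
    apply setLIntegral_congr_fun measurableSet_Ioo
    intro x hx
    dsimp only
    rw [hAeq x ⟨hx.1.le, hx.2.le⟩]
  rw [← hEcongr] at hEfin ⊢
  rw [← hTcongr]
  set E := ∫⁻ x in Ioo (0:ℝ) 1, ENNReal.ofReal (A x * v x ^ 2) with hEdef
  have hEsub : ∀ s : Set ℝ, s ⊆ Ioo (0:ℝ) 1 →
      (∫⁻ x in s, ENNReal.ofReal (A x * v x ^ 2)) ≤ E :=
    fun s hs => lintegral_mono_set hs
  have hIntxy : ∀ x y, 0 < x → x ≤ y → y ≤ 1 → IntervalIntegrable v volume x y := by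
    intro x y hx hxy hy1
    have h1 : IntervalIntegrable v volume x 1 := by
      apply my_integrable A v hAcont hvm x hx (hxy.trans hy1)
      · intro t ht; exact hApos t ⟨hx.trans_le ht.1, ht.2⟩
      · exact lt_of_le_of_lt (hEsub _ (fun t ht => ⟨hx.trans ht.1, ht.2⟩)) hEfin
    exact h1.mono_set (by rw [uIcc_of_le hxy, uIcc_of_le (hxy.trans hy1)]
                          exact Icc_subset_Icc le_rfl hy1)
  have hFTC : ∀ x y, 0 < x → x ≤ y → y ≤ 1 → (∫ t in x..y, v t) = w y - w x := by
    intro x y hx hxy hy1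
    apply intervalIntegral.integral_eq_sub_of_hasDerivAt ?_ (hIntxy x y hx hxy hy1)
    intro t ht
    rw [uIcc_of_le hxy] at ht
    exact hv t ⟨hx.trans_le ht.1, ht.2.trans hy1⟩
  have hIntAbs : ∀ x y, 0 < x → x ≤ y → y ≤ 1 →
      IntegrableOn (fun t => |v t|) (Ioo x y) volume := by
    intro x y hx hxy hy1
    have := (hIntxy x y hx hxy hy1).abs
    rw [intervalIntegrable_iff_integrableOn_Ioo_of_le hxy] at this
    exact this
  have hlint_abs : ∀ x y, 0 < x → x ≤ y → y ≤ 1 →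
      ENNReal.ofReal |∫ t in x..y, v t| ≤ ∫⁻ t in Ioo x y, ENNReal.ofReal |v t| := by
    intro x y hx hxy hy1
    calc ENNReal.ofReal |∫ t in x..y, v t|
        ≤ ENNReal.ofReal (∫ t in x..y, |v t|) :=
          ENNReal.ofReal_le_ofReal (intervalIntegral.abs_integral_le_integral_abs hxy)
      _ = ENNReal.ofReal (∫ t in Ioo x y, |v t|) := by
          rw [intervalIntegral.integral_of_le hxy,
            setIntegral_congr_set (Ioo_ae_eq_Ioc (a := x) (b := y)).symm]
      _ = ∫⁻ t in Ioo x y, ENNReal.ofReal |v t| :=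
          ofReal_integral_eq_lintegral_ofReal (hIntAbs x y hx hxy hy1)
            (Filter.Eventually.of_forall (fun t => abs_nonneg _))
  -- Cauchy–Schwarz bound on [δ, 1]
  have hwsq : ∀ x, δ ≤ x → x ≤ 1 → (ENNReal.ofReal |w x|)^2 ≤ ENNReal.ofReal (1/m) * E := by
    intro x hδx hx1
    have hx0 : 0 < x := hδ0.trans_le hδx
    have hwx : |w x| = |∫ t in x..1, v t| := by
      rw [hFTC x 1 hx0 hx1 le_rfl, hw1, zero_sub, abs_neg]
    have hb1 : (ENNReal.ofReal |w x|)^2 ≤ (∫⁻ t in Ioo x 1, ENNReal.ofReal |v t|)^2 := by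
      rw [hwx]; exact pow_le_pow_left' (hlint_abs x 1 hx0 hx1 le_rfl) 2
    have hCS := my_lintegral_CS (volume.restrict (Ioo x 1))
      (fun t => ENNReal.ofReal (1/A t)) (fun t => ENNReal.ofReal (A t * v t ^ 2))
      ((measurable_const.div hAcont.measurable).ennreal_ofReal.aemeasurable)
      ((hAcont.measurable.mul (hvm.pow_const 2)).ennreal_ofReal.aemeasurable)
    have hptw : (∫⁻ t in Ioo x 1, ENNReal.ofReal |v t|)
        = ∫⁻ t in Ioo x 1, (ENNReal.ofReal (1/A t) * ENNReal.ofReal (A t * v t ^ 2)) ^ (1/2:ℝ) := by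
      apply setLIntegral_congr_fun measurableSet_Ioo
      intro t ht
      dsimp only
      have hAt : 0 < A t := hApos t ⟨hx0.trans ht.1, ht.2.le⟩
      rw [← ENNReal.ofReal_mul (by positivity)]
      have : 1/A t * (A t * v t ^ 2) = v t ^ 2 := by field_simp
      rw [this, my_sqrt_sq]
    have hf_bound : (∫⁻ t in Ioo x 1, ENNReal.ofReal (1/A t)) ≤ ENNReal.ofReal (1/m) := by
      calc (∫⁻ t in Ioo x 1, ENNReal.ofReal (1/A t))
          ≤ ∫⁻ _ in Ioo x 1, ENNReal.ofReal (1/m) := by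
            apply setLIntegral_mono' measurableSet_Ioo
            intro t ht
            apply ENNReal.ofReal_le_ofReal
            have hAt : m ≤ A t := hzmin ⟨hδx.trans ht.1.le, ht.2.le⟩
            have hAt0 : 0 < A t := hApos t ⟨hx0.trans ht.1, ht.2.le⟩
            exact one_div_le_one_div_of_le hm0 hAt
        _ = ENNReal.ofReal (1/m) * volume (Ioo x 1) := setLIntegral_const _ _
        _ ≤ ENNReal.ofReal (1/m) * 1 := by
            apply mul_le_mul_right
            rw [Real.volume_Ioo]
            exact ENNReal.ofReal_le_one.mpr (by linarith)
        _ = ENNReal.ofReal (1/m) := mul_one _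
    calc (ENNReal.ofReal |w x|)^2
        ≤ (∫⁻ t in Ioo x 1, ENNReal.ofReal |v t|)^2 := hb1
      _ ≤ (∫⁻ t in Ioo x 1, ENNReal.ofReal (1/A t)) * (∫⁻ t in Ioo x 1, ENNReal.ofReal (A t * v t ^ 2)) := by
          rw [hptw]; exact hCS
      _ ≤ ENNReal.ofReal (1/m) * E :=
          mul_le_mul' hf_bound (hEsub _ (fun t ht => ⟨hx0.trans ht.1, ht.2⟩))
  -- the weighted energy density used in the inner Hardy estimate
  set H : ℝ → ℝ≥0∞ := fun t => ENNReal.ofReal (A t * t ^ (-β) * v t ^ 2) with hHdef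
  have hHm : Measurable H :=
    ((hAcont.measurable.mul (my_measurable_rpow_const (-β))).mul (hvm.pow_const 2)).ennreal_ofReal
  have hSlint : ∀ x y, 0 < x → x ≤ y → y ≤ 1 →
      ENNReal.ofReal (∫ t in x..y, |v t|) = ∫⁻ t in Ioo x y, ENNReal.ofReal |v t| := by
    intro x y hx hxy hy1
    rw [intervalIntegral.integral_of_le hxy,
      setIntegral_congr_set (Ioo_ae_eq_Ioc (a := x) (b := y)).symm]
    exact ofReal_integral_eq_lintegral_ofReal (hIntAbs x y hx hxy hy1)
      (Filter.Eventually.of_forall (fun t => abs_nonneg _))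
  -- inner Cauchy-Schwarz estimate on (x, δ)
  have hS : ∀ x, x ∈ Ioo (0:ℝ) δ →
      (∫⁻ t in Ioo x δ, ENNReal.ofReal |v t|)^2
        ≤ ENNReal.ofReal (x ^ (β+1) / (β * A x)) * ∫⁻ t in Ioo x δ, H t := by
    intro x hx
    obtain ⟨hx0, hxδ⟩ := hx
    have hAx : 0 < A x := hApos x ⟨hx0, hxδ.le.trans hδ1⟩
    have hCS := my_lintegral_CS (volume.restrict (Ioo x δ))
      (fun t => ENNReal.ofReal (t ^ β / A t)) H
      (((my_measurable_rpow_const β).div hAcont.measurable).ennreal_ofReal.aemeasurable)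
      hHm.aemeasurable
    have hptw : (∫⁻ t in Ioo x δ, ENNReal.ofReal |v t|)
        = ∫⁻ t in Ioo x δ, (ENNReal.ofReal (t ^ β / A t) * H t) ^ (1/2:ℝ) := by
      apply setLIntegral_congr_fun measurableSet_Ioo
      intro t ht
      dsimp only
      have ht0 : 0 < t := hx0.trans ht.1
      have hAt : 0 < A t := hApos t ⟨ht0, ht.2.le.trans hδ1⟩
      have htβ : (0:ℝ) < t ^ β := Real.rpow_pos_of_pos ht0 β
      rw [hHdef]
      rw [← ENNReal.ofReal_mul (by positivity)]
      have halg : t ^ β / A t * (A t * t ^ (-β) * v t ^ 2) = v t ^ 2 := by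
        rw [Real.rpow_neg ht0.le]
        field_simp
      rw [halg, my_sqrt_sq]
    have hf_bound : (∫⁻ t in Ioo x δ, ENNReal.ofReal (t ^ β / A t))
        ≤ ENNReal.ofReal (x ^ (β+1) / (β * A x)) := by
      have hmono_bd : ∀ t ∈ Ioo x δ, ENNReal.ofReal (t ^ β / A t)
          ≤ ENNReal.ofReal (x ^ θ / A x) * ENNReal.ofReal (t ^ (β - θ)) := by
        intro t ht
        have ht0 : 0 < t := hx0.trans ht.1
        have hAt : 0 < A t := hApos t ⟨ht0, ht.2.le.trans hδ1⟩
        have hxθ : (0:ℝ) < x ^ θ := Real.rpow_pos_of_pos hx0 θ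
        have htθ : (0:ℝ) < t ^ θ := Real.rpow_pos_of_pos ht0 θ
        have htβ : (0:ℝ) < t ^ β := Real.rpow_pos_of_pos ht0 β
        rw [← ENNReal.ofReal_mul (by positivity)]
        apply ENNReal.ofReal_le_ofReal
        have key : A x / x ^ θ ≤ A t / t ^ θ :=
          hAmono x ⟨hx0, hxδ.le⟩ t ⟨ht0, ht.2.le⟩ ht.1.le
        rw [div_le_div_iff₀ hxθ htθ] at key
        rw [Real.rpow_sub ht0, div_mul_eq_mul_div, div_le_div_iff₀ hAt hAx]
        calc t ^ β * A x = A x * t ^ θ * (t ^ β / t ^ θ) := by field_simp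
          _ ≤ A t * x ^ θ * (t ^ β / t ^ θ) :=
              mul_le_mul_of_nonneg_right key (by positivity)
          _ = x ^ θ * (t ^ β / t ^ θ) * A t := by ring
      have hbt : β - θ + 1 = -β := by rw [hβdef]; ring
      have hbtne : β - θ ≠ -1 := by
        intro hcon
        rw [hβdef] at hcon
        linarith
      calc (∫⁻ t in Ioo x δ, ENNReal.ofReal (t ^ β / A t))
          ≤ ∫⁻ t in Ioo x δ, ENNReal.ofReal (x ^ θ / A x) * ENNReal.ofReal (t ^ (β - θ)) :=
            setLIntegral_mono' measurableSet_Ioo hmono_bd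
        _ = ENNReal.ofReal (x ^ θ / A x) * ∫⁻ t in Ioo x δ, ENNReal.ofReal (t ^ (β - θ)) :=
            lintegral_const_mul' _ _ ENNReal.ofReal_ne_top
        _ = ENNReal.ofReal (x ^ θ / A x)
            * ENNReal.ofReal ((δ ^ (β - θ + 1) - x ^ (β - θ + 1))/(β - θ + 1)) := by
            rw [my_lint_rpow x δ (β - θ) hx0.le hxδ hbtne (Or.inl hx0)]
        _ ≤ ENNReal.ofReal (x ^ θ / A x) * ENNReal.ofReal (x ^ (-β) / β) := by
            apply mul_le_mul_right
            apply ENNReal.ofReal_le_ofReal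
            rw [hbt]
            have h1 : (0:ℝ) ≤ δ ^ (-β) := Real.rpow_nonneg hδ0.le _
            have h2 : (δ ^ (-β) - x ^ (-β))/(-β) = (x ^ (-β) - δ ^ (-β))/β := by
              rw [div_neg, ← neg_div, neg_sub]
            rw [h2, div_le_div_iff_of_pos_right hβ0]
            linarith
        _ = ENNReal.ofReal (x ^ (β+1) / (β * A x)) := by
            rw [← ENNReal.ofReal_mul (by positivity)]
            congr 1
            rw [div_mul_div_comm, ← Real.rpow_add hx0]
            rw [show θ + -β = β + 1 by linarith [hβθ]]
            ring
    calc (∫⁻ t in Ioo x δ, ENNReal.ofReal |v t|)^2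
        = (∫⁻ t in Ioo x δ, (ENNReal.ofReal (t ^ β / A t) * H t) ^ (1/2:ℝ))^2 := by rw [hptw]
      _ ≤ (∫⁻ t in Ioo x δ, ENNReal.ofReal (t ^ β / A t)) * (∫⁻ t in Ioo x δ, H t) := hCS
      _ ≤ ENNReal.ofReal (x ^ (β+1) / (β * A x)) * ∫⁻ t in Ioo x δ, H t :=
          mul_le_mul_left hf_bound _
  -- pointwise bound on (0, δ)
  have hrpm : Measurable fun t : ℝ => ENNReal.ofReal (t ^ (β - 1)) :=
    (my_measurable_rpow_const (β-1)).ennreal_ofReal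
  have hpt : ∀ x ∈ Ioo (0:ℝ) δ,
      ENNReal.ofReal (A x / x ^ 2 * w x ^ 2)
        ≤ ENNReal.ofReal (2 * (A δ / δ ^ θ) * w δ ^ 2) * ENNReal.ofReal (x ^ (θ - 2))
          + ENNReal.ofReal (2 / β) * (ENNReal.ofReal (x ^ (β - 1)) * ∫⁻ t in Ioo x δ, H t) := by
    intro x hx
    obtain ⟨hx0, hxδ⟩ := hx
    have hAx : 0 < A x := hApos x ⟨hx0, hxδ.le.trans hδ1⟩
    have hx2 : (0:ℝ) < x ^ 2 := by positivity
    set S := ∫ t in x..δ, |v t| with hSdef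
    have hS0 : 0 ≤ S := intervalIntegral.integral_nonneg hxδ.le (fun t _ => abs_nonneg _)
    have hwxb : |w x| ≤ |w δ| + S := by
      have h1 := hFTC x δ hx0 hxδ.le hδ1
      have h2 : w x = w δ - ∫ t in x..δ, v t := by linarith
      rw [h2]
      calc |w δ - ∫ t in x..δ, v t| ≤ |w δ| + |∫ t in x..δ, v t| := abs_sub _ _
        _ ≤ |w δ| + S := by
            have h3 : |∫ t in x..δ, v t| ≤ S :=
              intervalIntegral.abs_integral_le_integral_abs hxδ.le
            linarith
    have hsq : w x ^ 2 ≤ 2 * w δ ^ 2 + 2 * S ^ 2 := by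
      have h4 : |w x| ^ 2 ≤ (|w δ| + S) ^ 2 := pow_le_pow_left₀ (abs_nonneg _) hwxb 2
      nlinarith [h4, sq_abs (w x), sq_abs (w δ), sq_nonneg (|w δ| - S)]
    have hxx : x ^ θ / x ^ 2 = x ^ (θ - 2) := by
      rw [← Real.rpow_natCast x 2, ← Real.rpow_sub hx0]
      norm_num
    have hkey : A x ≤ A δ / δ ^ θ * x ^ θ := by
      have h := hAmono x ⟨hx0, hxδ.le⟩ δ ⟨hδ0, le_rfl⟩ hxδ.le
      rw [div_le_iff₀ (Real.rpow_pos_of_pos hx0 θ)] at h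
      linarith
    calc ENNReal.ofReal (A x / x ^ 2 * w x ^ 2)
        ≤ ENNReal.ofReal (A x / x ^ 2 * (2 * w δ ^ 2 + 2 * S ^ 2)) := by
          apply ENNReal.ofReal_le_ofReal
          exact mul_le_mul_of_nonneg_left hsq (by positivity)
      _ = ENNReal.ofReal (2 * (A x / x ^ 2) * w δ ^ 2)
          + ENNReal.ofReal (2 * (A x / x ^ 2)) * ENNReal.ofReal (S ^ 2) := by
          rw [← ENNReal.ofReal_mul (by positivity),
            ← ENNReal.ofReal_add (by positivity) (by positivity)]
          congr 1; ring
      _ ≤ ENNReal.ofReal (2 * (A δ / δ ^ θ) * w δ ^ 2) * ENNReal.ofReal (x ^ (θ - 2))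
          + ENNReal.ofReal (2 / β) * (ENNReal.ofReal (x ^ (β - 1)) * ∫⁻ t in Ioo x δ, H t) := by
          apply add_le_add
          · rw [← ENNReal.ofReal_mul (by positivity)]
            apply ENNReal.ofReal_le_ofReal
            rw [← hxx]
            have h5 := mul_le_mul_of_nonneg_right hkey
              (by positivity : (0:ℝ) ≤ w δ ^ 2 / x ^ 2)
            calc 2 * (A x / x ^ 2) * w δ ^ 2 = 2 * (A x * (w δ ^ 2 / x ^ 2)) := by ring
              _ ≤ 2 * (A δ / δ ^ θ * x ^ θ * (w δ ^ 2 / x ^ 2)) := by linarith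
              _ = 2 * (A δ / δ ^ θ) * w δ ^ 2 * (x ^ θ / x ^ 2) := by ring
          · have hs2 : ENNReal.ofReal (S ^ 2)
                ≤ ENNReal.ofReal (x ^ (β+1) / (β * A x)) * ∫⁻ t in Ioo x δ, H t := by
              rw [← sq_abs S, abs_of_nonneg hS0, ENNReal.ofReal_pow hS0,
                hSlint x δ hx0 hxδ.le hδ1]
              exact hS x ⟨hx0, hxδ⟩
            calc ENNReal.ofReal (2 * (A x / x ^ 2)) * ENNReal.ofReal (S ^ 2)
                ≤ ENNReal.ofReal (2 * (A x / x ^ 2))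
                  * (ENNReal.ofReal (x ^ (β+1) / (β * A x)) * ∫⁻ t in Ioo x δ, H t) :=
                  mul_le_mul_right hs2 _
              _ = (ENNReal.ofReal (2 * (A x / x ^ 2)) * ENNReal.ofReal (x ^ (β+1) / (β * A x)))
                  * ∫⁻ t in Ioo x δ, H t := by rw [mul_assoc]
              _ = ENNReal.ofReal (2 / β) * (ENNReal.ofReal (x ^ (β - 1)) * ∫⁻ t in Ioo x δ, H t) := by
                  rw [← ENNReal.ofReal_mul (by positivity), ← mul_assoc,
                    ← ENNReal.ofReal_mul (by positivity)]
                  congr 2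
                  have hrel : x ^ (β+1) = x ^ (β-1) * x ^ 2 := by
                    rw [← Real.rpow_natCast x 2, ← Real.rpow_add hx0]
                    congr 1; ring
                  rw [hrel]
                  field_simp
  -- Tonelli
  have tonelli : (∫⁻ x in Ioo (0:ℝ) δ, ENNReal.ofReal (x ^ (β-1)) * ∫⁻ t in Ioo x δ, H t)
      ≤ ENNReal.ofReal (1/β) * E := by
    obtain ⟨G, hGdef⟩ : ∃ G : ℝ × ℝ → ℝ≥0∞, G = fun p =>
        if p.1 < p.2 then ENNReal.ofReal (p.1 ^ (β-1)) * H p.2 else 0 := ⟨_, rfl⟩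
    have hGm : Measurable G := by
      rw [hGdef]
      apply Measurable.ite (measurableSet_lt measurable_fst measurable_snd)
      · exact (((my_measurable_rpow_const (β-1)).comp measurable_fst).ennreal_ofReal).mul
          (hHm.comp measurable_snd)
      · exact measurable_const
    have hstep1 : ∀ x ∈ Ioo (0:ℝ) δ,
        ENNReal.ofReal (x ^ (β-1)) * (∫⁻ t in Ioo x δ, H t)
          = ∫⁻ t in Ioo 0 δ, G (x, t) := by
      intro x hx
      have hind : ∀ t : ℝ, G (x, t)
          = (Ioi x).indicator (fun t => ENNReal.ofReal (x ^ (β-1)) * H t) t := by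
        intro t
        by_cases h : x < t
        · simp [hGdef, h, indicator_of_mem (mem_Ioi.mpr h)]
        · simp [hGdef, h, indicator_of_notMem (fun hc => h (mem_Ioi.mp hc))]
      simp_rw [hind]
      rw [lintegral_indicator measurableSet_Ioi, Measure.restrict_restrict measurableSet_Ioi]
      have hseteq : Ioi x ∩ Ioo 0 δ = Ioo x δ := by
        ext t
        simp only [mem_inter_iff, mem_Ioi, mem_Ioo]
        constructor
        · rintro ⟨h1, _, h3⟩; exact ⟨h1, h3⟩
        · rintro ⟨h1, h2⟩; exact ⟨h1, hx.1.trans h1, h2⟩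
      rw [hseteq, lintegral_const_mul _ hHm]
    have hstep3 : ∀ t ∈ Ioo (0:ℝ) δ,
        (∫⁻ x in Ioo 0 δ, G (x, t)) = ENNReal.ofReal (t ^ β / β) * H t := by
      intro t ht
      have hind : ∀ x : ℝ, G (x, t)
          = (Iio t).indicator (fun x => ENNReal.ofReal (x ^ (β-1))) x * H t := by
        intro x
        by_cases h : x < t
        · simp [hGdef, h, indicator_of_mem (mem_Iio.mpr h)]
        · simp [hGdef, h, indicator_of_notMem (fun hc => h (mem_Iio.mp hc))]
      simp_rw [hind]
      rw [lintegral_mul_const _ (hrpm.indicator measurableSet_Iio)]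
      congr 1
      rw [lintegral_indicator measurableSet_Iio, Measure.restrict_restrict measurableSet_Iio]
      have hseteq : Iio t ∩ Ioo 0 δ = Ioo 0 t := by
        ext s
        simp only [mem_inter_iff, mem_Iio, mem_Ioo]
        constructor
        · rintro ⟨h1, h2, _⟩; exact ⟨h2, h1⟩
        · rintro ⟨h1, h2⟩; exact ⟨h2, h1, h2.trans ht.2⟩
      rw [hseteq, my_lint_rpow 0 t (β-1) le_rfl ht.1
        (by intro h; rw [hβdef] at h; linarith) (Or.inr (by rw [hβdef]; linarith))]
      congr 1
      have he : β - 1 + 1 = β := by ring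
      rw [he, Real.zero_rpow hβne]
      ring
    have hswap := lintegral_lintegral_swap
      (μ := volume.restrict (Ioo (0:ℝ) δ)) (ν := volume.restrict (Ioo (0:ℝ) δ))
      (f := fun x t => G (x, t)) hGm.aemeasurable
    calc (∫⁻ x in Ioo (0:ℝ) δ, ENNReal.ofReal (x ^ (β-1)) * ∫⁻ t in Ioo x δ, H t)
        = ∫⁻ x in Ioo (0:ℝ) δ, ∫⁻ t in Ioo 0 δ, G (x, t) :=
          setLIntegral_congr_fun measurableSet_Ioo
            (fun x hx => hstep1 x hx)
      _ = ∫⁻ t in Ioo (0:ℝ) δ, ∫⁻ x in Ioo 0 δ, G (x, t) := hswap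
      _ = ∫⁻ t in Ioo (0:ℝ) δ, ENNReal.ofReal (t ^ β / β) * H t :=
          setLIntegral_congr_fun measurableSet_Ioo
            (fun t ht => hstep3 t ht)
      _ = ∫⁻ t in Ioo (0:ℝ) δ, ENNReal.ofReal (1/β) * ENNReal.ofReal (A t * v t ^ 2) := by
          apply setLIntegral_congr_fun measurableSet_Ioo
          intro t ht
          have hAt : 0 < A t := hApos t ⟨ht.1, ht.2.le.trans hδ1⟩
          have htβ : (0:ℝ) < t ^ β := Real.rpow_pos_of_pos ht.1 β
          rw [hHdef]
          dsimp only
          rw [← ENNReal.ofReal_mul (by positivity), ← ENNReal.ofReal_mul (by positivity)]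
          congr 1
          have hrel : t ^ (-β) * t ^ β = 1 := by
            rw [← Real.rpow_add ht.1]
            simp
          calc t ^ β / β * (A t * t ^ (-β) * v t ^ 2)
              = (t ^ (-β) * t ^ β) * (A t * v t ^ 2) / β := by ring
            _ = 1/β * (A t * v t ^ 2) := by rw [hrel]; ring
      _ = ENNReal.ofReal (1/β) * ∫⁻ t in Ioo (0:ℝ) δ, ENNReal.ofReal (A t * v t ^ 2) :=
          lintegral_const_mul' _ _ ENNReal.ofReal_ne_top
      _ ≤ ENNReal.ofReal (1/β) * E :=
          mul_le_mul_right (hEsub _ (fun t ht => ⟨ht.1, ht.2.trans_le hδ1⟩)) _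
  -- assemble
  have hsplit : Ioo (0:ℝ) 1 = Ioo 0 δ ∪ Ico δ 1 := by
    ext t
    simp only [mem_Ioo, mem_union, mem_Ico]
    constructor
    · rintro ⟨h1, h2⟩
      rcases lt_or_ge t δ with h | h
      · exact Or.inl ⟨h1, h⟩
      · exact Or.inr ⟨h, h2⟩
    · rintro (⟨h1, h2⟩ | ⟨h1, h2⟩)
      · exact ⟨h1, h2.trans_le hδ1⟩
      · exact ⟨hδ0.trans_le h1, h2⟩
  have hdisj : Disjoint (Ioo (0:ℝ) δ) (Ico δ 1) := by
    apply Set.disjoint_left.mpr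
    rintro t ⟨_, h2⟩ ⟨h3, _⟩
    exact absurd h3 (not_le.mpr h2)
  have hT2 : (∫⁻ x in Ico δ 1, ENNReal.ofReal (A x / x ^ 2 * w x ^ 2))
      ≤ ENNReal.ofReal (M / (δ^2 * m)) * E := by
    calc ∫⁻ x in Ico δ 1, ENNReal.ofReal (A x / x ^ 2 * w x ^ 2)
        ≤ ∫⁻ _ in Ico δ 1, ENNReal.ofReal (M / δ ^ 2) * (ENNReal.ofReal (1/m) * E) := by
          apply setLIntegral_mono' measurableSet_Ico
          intro x hx
          have hx0 : 0 < x := hδ0.trans_le hx.1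
          have hAxp : 0 < A x := hApos x ⟨hx0, hx.2.le⟩
          have hwb := hwsq x hx.1 hx.2.le
          have h1 : ENNReal.ofReal (A x / x ^ 2 * w x ^ 2)
              = ENNReal.ofReal (A x / x ^ 2) * ENNReal.ofReal |w x| ^ 2 := by
            rw [← ENNReal.ofReal_pow (abs_nonneg _), sq_abs,
              ← ENNReal.ofReal_mul (by positivity)]
          rw [h1]
          apply mul_le_mul' ?_ hwb
          apply ENNReal.ofReal_le_ofReal
          have hAM : A x ≤ M := hzmax ⟨hx.1, hx.2.le⟩
          have h2 : δ ^ 2 ≤ x ^ 2 := pow_le_pow_left₀ hδ0.le hx.1 2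
          exact div_le_div₀ hM0.le hAM (by positivity) h2
      _ = ENNReal.ofReal (M / δ ^ 2) * (ENNReal.ofReal (1/m) * E) * volume (Ico δ 1) :=
          setLIntegral_const _ _
      _ ≤ ENNReal.ofReal (M / δ ^ 2) * (ENNReal.ofReal (1/m) * E) * 1 := by
          apply mul_le_mul_right
          rw [Real.volume_Ico]
          exact ENNReal.ofReal_le_one.mpr (by linarith)
      _ = ENNReal.ofReal (M / (δ^2 * m)) * E := by
          rw [mul_one, ← mul_assoc, ← ENNReal.ofReal_mul (by positivity)]
          congr 2
          field_simp
  have hT1 : (∫⁻ x in Ioo (0:ℝ) δ, ENNReal.ofReal (A x / x ^ 2 * w x ^ 2))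
      ≤ ENNReal.ofReal (2 * A δ / (δ * (θ-1)) * (1/m)) * E + ENNReal.ofReal (2 / β^2) * E := by
    have hwδ : ENNReal.ofReal (w δ ^ 2) ≤ ENNReal.ofReal (1/m) * E := by
      rw [← sq_abs (w δ), ENNReal.ofReal_pow (abs_nonneg _)]
      exact hwsq δ le_rfl hδ1
    calc ∫⁻ x in Ioo (0:ℝ) δ, ENNReal.ofReal (A x / x ^ 2 * w x ^ 2)
        ≤ ∫⁻ x in Ioo (0:ℝ) δ,
            (ENNReal.ofReal (2 * (A δ / δ ^ θ) * w δ ^ 2) * ENNReal.ofReal (x ^ (θ - 2))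
            + ENNReal.ofReal (2 / β) * (ENNReal.ofReal (x ^ (β - 1)) * ∫⁻ t in Ioo x δ, H t)) :=
          setLIntegral_mono' measurableSet_Ioo hpt
      _ = ENNReal.ofReal (2 * (A δ / δ ^ θ) * w δ ^ 2)
            * (∫⁻ x in Ioo (0:ℝ) δ, ENNReal.ofReal (x ^ (θ-2)))
          + ENNReal.ofReal (2/β)
            * (∫⁻ x in Ioo (0:ℝ) δ, ENNReal.ofReal (x ^ (β-1)) * ∫⁻ t in Ioo x δ, H t) := by
          rw [lintegral_add_left ((my_measurable_rpow_const (θ-2)).ennreal_ofReal.const_mul _),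
            lintegral_const_mul' _ _ ENNReal.ofReal_ne_top,
            lintegral_const_mul' _ _ ENNReal.ofReal_ne_top]
      _ ≤ ENNReal.ofReal (2 * (A δ / δ ^ θ) * w δ ^ 2) * ENNReal.ofReal (δ ^ (θ-1)/(θ-1))
          + ENNReal.ofReal (2/β) * (ENNReal.ofReal (1/β) * E) := by
          apply add_le_add
          · apply mul_le_mul_right
            rw [my_lint_rpow 0 δ (θ-2) le_rfl hδ0 (by intro h; linarith)
              (Or.inr (by linarith))]
            apply ENNReal.ofReal_le_ofReal
            have he : θ - 2 + 1 = θ - 1 := by ring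
            rw [he, Real.zero_rpow (by intro h; rw [sub_eq_zero] at h; linarith)]
            simp
          · exact mul_le_mul_right tonelli _
      _ ≤ ENNReal.ofReal (2 * A δ / (δ * (θ-1)) * (1/m)) * E + ENNReal.ofReal (2 / β^2) * E := by
          apply add_le_add
          · have hδθpos : (0:ℝ) < δ ^ θ := Real.rpow_pos_of_pos hδ0 θ
            have hδθ1pos : (0:ℝ) < δ ^ (θ-1) := Real.rpow_pos_of_pos hδ0 (θ-1)
            have hδθ : δ ^ θ = δ ^ (θ-1) * δ := by
              have h6 : δ ^ ((θ-1)+1) = δ ^ (θ-1) * δ ^ (1:ℝ) := Real.rpow_add hδ0 _ _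
              rw [Real.rpow_one] at h6
              rw [← h6]
              congr 1
              ring
            have hθ1ne : θ - 1 ≠ 0 := by intro h; rw [sub_eq_zero] at h; linarith
            have heq : 2 * (A δ / δ ^ θ) * w δ ^ 2 * (δ ^ (θ-1)/(θ-1))
                = 2 * A δ / (δ * (θ-1)) * w δ ^ 2 := by
              rw [hδθ]
              field_simp
            have hc1' : (0:ℝ) ≤ 2 * A δ / (δ * (θ-1)) :=
              div_nonneg (by linarith) (mul_pos hδ0 (by linarith)).le
            rw [← ENNReal.ofReal_mul (mul_nonneg (mul_nonneg (by norm_num)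
              (div_nonneg hAδpos.le (Real.rpow_nonneg hδ0.le θ))) (sq_nonneg _)), heq,
              ENNReal.ofReal_mul hc1']
            calc ENNReal.ofReal (2 * A δ / (δ * (θ-1))) * ENNReal.ofReal (w δ ^ 2)
                ≤ ENNReal.ofReal (2 * A δ / (δ * (θ-1))) * (ENNReal.ofReal (1/m) * E) :=
                  mul_le_mul_right hwδ _
              _ = ENNReal.ofReal (2 * A δ / (δ * (θ-1)) * (1/m)) * E := by
                  rw [ENNReal.ofReal_mul hc1', mul_assoc]
          · rw [← mul_assoc, ← ENNReal.ofReal_mul (by positivity)]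
            apply mul_le_mul_left
            apply ENNReal.ofReal_le_ofReal
            rw [show 2/β * (1/β) = 2/β^2 by ring]
  rw [hsplit, lintegral_union measurableSet_Ico hdisj]
  calc (∫⁻ x in Ioo (0:ℝ) δ, ENNReal.ofReal (A x / x ^ 2 * w x ^ 2))
        + ∫⁻ x in Ico δ 1, ENNReal.ofReal (A x / x ^ 2 * w x ^ 2)
      ≤ (ENNReal.ofReal (2 * A δ / (δ * (θ-1)) * (1/m)) * E + ENNReal.ofReal (2 / β^2) * E)
        + ENNReal.ofReal (M / (δ^2 * m)) * E := add_le_add hT1 hT2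
    _ = ENNReal.ofReal (2 * A δ / (δ * (θ-1)) * (1/m) + 2 / β^2 + M / (δ^2 * m)) * E := by
        rw [ENNReal.ofReal_add (add_nonneg hc1 hc2) hc3, ENNReal.ofReal_add hc1 hc2,
          add_mul, add_mul]
    _ ≤ ENNReal.ofReal C * E := by
        apply mul_le_mul_left
        apply ENNReal.ofReal_le_ofReal
        rw [hCdef]
        linarith
end

section
/- (Sign of the boundary term.) For every s>0, λ>0 and every regular solution v of the auxiliary degenerate problem with right-hand side h ∈ L²(Q), setting w = e^{sφ} v, one has −s ∫₀ᵀ [ a² φ_x w_x² ]_{x=0}^{x=1} dt = −sλ ∫₀ᵀ [ a² ψ' σ w_x² ]_{x=0}^{x=1} dt ≥ 0. -/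
open MeasureTheory Set Real Filter

noncomputable section

/-- The sup norm of `ψ` on `[0,1]`. -/
def psiSup (ψ : ℝ → ℝ) : ℝ := ⨆ x : Icc (0:ℝ) 1, |ψ x.1|

/-- `Θ(t) = 1/(t(T-t))⁴`. -/
def thetaFun (T t : ℝ) : ℝ := 1 / (t * (T - t)) ^ 4

/-- `η(x) = exp (λ(‖ψ‖_∞ + ψ x))`. -/
def etaFun (ψ : ℝ → ℝ) (lam x : ℝ) : ℝ := exp (lam * (psiSup ψ + ψ x))

/-- `σ(t,x) = Θ(t) η(x)`. -/
def sigmaFun (T : ℝ) (ψ : ℝ → ℝ) (lam t x : ℝ) : ℝ := thetaFun T t * etaFun ψ lam x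

/-- `φ(t,x) = Θ(t) (exp (λ(‖ψ‖_∞ + ψ x)) - exp (3λ‖ψ‖_∞))`. -/
def phiFun (T : ℝ) (ψ : ℝ → ℝ) (lam t x : ℝ) : ℝ :=
  thetaFun T t * (etaFun ψ lam x - exp (3 * (lam * psiSup ψ)))

/-- Partial derivative in the space variable. -/
def pderivX (f : ℝ → ℝ → ℝ) (t x : ℝ) : ℝ := deriv (fun y => f t y) x

/-- Partial derivative in the time variable. -/
def pderivT (f : ℝ → ℝ → ℝ) (t x : ℝ) : ℝ := deriv (fun τ => f τ x) t

/-- `w = e^{sφ} v`. -/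
def wFun (T : ℝ) (ψ : ℝ → ℝ) (lam s : ℝ) (v : ℝ → ℝ → ℝ) (t x : ℝ) : ℝ :=
  exp (s * phiFun T ψ lam t x) * v t x

/-- The cylinder `(0,T) × (l,r)`. -/
def QSub (T l r : ℝ) : Set (ℝ × ℝ) := Ioo 0 T ×ˢ Ioo l r

/-- Structural hypotheses on the degenerate coefficient `a` (whose derivative on `(0,1]`
is the given function `a'`): `a ∈ C([0,1]) ∩ C¹((0,1])` is nondecreasing, `a(0) = 0` and
`a > 0` on `(0,1]`. -/
structure DegenCoeff (a a' : ℝ → ℝ) : Prop where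
  cont : ContinuousOn a (Icc 0 1)
  hasDeriv : ∀ x ∈ Ioc (0:ℝ) 1, HasDerivAt a (a' x) x
  contDeriv : ContinuousOn a' (Ioc 0 1)
  mono : MonotoneOn a (Icc 0 1)
  zero : a 0 = 0
  pos : ∀ x ∈ Ioc (0:ℝ) 1, 0 < a x

/-- Weak degeneracy: `x a'(x) ≤ K a(x)` on `(0,1]` with `K ∈ [0,1)`. -/
def DegenWeak (a a' : ℝ → ℝ) (K : ℝ) : Prop :=
  0 ≤ K ∧ K < 1 ∧ ∀ x ∈ Ioc (0:ℝ) 1, x * a' x ≤ K * a x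

/-- Strong degeneracy: `x a'(x) ≤ K a(x)` on `(0,1]` with `K ∈ [1,2)`, together with the
additional condition `θ a ≤ x a'` near zero, with `θ ∈ (1,K]` if `K > 1` and `θ ∈ (0,1)`
if `K = 1`. -/
def DegenStrong (a a' : ℝ → ℝ) (K : ℝ) : Prop :=
  1 ≤ K ∧ K < 2 ∧ (∀ x ∈ Ioc (0:ℝ) 1, x * a' x ≤ K * a x) ∧
    ∃ θ δ : ℝ, 0 < δ ∧ δ ≤ 1 ∧ (∀ x ∈ Ioc (0:ℝ) δ, θ * a x ≤ x * a' x) ∧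
      (1 < K → 1 < θ ∧ θ ≤ K) ∧ (K = 1 → 0 < θ ∧ θ < 1)

/-- The weight function `ψ ∈ C²([0,1])`, equal to `∫₀ˣ y/a(y) dy` on `[0, l)` and to
`-∫_r^x y/a(y) dy` on `[r, 1]`. -/
structure WeightPsi (a : ℝ → ℝ) (l r : ℝ) (ψ : ℝ → ℝ) : Prop where
  smooth : ContDiffOn ℝ 2 ψ (Icc 0 1)
  left : ∀ x ∈ Ico (0:ℝ) l, ψ x = ∫ y in (0:ℝ)..x, y / a y
  right : ∀ x ∈ Icc r 1, ψ x = -∫ y in r..x, y / a y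

/-- A regular solution of `v_t + (a v_x)_x = rhs` in `Q = (0,T)×(0,1)` with `v(t,1) = 0`:
`v, v_x` are continuous on `[0,T]×(0,1]`, `v_t, (a v_x)_x` are continuous on `(0,T)×(0,1]`. -/
structure RegSol (T : ℝ) (a : ℝ → ℝ) (rhs : ℝ → ℝ → ℝ) (v : ℝ → ℝ → ℝ) : Prop where
  contV : ContinuousOn (fun p : ℝ × ℝ => v p.1 p.2) (Icc 0 T ×ˢ Ioc 0 1)
  contVx : ContinuousOn (fun p : ℝ × ℝ => pderivX v p.1 p.2) (Icc 0 T ×ˢ Ioc 0 1)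
  contVt : ContinuousOn (fun p : ℝ × ℝ => pderivT v p.1 p.2) (Ioo 0 T ×ˢ Ioc 0 1)
  contAVxx : ContinuousOn
      (fun p : ℝ × ℝ => pderivX (fun t x => a x * pderivX v t x) p.1 p.2)
      (Ioo 0 T ×ˢ Ioc 0 1)
  eq : ∀ t ∈ Ioo 0 T, ∀ x ∈ Ioo (0:ℝ) 1,
      pderivT v t x + pderivX (fun t x => a x * pderivX v t x) t x = rhs t x
  bdryOne : ∀ t ∈ Ioo 0 T, v t 1 = 0

/-- Dirichlet boundary condition at `x = 0` (weak degeneracy case). -/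
def BdryWeak (T : ℝ) (v : ℝ → ℝ → ℝ) : Prop := ∀ t ∈ Ioo 0 T, v t 0 = 0

/-- Boundary condition `(a v_x)(t,0) = 0` at `x = 0` (strong degeneracy case),
understood as a one-sided limit. -/
def BdryStrong (T : ℝ) (a : ℝ → ℝ) (v : ℝ → ℝ → ℝ) : Prop :=
  ∀ t ∈ Ioo 0 T, Tendsto (fun x => a x * pderivX v t x)
    (nhdsWithin 0 (Ioi 0)) (nhds 0)

end

section AuxLemmas

/-- Key pointwise identity: `φ_x = λ ψ' σ`, valid everywhere (with the convention
`deriv = 0` at points of non-differentiability). -/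
lemma phi_pderiv (T : ℝ) (ψ : ℝ → ℝ) {lam : ℝ} (hlam : 0 < lam) (t x : ℝ) :
    pderivX (phiFun T ψ lam) t x = lam * deriv ψ x * sigmaFun T ψ lam t x := by
  set S := psiSup ψ with hS
  set c := Real.exp (3 * (lam * S)) with hc
  have hfun : (fun y => phiFun T ψ lam t y)
      = fun y => thetaFun T t * (Real.exp (lam * (S + ψ y)) - c) := rfl
  by_cases hd : DifferentiableAt ℝ ψ x
  · have h1 : HasDerivAt (fun y => lam * (S + ψ y)) (lam * deriv ψ x) x :=
      (hd.hasDerivAt.const_add S).const_mul lam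
    have h3 := ((h1.exp).sub_const c).const_mul (thetaFun T t)
    unfold pderivX
    rw [hfun, h3.deriv]
    simp only [sigmaFun, etaFun]
    ring
  · by_cases hθ : thetaFun T t = 0
    · have hz : (fun y => phiFun T ψ lam t y) = fun _ => (0:ℝ) := by
        funext y; simp [phiFun, hθ]
      unfold pderivX
      rw [hz, deriv_const]
      simp [sigmaFun, hθ]
    · have hndiff : ¬ DifferentiableAt ℝ (fun y => phiFun T ψ lam t y) x := by
        intro hdp
        apply hd
        have hu : DifferentiableAt ℝ (fun y => Real.exp (lam * (S + ψ y))) x := by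
          have h1 : DifferentiableAt ℝ
              (fun y => (thetaFun T t)⁻¹ * phiFun T ψ lam t y + c) x :=
            (hdp.const_mul _).add_const c
          have heq : (fun y => Real.exp (lam * (S + ψ y)))
              = fun y => (thetaFun T t)⁻¹ * phiFun T ψ lam t y + c := by
            funext y
            simp only [phiFun, etaFun, ← hS, ← hc]
            field_simp
            ring
          rw [heq]; exact h1
        have hψd : DifferentiableAt ℝ
            (fun y => lam⁻¹ * Real.log (Real.exp (lam * (S + ψ y))) - S) x :=
          ((hu.log (Real.exp_ne_zero _)).const_mul _).sub_const S
        have heq2 : ψ = fun y => lam⁻¹ * Real.log (Real.exp (lam * (S + ψ y))) - S := by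
          funext y
          rw [Real.log_exp]
          field_simp
          ring
        rw [heq2]; exact hψd
      unfold pderivX
      rw [deriv_zero_of_not_differentiableAt hndiff, deriv_zero_of_not_differentiableAt hd]
      ring

/-- Near the left endpoint, `ψ` is nondecreasing, hence `deriv ψ ≥ 0` there. -/
lemma psi_deriv_nonneg {α' β' : ℝ} {a a' ψ : ℝ → ℝ} (ha : DegenCoeff a a')
    (hα'0 : 0 < α') (hα'1 : α' < 1) (hψ : WeightPsi a α' β' ψ) :
    ∀ x ∈ Ioo 0 α', 0 ≤ deriv ψ x := by
  set f : ℝ → ℝ := fun t => t / a t with hf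
  have hpos : ∀ u ∈ Ioc (0:ℝ) 1, 0 ≤ f u := fun u hu =>
    div_nonneg hu.1.le (ha.pos u hu).le
  -- monotonicity of ψ on (0, α')
  have hM : MonotoneOn ψ (Ioo 0 α') := by
    by_cases hI : IntegrableOn f (Ioc 0 α') volume
    · intro c hc b hb hcb
      have hIIb : IntervalIntegrable f volume 0 b :=
        (intervalIntegrable_iff_integrableOn_Ioc_of_le hb.1.le).mpr
          (hI.mono_set (Ioc_subset_Ioc_right hb.2.le))
      have hIIc : IntervalIntegrable f volume 0 c :=
        (intervalIntegrable_iff_integrableOn_Ioc_of_le hc.1.le).mpr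
          (hI.mono_set (Ioc_subset_Ioc_right hc.2.le))
      have hsub := intervalIntegral.integral_interval_sub_left hIIb hIIc
      have hnn : 0 ≤ ∫ u in c..b, f u := by
        refine intervalIntegral.integral_nonneg hcb (fun u hu => ?_)
        exact hpos u ⟨lt_of_lt_of_le hc.1 hu.1, le_trans hu.2 (le_trans hb.2.le hα'1.le)⟩
      have hψc : ψ c = ∫ u in (0:ℝ)..c, f u := hψ.left c ⟨hc.1.le, hc.2⟩
      have hψb : ψ b = ∫ u in (0:ℝ)..b, f u := hψ.left b ⟨hb.1.le, hb.2⟩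
      rw [hψc, hψb]
      linarith [hsub, hnn]
    · -- non-integrable case: all interval integrals from 0 vanish
      have hzero : ∀ x ∈ Ioo (0:ℝ) α', ψ x = 0 := by
        intro x hx
        have hnint : ¬ IntervalIntegrable f volume 0 x := by
          intro hint
          apply hI
          have h1 : IntegrableOn f (Ioc 0 x) volume :=
            (intervalIntegrable_iff_integrableOn_Ioc_of_le hx.1.le).mp hint
          have hcont : ContinuousOn f (Icc x α') := by
            intro u hu
            have hu1 : u ∈ Icc (0:ℝ) 1 := ⟨le_trans hx.1.le hu.1, le_trans hu.2 hα'1.le⟩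
            have hu2 : u ∈ Ioc (0:ℝ) 1 := ⟨lt_of_lt_of_le hx.1 hu.1, hu1.2⟩
            exact (continuous_id.continuousWithinAt).div
              ((ha.cont u hu1).mono (fun z hz => ⟨le_trans hx.1.le hz.1, le_trans hz.2 hα'1.le⟩))
              (ne_of_gt (ha.pos u hu2))
          have h2 : IntegrableOn f (Ioc x α') volume :=
            (hcont.integrableOn_Icc).mono_set Ioc_subset_Icc_self
          have := h1.union h2
          rwa [Ioc_union_Ioc_eq_Ioc hx.1.le hx.2.le] at this
        have := hψ.left x ⟨hx.1.le, hx.2⟩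
        rw [this, intervalIntegral.integral_undef hnint]
      intro c hc b hb _
      rw [hzero c hc, hzero b hb]
  -- from monotonicity to nonnegativity of the derivative
  intro x hx
  by_cases hd : DifferentiableAt ℝ ψ x
  · have hs := hd.hasDerivAt.hasDerivWithinAt (s := Ioi x)
    rw [hasDerivWithinAt_iff_tendsto_slope,
      Set.diff_singleton_eq_self notMem_Ioi_self] at hs
    refine ge_of_tendsto hs ?_
    filter_upwards [self_mem_nhdsWithin,
      mem_nhdsWithin_of_mem_nhds (Iio_mem_nhds hx.2)] with y hy1 hy2
    have hxy : x < y := hy1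
    have hle : ψ x ≤ ψ y := hM hx ⟨lt_trans hx.1 hxy, hy2⟩ hxy.le
    rw [slope_def_field]
    exact div_nonneg (by linarith) (by linarith)
  · rw [deriv_zero_of_not_differentiableAt hd]

/-- `deriv ψ 1 ≤ 0`. -/
lemma psi_deriv_one_nonpos {α' β' : ℝ} {a a' ψ : ℝ → ℝ} (ha : DegenCoeff a a')
    (hβ'0 : 0 < β') (hβ'1 : β' < 1) (hψ : WeightPsi a α' β' ψ) :
    deriv ψ 1 ≤ 0 := by
  by_cases hd : DifferentiableAt ℝ ψ 1
  · set f : ℝ → ℝ := fun t => t / a t with hf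
    have ha1 : 0 < a 1 := ha.pos 1 ⟨one_pos, le_refl 1⟩
    have hfc : ContinuousOn f (Icc β' 1) := by
      intro u hu
      have hu1 : u ∈ Icc (0:ℝ) 1 := ⟨le_trans hβ'0.le hu.1, hu.2⟩
      have hu2 : u ∈ Ioc (0:ℝ) 1 := ⟨lt_of_lt_of_le hβ'0 hu.1, hu.2⟩
      exact (continuous_id.continuousWithinAt).div
        ((ha.cont u hu1).mono (fun z hz => ⟨le_trans hβ'0.le hz.1, hz.2⟩))
        (ne_of_gt (ha.pos u hu2))
    have hint : IntervalIntegrable f volume β' 1 :=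
      ContinuousOn.intervalIntegrable_of_Icc hβ'1.le hfc
    have hmeas : StronglyMeasurableAtFilter f (nhdsWithin 1 (Iic 1)) volume := by
      refine ⟨Icc β' 1, ?_, hfc.aestronglyMeasurable measurableSet_Icc⟩
      rw [← nhdsWithin_Icc_eq_nhdsLE hβ'1]
      exact self_mem_nhdsWithin
    have hcont : ContinuousWithinAt f (Iic 1) 1 := by
      rw [← continuousWithinAt_Icc_iff_Iic hβ'1]
      exact hfc 1 (right_mem_Icc.mpr hβ'1.le)
    have hG : HasDerivWithinAt (fun u => ∫ y in β'..u, f y) (f 1) (Iic 1) 1 :=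
      intervalIntegral.integral_hasDerivWithinAt_right hint hmeas hcont
    have hGicc : HasDerivWithinAt (fun u => -∫ y in β'..u, f y) (-(f 1)) (Icc β' 1) 1 :=
      (hG.neg).mono Icc_subset_Iic_self
    have hψw : HasDerivWithinAt ψ (-(f 1)) (Icc β' 1) 1 :=
      hGicc.congr (fun y hy => hψ.right y hy) (hψ.right 1 (right_mem_Icc.mpr hβ'1.le))
    have hψw2 : HasDerivWithinAt ψ (deriv ψ 1) (Icc β' 1) 1 :=
      hd.hasDerivAt.hasDerivWithinAt
    have hu : UniqueDiffWithinAt ℝ (Icc β' 1) 1 :=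
      (uniqueDiffOn_Icc hβ'1) 1 (right_mem_Icc.mpr hβ'1.le)
    have heq : deriv ψ 1 = -(f 1) := by
      rw [← hψw2.derivWithin hu, hψw.derivWithin hu]
    rw [heq, hf]
    simp only [neg_nonpos]
    positivity
  · rw [deriv_zero_of_not_differentiableAt hd]

end AuxLemmas

theorem boundary_term_sign
    (T αw βw α' β' K : ℝ)
    (hT : 0 < T) (hαw : 0 < αw) (hαα' : αw < α') (hα'β' : α' < β')
    (hβ'β : β' < βw) (hβw : βw < 1)
    (a a' ψ : ℝ → ℝ)
    (ha : DegenCoeff a a')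
    (hK : DegenWeak a a' K ∨ DegenStrong a a' K)
    (hψ : WeightPsi a α' β' ψ) :
    ∀ s > (0:ℝ), ∀ lam > (0:ℝ), ∀ h v : ℝ → ℝ → ℝ, ∀ B B2 : ℝ → ℝ,
        IntegrableOn (fun p : ℝ × ℝ => h p.1 p.2 ^ 2) (QSub T 0 1) →
        RegSol T a h v →
        (BdryWeak T v ∨ BdryStrong T a v) →
        (∀ t ∈ Ioo 0 T, Tendsto (fun x => (a x) ^ 2 * pderivX (phiFun T ψ lam) t x * (pderivX (wFun T ψ lam s v) t x) ^ 2)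
          (nhdsWithin 0 (Ioi 0)) (nhds (B t))) →
        (∀ t ∈ Ioo 0 T, Tendsto (fun x => (a x) ^ 2 * deriv ψ x * sigmaFun T ψ lam t x * (pderivX (wFun T ψ lam s v) t x) ^ 2)
          (nhdsWithin 0 (Ioi 0)) (nhds (B2 t))) →
        IntegrableOn (fun t : ℝ => ((a 1) ^ 2 * pderivX (phiFun T ψ lam) t 1 * (pderivX (wFun T ψ lam s v) t 1) ^ 2 - B t)) (Ioo 0 T) →
        IntegrableOn (fun t : ℝ => ((a 1) ^ 2 * deriv ψ 1 * sigmaFun T ψ lam t 1 * (pderivX (wFun T ψ lam s v) t 1) ^ 2 - B2 t)) (Ioo 0 T) →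
        (-(s) * (∫ t in Ioo (0:ℝ) T, ((a 1) ^ 2 * pderivX (phiFun T ψ lam) t 1 * (pderivX (wFun T ψ lam s v) t 1) ^ 2 - B t)) =
            -(s * lam) * (∫ t in Ioo (0:ℝ) T, ((a 1) ^ 2 * deriv ψ 1 * sigmaFun T ψ lam t 1 * (pderivX (wFun T ψ lam s v) t 1) ^ 2 - B2 t)) ∧
          0 ≤ -(s * lam) * (∫ t in Ioo (0:ℝ) T, ((a 1) ^ 2 * deriv ψ 1 * sigmaFun T ψ lam t 1 * (pderivX (wFun T ψ lam s v) t 1) ^ 2 - B2 t))) := by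
  
  intro s hs lam hlam h v B B2 _ _ _ hB hB2 _ _
  have hθnn : ∀ t, 0 ≤ thetaFun T t := by
    intro t; unfold thetaFun; positivity
  have hσnn : ∀ t x, 0 ≤ sigmaFun T ψ lam t x := fun t x =>
    mul_nonneg (hθnn t) (Real.exp_pos _).le
  have hE : ∀ t x, pderivX (phiFun T ψ lam) t x = lam * deriv ψ x * sigmaFun T ψ lam t x :=
    phi_pderiv T ψ hlam
  have hψ1 : deriv ψ 1 ≤ 0 :=
    psi_deriv_one_nonpos ha (by linarith) (by linarith) hψ
  have hψ0 : ∀ x ∈ Ioo 0 α', 0 ≤ deriv ψ x :=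
    psi_deriv_nonneg ha (by linarith) (by linarith) hψ
  have hBeq : ∀ t ∈ Ioo 0 T, B t = lam * B2 t := by
    intro t ht
    have h1 := hB t ht
    have h2 := (hB2 t ht).const_mul lam
    have hfe : (fun x => (a x) ^ 2 * pderivX (phiFun T ψ lam) t x *
          (pderivX (wFun T ψ lam s v) t x) ^ 2)
        = fun x => lam * ((a x) ^ 2 * deriv ψ x * sigmaFun T ψ lam t x *
          (pderivX (wFun T ψ lam s v) t x) ^ 2) := by
      funext x; rw [hE t x]; ring
    rw [hfe] at h1
    exact tendsto_nhds_unique h1 h2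
  have hB2nn : ∀ t ∈ Ioo 0 T, 0 ≤ B2 t := by
    intro t ht
    refine ge_of_tendsto (hB2 t ht) ?_
    filter_upwards [self_mem_nhdsWithin,
      mem_nhdsWithin_of_mem_nhds (Iio_mem_nhds (by linarith : (0:ℝ) < α'))] with x hx1 hx2
    have hd : 0 ≤ deriv ψ x := hψ0 x ⟨hx1, hx2⟩
    exact mul_nonneg (mul_nonneg (mul_nonneg (sq_nonneg _) hd) (hσnn t x)) (sq_nonneg _)
  have hfeq : EqOn
      (fun t => (a 1) ^ 2 * pderivX (phiFun T ψ lam) t 1 *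
        (pderivX (wFun T ψ lam s v) t 1) ^ 2 - B t)
      (fun t => lam * ((a 1) ^ 2 * deriv ψ 1 * sigmaFun T ψ lam t 1 *
        (pderivX (wFun T ψ lam s v) t 1) ^ 2 - B2 t)) (Ioo 0 T) := by
    intro t ht
    simp only
    rw [hE t 1, hBeq t ht]
    ring
  have hI2nonpos : (∫ t in Ioo (0:ℝ) T, ((a 1) ^ 2 * deriv ψ 1 * sigmaFun T ψ lam t 1 *
      (pderivX (wFun T ψ lam s v) t 1) ^ 2 - B2 t)) ≤ 0 := by
    apply setIntegral_nonpos measurableSet_Ioo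
    intro t ht
    have hA : 0 ≤ (a 1) ^ 2 * (sigmaFun T ψ lam t 1 *
        (pderivX (wFun T ψ lam s v) t 1) ^ 2) :=
      mul_nonneg (sq_nonneg _) (mul_nonneg (hσnn t 1) (sq_nonneg _))
    have hb2 := hB2nn t ht
    nlinarith [hA, hψ1]
  constructor
  · rw [setIntegral_congr_fun measurableSet_Ioo hfeq, MeasureTheory.integral_const_mul]
    ring
  · nlinarith [mul_pos hs hlam, hI2nonpos]
end

section
/- There exist constants C>0 and λ₀>0 such that for every λ ≥ λ₀, every s>0 and every regular solution v of the auxiliary degenerate problem with right-hand side h ∈ L²(Q), setting w = e^{sφ} v, one has s³ ∬_Q a φ_x (a φ_x²)_x w² ≥ C λ⁴ s³ ∬_Q a² |ψ'|⁴ σ³ w² − C s³ λ³ ∬_{(0,T)×ω'} σ³ w² + C s³ λ³ ∫₀ᵀ ∫₀^{α'} (x²/a) σ³ w². -/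
open MeasureTheory Set Real Filter

set_option maxHeartbeats 1000000

open Topology in
lemma aux_deriv_nonneg (a a' : ℝ → ℝ) (ha : DegenCoeff a a') {x : ℝ}
    (hx : x ∈ Ioo (0:ℝ) 1) : 0 ≤ a' x := by
  have hd : HasDerivWithinAt a (a' x) (Ioi x) x :=
    (ha.hasDeriv x ⟨hx.1, hx.2.le⟩).hasDerivWithinAt
  rw [hasDerivWithinAt_iff_tendsto_slope] at hd
  have hne : (𝓝[(Ioi x) \ {x}] x).NeBot := by
    rw [diff_singleton_eq_self (by simp)]
    exact nhdsGT_neBot x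
  refine ge_of_tendsto hd ?_
  have hmem : Ioo x 1 ∈ 𝓝[(Ioi x) \ {x}] x := by
    rw [diff_singleton_eq_self (by simp)]
    exact Ioo_mem_nhdsGT_of_mem ⟨le_refl x, hx.2⟩
  filter_upwards [hmem] with y hy
  have : a x ≤ a y := ha.mono ⟨hx.1.le, hx.2.le⟩ ⟨(hx.1.trans hy.1).le, hy.2.le⟩ hy.1.le
  have hyx : 0 < y - x := by linarith [hy.1]
  simp only [slope_def_field]
  rw [div_nonneg_iff]
  left; constructor <;> [linarith; linarith]

lemma aux_anti (a a' : ℝ → ℝ) (K : ℝ) (ha : DegenCoeff a a')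
    (hKb : ∀ x ∈ Ioc (0:ℝ) 1, x * a' x ≤ K * a x) :
    AntitoneOn (fun y => a y * y ^ (-K)) (Ioc 0 1) := by
  have hconv : Convex ℝ (Ioc (0:ℝ) 1) := convex_Ioc 0 1
  have hint : interior (Ioc (0:ℝ) 1) = Ioo 0 1 := interior_Ioc
  have hder : ∀ x ∈ Ioo (0:ℝ) 1,
      HasDerivAt (fun y => a y * y ^ (-K))
        (a' x * x ^ (-K) + a x * (-K * x ^ (-K - 1))) x := by
    intro x hx
    exact (ha.hasDeriv x ⟨hx.1, hx.2.le⟩).mul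
      (Real.hasDerivAt_rpow_const (Or.inl hx.1.ne'))
  refine antitoneOn_of_deriv_nonpos hconv ?_ ?_ ?_
  · have : ContinuousOn (fun y : ℝ => y ^ (-K)) (Ioc 0 1) :=
      ContinuousOn.rpow_const continuousOn_id (fun y hy => Or.inl hy.1.ne')
    exact (ha.cont.mono Ioc_subset_Icc_self).mul this
  · rw [hint]
    exact fun x hx => ((hder x hx).differentiableAt).differentiableWithinAt
  · rw [hint]
    intro x hx
    rw [(hder x hx).deriv]
    have h1 : x ^ (-K) = x * x ^ (-K - 1) := by
      rw [show -K = 1 + (-K - 1) by ring, Real.rpow_add hx.1, Real.rpow_one]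
      congr 1; ring
    have h2 : (0:ℝ) < x ^ (-K - 1) := Real.rpow_pos_of_pos hx.1 _
    have h3 : x * a' x ≤ K * a x := hKb x ⟨hx.1, hx.2.le⟩
    have : a' x * x ^ (-K) + a x * (-K * x ^ (-K - 1))
        = (x * a' x - K * a x) * x ^ (-K - 1) := by rw [h1]; ring
    rw [this]
    exact mul_nonpos_of_nonpos_of_nonneg (by linarith) h2.le

lemma aux_intInt (a a' : ℝ → ℝ) (K : ℝ) (ha : DegenCoeff a a') (hK2 : K < 2)
    (hKb : ∀ x ∈ Ioc (0:ℝ) 1, x * a' x ≤ K * a x) {x : ℝ} (hx : x ∈ Ioc (0:ℝ) 1) :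
    IntervalIntegrable (fun y => y / a y) volume 0 x := by
  have hax : 0 < a x := ha.pos x hx
  rw [intervalIntegrable_iff_integrableOn_Ioc_of_le hx.1.le]
  have hganti := aux_anti a a' K ha hKb
  have hbd : ∀ y ∈ Ioc (0:ℝ) x, y / a y ≤ x ^ K / a x * y ^ (1 - K) := by
    intro y hy
    have hy0 : 0 < y := hy.1
    have hyx : y ≤ x := hy.2
    have hy1 : y ∈ Ioc (0:ℝ) 1 := ⟨hy0, hyx.trans hx.2⟩
    have hmono := hganti hy1 hx hyx
    have hyK : (0:ℝ) < y ^ K := Real.rpow_pos_of_pos hy0 _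
    have hxKm : (0:ℝ) < x ^ (-K) := Real.rpow_pos_of_pos (hy0.trans_le hyx) _
    have hay : a x * x ^ (-K) * y ^ K ≤ a y := by
      have := mul_le_mul_of_nonneg_right hmono hyK.le
      have hyy : y ^ (-K) * y ^ K = 1 := by
        rw [← Real.rpow_add hy0]; simp
      calc a x * x ^ (-K) * y ^ K ≤ a y * y ^ (-K) * y ^ K := this
        _ = a y * (y ^ (-K) * y ^ K) := by ring
        _ = a y := by rw [hyy, mul_one]
    have hpos : 0 < a x * x ^ (-K) * y ^ K := by positivity
    have hstep : y / a y ≤ y / (a x * x ^ (-K) * y ^ K) :=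
      div_le_div_of_nonneg_left hy0.le hpos hay
    refine hstep.trans_eq ?_
    rw [Real.rpow_sub hy0, Real.rpow_one, Real.rpow_neg (hy0.trans_le hyx).le]
    field_simp
  have hgint : IntegrableOn (fun y => x ^ K / a x * y ^ (1 - K)) (Ioc 0 x) := by
    have h1 : IntervalIntegrable (fun y : ℝ => y ^ (1 - K)) volume 0 x :=
      intervalIntegral.intervalIntegrable_rpow' (by linarith)
    rw [intervalIntegrable_iff_integrableOn_Ioc_of_le hx.1.le] at h1
    exact h1.const_mul _
  have hmeas : AEStronglyMeasurable (fun y => y / a y) (volume.restrict (Ioc 0 x)) := by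
    apply ContinuousOn.aestronglyMeasurable _ measurableSet_Ioc
    exact ContinuousOn.div continuousOn_id
      (ha.cont.mono (fun y hy => ⟨hy.1.le, hy.2.trans hx.2⟩))
      (fun y hy => (ha.pos y ⟨hy.1, hy.2.trans hx.2⟩).ne')
  refine MeasureTheory.Integrable.mono hgint hmeas ?_
  filter_upwards [MeasureTheory.ae_restrict_mem measurableSet_Ioc] with y hy
  have hy0 : 0 < y := hy.1
  have h1 : 0 ≤ y / a y := le_of_lt (div_pos hy0 (ha.pos y ⟨hy0, hy.2.trans hx.2⟩))
  have h2 : 0 ≤ x ^ K / a x * y ^ (1 - K) := by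
    have h3 := Real.rpow_pos_of_pos hx.1 K
    have h4 := Real.rpow_pos_of_pos hy0 (1 - K)
    positivity
  rw [Real.norm_eq_abs, Real.norm_eq_abs, abs_of_nonneg h1, abs_of_nonneg h2]
  exact hbd y hy

lemma aux_contOn_div (a a' : ℝ → ℝ) (ha : DegenCoeff a a') :
    ContinuousOn (fun y : ℝ => y / a y) (Ioo 0 1) :=
  ContinuousOn.div continuousOn_id
    (ha.cont.mono (fun y hy => ⟨hy.1.le, hy.2.le⟩))
    (fun y hy => (ha.pos y ⟨hy.1, hy.2.le⟩).ne')

open Topology in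
lemma aux_dpsi_left (a a' ψ : ℝ → ℝ) (K α' : ℝ) (ha : DegenCoeff a a') (hK2 : K < 2)
    (hKb : ∀ x ∈ Ioc (0:ℝ) 1, x * a' x ≤ K * a x) (hα1 : α' ≤ 1)
    (hleft : ∀ x ∈ Ico (0:ℝ) α', ψ x = ∫ y in (0:ℝ)..x, y / a y)
    {x : ℝ} (hx : x ∈ Ioo 0 α') : HasDerivAt ψ (x / a x) x := by
  have hx1 : x ∈ Ioo (0:ℝ) 1 := ⟨hx.1, lt_of_lt_of_le hx.2 hα1⟩
  have hFd : HasDerivAt (fun z => ∫ y in (0:ℝ)..z, y / a y) (x / a x) x := by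
    refine intervalIntegral.integral_hasDerivAt_right
      (aux_intInt a a' K ha hK2 hKb ⟨hx1.1, hx1.2.le⟩) ?_ ?_
    · exact (aux_contOn_div a a' ha).stronglyMeasurableAtFilter isOpen_Ioo x hx1
    · exact (aux_contOn_div a a' ha).continuousAt (isOpen_Ioo.mem_nhds hx1)
  refine hFd.congr_of_eventuallyEq ?_
  filter_upwards [isOpen_Ioo.mem_nhds hx] with y hy
  exact hleft y ⟨hy.1.le, hy.2⟩

open Topology in
lemma aux_dpsi_right (a a' ψ : ℝ → ℝ) (β' : ℝ) (ha : DegenCoeff a a') (hβ0 : 0 < β')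
    (hright : ∀ x ∈ Icc β' 1, ψ x = -∫ y in β'..x, y / a y)
    {x : ℝ} (hx : x ∈ Ioo β' 1) : HasDerivAt ψ (-(x / a x)) x := by
  have hx1 : x ∈ Ioo (0:ℝ) 1 := ⟨hβ0.trans hx.1, hx.2⟩
  have hii : IntervalIntegrable (fun y => y / a y) volume β' x := by
    apply ContinuousOn.intervalIntegrable
    apply (aux_contOn_div a a' ha).mono
    rw [uIcc_of_le hx.1.le]
    exact fun y hy => ⟨hβ0.trans_le hy.1, lt_of_le_of_lt hy.2 hx.2⟩
  have hFd : HasDerivAt (fun z => ∫ y in β'..z, y / a y) (x / a x) x := by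
    refine intervalIntegral.integral_hasDerivAt_right hii ?_ ?_
    · exact (aux_contOn_div a a' ha).stronglyMeasurableAtFilter isOpen_Ioo x hx1
    · exact (aux_contOn_div a a' ha).continuousAt (isOpen_Ioo.mem_nhds hx1)
  refine HasDerivAt.congr_of_eventuallyEq hFd.neg ?_
  filter_upwards [isOpen_Ioo.mem_nhds hx] with y hy
  exact hright y ⟨hy.1.le, hy.2.le⟩


lemma aux_base_left (C lam K x A A' d D2 : ℝ) (hC2K : C ≤ 2 - K) (hC1 : C ≤ 1)
    (hax : 0 < A) (hlampos : 0 < lam) (hx0 : 0 < x)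
    (hxa' : x * A' ≤ K * A)
    (e1 : A ^ 2 * d ^ 4 = x ^ 2 * d ^ 2)
    (e3 : A * A' * d ^ 3 + 2 * (A ^ 2 * d ^ 2 * D2) + 2 * lam * (A ^ 2 * d ^ 4)
      = d ^ 2 * (2 * A - x * A') + 2 * lam * (x ^ 2 * d ^ 2)) :
    C * lam ^ 4 * (A ^ 2 * d ^ 4) + C * lam ^ 3 * (A * d ^ 2)
      ≤ lam ^ 3 * (A * A' * d ^ 3 + 2 * (A ^ 2 * d ^ 2 * D2) + 2 * lam * (A ^ 2 * d ^ 4)) := by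
  rw [e3, e1]
  have hCA : C * A ≤ 2 * A - x * A' := by nlinarith [mul_le_mul_of_nonneg_right hC2K hax.le]
  have hfin1 : lam ^ 3 * d ^ 2 * (C * A) ≤ lam ^ 3 * d ^ 2 * (2 * A - x * A') :=
    mul_le_mul_of_nonneg_left hCA (by positivity)
  have hfin2 : C * (lam ^ 4 * (x ^ 2 * d ^ 2)) ≤ 2 * (lam ^ 4 * (x ^ 2 * d ^ 2)) :=
    mul_le_mul_of_nonneg_right (by linarith) (by positivity)
  nlinarith [hfin1, hfin2]

lemma aux_base_mid (C lam M mA A A' d D2 : ℝ) (hCpos : 0 < C) (hC1 : C ≤ 1)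
    (hlampos : 0 < lam) (hmA0 : 0 < mA) (hmA : mA ≤ A) (hax : 0 < A)
    (hlamM : M ^ 2 ≤ 4 * mA ^ 2 * C * lam)
    (hBl : -M ≤ A * (A' * d + 2 * A * D2)) :
    C * lam ^ 4 * (A ^ 2 * d ^ 4) - C * lam ^ 3
      ≤ lam ^ 3 * (A * A' * d ^ 3 + 2 * (A ^ 2 * d ^ 2 * D2) + 2 * lam * (A ^ 2 * d ^ 4)) := by
  have eB : A * A' * d ^ 3 + 2 * (A ^ 2 * d ^ 2 * D2)
      = d ^ 2 * (A * (A' * d + 2 * A * D2)) := by ring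
  have s2 : M ^ 2 * d ^ 4 ≤ 4 * mA ^ 2 * C * lam * d ^ 4 :=
    mul_le_mul_of_nonneg_right hlamM (by positivity)
  have s5 : M * d ^ 2 ≤ lam * (A ^ 2 * d ^ 4) + C := by
    nlinarith [sq_nonneg (M * d ^ 2 - 2 * C), s2, hCpos,
      mul_le_mul_of_nonneg_right
        (mul_le_mul hmA hmA hmA0.le hax.le : mA * mA ≤ A * A)
        (mul_nonneg (mul_nonneg (by linarith : (0:ℝ) ≤ 4 * C) hlampos.le)
          (by positivity : (0:ℝ) ≤ d ^ 4))]
  have t1 : lam ^ 3 * d ^ 2 * (-M) ≤ lam ^ 3 * d ^ 2 * (A * (A' * d + 2 * A * D2)) :=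
    mul_le_mul_of_nonneg_left hBl (by positivity)
  have t2 : lam ^ 3 * (M * d ^ 2) ≤ lam ^ 3 * (lam * (A ^ 2 * d ^ 4) + C) :=
    mul_le_mul_of_nonneg_left s5 (by positivity)
  have t3 : C * (lam ^ 4 * (A ^ 2 * d ^ 4)) ≤ 1 * (lam ^ 4 * (A ^ 2 * d ^ 4)) :=
    mul_le_mul_of_nonneg_right hC1 (by positivity)
  nlinarith [t1, t2, t3, eB]

lemma aux_base_right (C lam x b' a1 A A' d D2 : ℝ) (hC1 : C ≤ 1) (hlampos : 0 < lam)
    (hxb : b' < x) (hb'0 : 0 < b') (hA'0 : 0 ≤ A') (hA1 : A ≤ a1)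
    (hlamb : 2 * a1 ≤ lam * b' ^ 2) (hx0 : 0 < x)
    (e1 : A ^ 2 * d ^ 4 = x ^ 2 * d ^ 2)
    (e3 : A * A' * d ^ 3 + 2 * (A ^ 2 * d ^ 2 * D2) + 2 * lam * (A ^ 2 * d ^ 4)
      = d ^ 2 * (x * A' - 2 * A) + 2 * lam * (x ^ 2 * d ^ 2)) :
    C * lam ^ 4 * (A ^ 2 * d ^ 4)
      ≤ lam ^ 3 * (A * A' * d ^ 3 + 2 * (A ^ 2 * d ^ 2 * D2) + 2 * lam * (A ^ 2 * d ^ 4)) := by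
  rw [e3, e1]
  have hb2 : b' ^ 2 ≤ x ^ 2 := by nlinarith
  have h6 : 2 * A ≤ lam * x ^ 2 := by
    have := mul_le_mul_of_nonneg_left hb2 hlampos.le
    linarith
  have hP3 : (0:ℝ) ≤ lam ^ 3 * d ^ 2 := by positivity
  nlinarith [mul_le_mul_of_nonneg_left h6 hP3,
    mul_nonneg hP3 (mul_nonneg hx0.le hA'0),
    mul_nonneg (sub_nonneg.mpr hC1)
      (by positivity : (0:ℝ) ≤ lam ^ 4 * (x ^ 2 * d ^ 2))]

open Topology in
theorem lower_bound_principal_zero_order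
    (T αw βw α' β' K : ℝ)
    (hT : 0 < T) (hαw : 0 < αw) (hαα' : αw < α') (hα'β' : α' < β')
    (hβ'β : β' < βw) (hβw : βw < 1)
    (a a' ψ : ℝ → ℝ)
    (ha : DegenCoeff a a')
    (hK : DegenWeak a a' K ∨ DegenStrong a a' K)
    (hψ : WeightPsi a α' β' ψ) :
    ∃ C > (0:ℝ), ∃ lam₀ > (0:ℝ), ∀ lam ≥ lam₀, ∀ s > (0:ℝ),
      ∀ h v : ℝ → ℝ → ℝ,
        IntegrableOn (fun p : ℝ × ℝ => h p.1 p.2 ^ 2) (QSub T 0 1) →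
        RegSol T a h v →
        (BdryWeak T v ∨ BdryStrong T a v) →
        IntegrableOn (fun p : ℝ × ℝ => a p.2 * (pderivX (phiFun T ψ lam) p.1 p.2) * (pderivX (fun t x => a x * (pderivX (phiFun T ψ lam) t x) ^ 2) p.1 p.2) * (wFun T ψ lam s v p.1 p.2) ^ 2) (QSub T 0 1) →
        IntegrableOn (fun p : ℝ × ℝ => (a p.2) ^ 2 * |(deriv ψ p.2)| ^ 4 * (sigmaFun T ψ lam p.1 p.2) ^ 3 * (wFun T ψ lam s v p.1 p.2) ^ 2) (QSub T 0 1) →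
        IntegrableOn (fun p : ℝ × ℝ => (sigmaFun T ψ lam p.1 p.2) ^ 3 * (wFun T ψ lam s v p.1 p.2) ^ 2) (QSub T α' β') →
        IntegrableOn (fun p : ℝ × ℝ => (p.2 ^ 2 / a p.2) * (sigmaFun T ψ lam p.1 p.2) ^ 3 * (wFun T ψ lam s v p.1 p.2) ^ 2) (QSub T 0 α') →
        s ^ 3 * (∫ p in QSub T 0 1, a p.2 * (pderivX (phiFun T ψ lam) p.1 p.2) * (pderivX (fun t x => a x * (pderivX (phiFun T ψ lam) t x) ^ 2) p.1 p.2) * (wFun T ψ lam s v p.1 p.2) ^ 2) ≥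
          C * lam ^ 4 * s ^ 3 * (∫ p in QSub T 0 1, (a p.2) ^ 2 * |(deriv ψ p.2)| ^ 4 * (sigmaFun T ψ lam p.1 p.2) ^ 3 * (wFun T ψ lam s v p.1 p.2) ^ 2)
          - C * s ^ 3 * lam ^ 3 * (∫ p in QSub T α' β', (sigmaFun T ψ lam p.1 p.2) ^ 3 * (wFun T ψ lam s v p.1 p.2) ^ 2)
          + C * s ^ 3 * lam ^ 3 * (∫ p in QSub T 0 α', (p.2 ^ 2 / a p.2) * (sigmaFun T ψ lam p.1 p.2) ^ 3 * (wFun T ψ lam s v p.1 p.2) ^ 2) := by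
  -- unified degeneracy facts
  obtain ⟨hK0, hK2, hKb⟩ : 0 ≤ K ∧ K < 2 ∧ ∀ x ∈ Ioc (0:ℝ) 1, x * a' x ≤ K * a x := by
    rcases hK with ⟨h1, h2, h3⟩ | ⟨h1, h2, h3, -⟩
    · exact ⟨h1, by linarith, h3⟩
    · exact ⟨by linarith, h2, h3⟩
  have hα'0 : 0 < α' := hαw.trans hαα'
  have hβ'1 : β' < 1 := hβ'β.trans hβw
  have hα'1 : α' < 1 := by linarith
  have hβ'0 : 0 < β' := by linarith
  -- derivative values of ψ in the side regions
  have hdL : ∀ x ∈ Ioo (0:ℝ) α', deriv ψ x = x / a x := fun x hx =>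
    (aux_dpsi_left a a' ψ K α' ha hK2 hKb hα'1.le hψ.left hx).deriv
  have hdR : ∀ x ∈ Ioo β' 1, deriv ψ x = -(x / a x) := fun x hx =>
    (aux_dpsi_right a a' ψ β' ha hβ'0 hψ.right hx).deriv
  have hd2L : ∀ x ∈ Ioo (0:ℝ) α', a x ^ 2 * deriv (deriv ψ) x = a x - x * a' x := by
    intro x hx
    have hx1 : x ∈ Ioo (0:ℝ) 1 := ⟨hx.1, hx.2.trans hα'1⟩
    have hax : 0 < a x := ha.pos x ⟨hx1.1, hx1.2.le⟩
    have heq : deriv ψ =ᶠ[𝓝 x] fun y => y / a y := by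
      filter_upwards [isOpen_Ioo.mem_nhds hx] with y hy
      exact hdL y hy
    have hdd : HasDerivAt (fun y => y / a y) ((1 * a x - x * a' x) / (a x) ^ 2) x :=
      (hasDerivAt_id x).div (ha.hasDeriv x ⟨hx1.1, hx1.2.le⟩) hax.ne'
    rw [heq.deriv_eq, hdd.deriv]
    field_simp
  have hd2R : ∀ x ∈ Ioo β' 1, a x ^ 2 * deriv (deriv ψ) x = -(a x - x * a' x) := by
    intro x hx
    have hx1 : x ∈ Ioo (0:ℝ) 1 := ⟨hβ'0.trans hx.1, hx.2⟩
    have hax : 0 < a x := ha.pos x ⟨hx1.1, hx1.2.le⟩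
    have heq : deriv ψ =ᶠ[𝓝 x] fun y => -(y / a y) := by
      filter_upwards [isOpen_Ioo.mem_nhds hx] with y hy
      exact hdR y hy
    have hdd : HasDerivAt (fun y => -(y / a y)) (-((1 * a x - x * a' x) / (a x) ^ 2)) x :=
      ((hasDerivAt_id x).div (ha.hasDeriv x ⟨hx1.1, hx1.2.le⟩) hax.ne').neg
    rw [heq.deriv_eq, hdd.deriv]
    field_simp
  -- smoothness facts for deriv ψ
  have hcd2 : ContDiffOn ℝ 2 ψ (Ioo 0 1) := hψ.smooth.mono Ioo_subset_Icc_self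
  have hdiffψ : DifferentiableOn ℝ ψ (Ioo 0 1) := hcd2.differentiableOn (by norm_num)
  have hD1 : ∀ x ∈ Ioo (0:ℝ) 1, HasDerivAt ψ (deriv ψ x) x := fun x hx =>
    (hdiffψ.differentiableAt (isOpen_Ioo.mem_nhds hx)).hasDerivAt
  have hcd1 : ContDiffOn ℝ 1 (deriv ψ) (Ioo 0 1) :=
    hcd2.deriv_of_isOpen isOpen_Ioo (by norm_num)
  have hD1c : ContinuousOn (deriv ψ) (Ioo 0 1) := hcd1.continuousOn
  have hD2c : ContinuousOn (deriv (deriv ψ)) (Ioo 0 1) :=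
    hcd1.continuousOn_deriv_of_isOpen isOpen_Ioo le_rfl
  have hdiffd : DifferentiableOn ℝ (deriv ψ) (Ioo 0 1) := hcd1.differentiableOn one_ne_zero
  have hD2 : ∀ x ∈ Ioo (0:ℝ) 1, HasDerivAt (deriv ψ) (deriv (deriv ψ) x) x := fun x hx =>
    (hdiffd.differentiableAt (isOpen_Ioo.mem_nhds hx)).hasDerivAt
  -- bound on the middle region
  have hsubM : Icc α' β' ⊆ Ioo (0:ℝ) 1 := fun y hy =>
    ⟨hα'0.trans_le hy.1, lt_of_le_of_lt hy.2 hβ'1⟩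
  have hkerc : ContinuousOn
      (fun x => a x * (a' x * deriv ψ x + 2 * a x * deriv (deriv ψ) x)) (Icc α' β') := by
    have hac : ContinuousOn a (Icc α' β') :=
      ha.cont.mono (fun y hy => ⟨(hsubM hy).1.le, (hsubM hy).2.le⟩)
    have ha'c : ContinuousOn a' (Icc α' β') :=
      ha.contDeriv.mono (fun y hy => ⟨(hsubM hy).1, (hsubM hy).2.le⟩)
    exact hac.mul ((ha'c.mul (hD1c.mono hsubM)).add
      (((continuousOn_const.mul hac)).mul (hD2c.mono hsubM)))
  obtain ⟨M0, hM0⟩ := (isCompact_Icc).exists_bound_of_continuousOn hkerc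
  set M : ℝ := max M0 0 with hMdef
  have hMnn : 0 ≤ M := le_max_right _ _
  have hMb : ∀ x ∈ Icc α' β',
      |a x * (a' x * deriv ψ x + 2 * a x * deriv (deriv ψ) x)| ≤ M := by
    intro x hx
    have hh := hM0 x hx
    rw [Real.norm_eq_abs] at hh
    exact hh.trans (le_max_left _ _)
  -- positivity of a at key points
  have hmA0 : 0 < a α' := ha.pos α' ⟨hα'0, hα'1.le⟩
  have ha10 : 0 < a 1 := ha.pos 1 ⟨one_pos, le_rfl⟩
  -- the constants
  set C : ℝ := min 1 (2 - K) with hCdef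
  have hCpos : 0 < C := lt_min one_pos (by linarith)
  have hC1 : C ≤ 1 := min_le_left _ _
  have hC2K : C ≤ 2 - K := min_le_right _ _
  set lam₀ : ℝ := max (max 1 (2 * a 1 / β' ^ 2)) (M ^ 2 / (4 * (a α') ^ 2 * C)) with hlamdef
  have hlam₀pos : 0 < lam₀ :=
    lt_of_lt_of_le one_pos ((le_max_left _ _).trans (le_max_left _ _))
  refine ⟨C, hCpos, lam₀, hlam₀pos, ?_⟩
  intro lam hlam s hs h v _ _ _ hI0 hI1 hI2 hI3
  have hlam1 : (1:ℝ) ≤ lam := le_trans ((le_max_left _ _).trans (le_max_left _ _)) hlam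
  have hlampos : 0 < lam := lt_of_lt_of_le one_pos hlam1
  have hlamb : 2 * a 1 ≤ lam * β' ^ 2 := by
    have h1 : 2 * a 1 / β' ^ 2 ≤ lam :=
      le_trans ((le_max_right _ _).trans (le_max_left _ _)) hlam
    rw [div_le_iff₀ (by positivity)] at h1
    linarith
  have hlamM : M ^ 2 ≤ 4 * (a α') ^ 2 * C * lam := by
    have h1 : M ^ 2 / (4 * (a α') ^ 2 * C) ≤ lam := le_trans (le_max_right _ _) hlam
    rw [div_le_iff₀ (by positivity)] at h1
    linarith
  -- derivative computations (depending on lam)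
  have heta : ∀ x ∈ Ioo (0:ℝ) 1,
      HasDerivAt (fun y => etaFun ψ lam y) (lam * deriv ψ x * etaFun ψ lam x) x := by
    intro x hx
    have hin : HasDerivAt (fun y => lam * (psiSup ψ + ψ y)) (lam * deriv ψ x) x := by
      simpa using ((hD1 x hx).const_add (psiSup ψ)).const_mul lam
    have h2 := hin.exp
    have h3 : HasDerivAt (fun y => etaFun ψ lam y)
        (Real.exp (lam * (psiSup ψ + ψ x)) * (lam * deriv ψ x)) x := h2
    convert h3 using 1
    unfold etaFun
    ring
  have hphi : ∀ t : ℝ, ∀ x ∈ Ioo (0:ℝ) 1,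
      HasDerivAt (fun y => phiFun T ψ lam t y)
        (thetaFun T t * (lam * deriv ψ x * etaFun ψ lam x)) x := by
    intro t x hx
    exact ((heta x hx).sub_const (Real.exp (3 * (lam * psiSup ψ)))).const_mul (thetaFun T t)
  have hpdX : ∀ t : ℝ, ∀ x ∈ Ioo (0:ℝ) 1,
      pderivX (phiFun T ψ lam) t x = thetaFun T t * (lam * deriv ψ x * etaFun ψ lam x) :=
    fun t x hx => (hphi t x hx).deriv
  have hG : ∀ t : ℝ, ∀ x ∈ Ioo (0:ℝ) 1,
      pderivX (fun t x => a x * pderivX (phiFun T ψ lam) t x ^ 2) t x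
        = thetaFun T t ^ 2 * lam ^ 2 * etaFun ψ lam x ^ 2 *
          (a' x * deriv ψ x ^ 2 + 2 * a x * deriv ψ x * deriv (deriv ψ) x
            + 2 * lam * a x * deriv ψ x ^ 3) := by
    intro t x hx
    have hEq : (fun y => a y * pderivX (phiFun T ψ lam) t y ^ 2)
        =ᶠ[𝓝 x] fun y => a y * (thetaFun T t * (lam * (deriv ψ y * etaFun ψ lam y))) ^ 2 := by
      filter_upwards [isOpen_Ioo.mem_nhds hx] with y hy
      rw [hpdX t y hy]
      ring
    have h1 : HasDerivAt (fun y => deriv ψ y * etaFun ψ lam y)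
        (deriv (deriv ψ) x * etaFun ψ lam x
          + deriv ψ x * (lam * deriv ψ x * etaFun ψ lam x)) x :=
      (hD2 x hx).mul (heta x hx)
    have h2 : HasDerivAt (fun y => thetaFun T t * (lam * (deriv ψ y * etaFun ψ lam y)))
        (thetaFun T t * (lam * (deriv (deriv ψ) x * etaFun ψ lam x
          + deriv ψ x * (lam * deriv ψ x * etaFun ψ lam x)))) x :=
      (h1.const_mul lam).const_mul (thetaFun T t)
    have h3 : HasDerivAt
        (fun y => a y * (thetaFun T t * (lam * (deriv ψ y * etaFun ψ lam y))) ^ 2) _ x :=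
      (ha.hasDeriv x ⟨hx.1, hx.2.le⟩).mul (h2.pow 2)
    show deriv (fun y => a y * pderivX (phiFun T ψ lam) t y ^ 2) x = _
    rw [hEq.deriv_eq, h3.deriv]
    push_cast
    ring
  -- the pointwise inequality
  have hpt : ∀ p : ℝ × ℝ, p ∈ QSub T 0 1 → p.2 ≠ α' → p.2 ≠ β' →
      C * lam ^ 4 * (a p.2 ^ 2 * |deriv ψ p.2| ^ 4 * sigmaFun T ψ lam p.1 p.2 ^ 3
          * wFun T ψ lam s v p.1 p.2 ^ 2)
        - C * lam ^ 3 * (QSub T α' β').indicator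
            (fun q => sigmaFun T ψ lam q.1 q.2 ^ 3 * wFun T ψ lam s v q.1 q.2 ^ 2) p
        + C * lam ^ 3 * (QSub T 0 α').indicator
            (fun q => q.2 ^ 2 / a q.2 * sigmaFun T ψ lam q.1 q.2 ^ 3
              * wFun T ψ lam s v q.1 q.2 ^ 2) p
      ≤ a p.2 * pderivX (phiFun T ψ lam) p.1 p.2
          * pderivX (fun t x => a x * pderivX (phiFun T ψ lam) t x ^ 2) p.1 p.2
          * wFun T ψ lam s v p.1 p.2 ^ 2 := by
    intro p hp hne1 hne2
    have ht : p.1 ∈ Ioo 0 T := hp.1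
    have hx : p.2 ∈ Ioo (0:ℝ) 1 := hp.2
    have hax : 0 < a p.2 := ha.pos p.2 ⟨hx.1, hx.2.le⟩
    have hθ : 0 ≤ thetaFun T p.1 := by unfold thetaFun; positivity
    have hη : 0 < etaFun ψ lam p.2 := Real.exp_pos _
    have hP : 0 ≤ thetaFun T p.1 ^ 3 * etaFun ψ lam p.2 ^ 3 * wFun T ψ lam s v p.1 p.2 ^ 2 :=
      mul_nonneg (mul_nonneg (pow_nonneg hθ 3) (pow_nonneg hη.le 3)) (sq_nonneg _)
    have habs : |deriv ψ p.2| ^ 4 = deriv ψ p.2 ^ 4 := by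
      rw [← abs_pow]
      exact abs_of_nonneg (by positivity)
    rw [habs, hpdX p.1 p.2 hx, hG p.1 p.2 hx]
    simp only [sigmaFun]
    rcases lt_trichotomy p.2 α' with hxa | hxa | hxa
    · -- left region
      have hi2 : (QSub T α' β').indicator
          (fun q => (thetaFun T q.1 * etaFun ψ lam q.2) ^ 3 * wFun T ψ lam s v q.1 q.2 ^ 2) p
          = 0 :=
        indicator_of_notMem (show p ∉ QSub T α' β' from fun hm => absurd hm.2.1 (not_lt.mpr hxa.le)) _
      have hi3 : (QSub T 0 α').indicator
          (fun q => q.2 ^ 2 / a q.2 * (thetaFun T q.1 * etaFun ψ lam q.2) ^ 3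
            * wFun T ψ lam s v q.1 q.2 ^ 2) p
          = p.2 ^ 2 / a p.2 * (thetaFun T p.1 * etaFun ψ lam p.2) ^ 3
            * wFun T ψ lam s v p.1 p.2 ^ 2 :=
        indicator_of_mem (show p ∈ QSub T 0 α' from ⟨ht, ⟨hx.1, hxa⟩⟩) _
      rw [hi2, hi3]
      have hxmem : p.2 ∈ Ioo (0:ℝ) α' := ⟨hx.1, hxa⟩
      have hdm : a p.2 * deriv ψ p.2 = p.2 := by
        rw [hdL p.2 hxmem]; field_simp
      have hd2m := hd2L p.2 hxmem
      have hdiv : p.2 ^ 2 / a p.2 = a p.2 * deriv ψ p.2 ^ 2 := by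
        rw [hdL p.2 hxmem]; field_simp
      rw [hdiv]
      have hxa' : p.2 * a' p.2 ≤ K * a p.2 := hKb p.2 ⟨hx.1, hx.2.le⟩
      have e1 : a p.2 ^ 2 * deriv ψ p.2 ^ 4 = p.2 ^ 2 * deriv ψ p.2 ^ 2 := by
        linear_combination (deriv ψ p.2 ^ 2 * (a p.2 * deriv ψ p.2 + p.2)) * hdm
      have e3 : a p.2 * a' p.2 * deriv ψ p.2 ^ 3
          + 2 * (a p.2 ^ 2 * deriv ψ p.2 ^ 2 * deriv (deriv ψ) p.2)
          + 2 * lam * (a p.2 ^ 2 * deriv ψ p.2 ^ 4)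
          = deriv ψ p.2 ^ 2 * (2 * a p.2 - p.2 * a' p.2)
            + 2 * lam * (p.2 ^ 2 * deriv ψ p.2 ^ 2) := by
        linear_combination (a' p.2 * deriv ψ p.2 ^ 2
          + 2 * lam * deriv ψ p.2 ^ 2 * (a p.2 * deriv ψ p.2 + p.2)) * hdm
          + (2 * deriv ψ p.2 ^ 2) * hd2m
      have base := aux_base_left C lam K p.2 (a p.2) (a' p.2) (deriv ψ p.2)
        (deriv (deriv ψ) p.2) hC2K hC1 hax hlampos hx.1 hxa' e1 e3
      have final := mul_le_mul_of_nonneg_right base hP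
      exact le_of_eq_of_le (by ring) (le_of_le_of_eq final (by ring))
    · exact absurd hxa hne1
    · rcases lt_trichotomy p.2 β' with hxb | hxb | hxb
      · -- middle region
        have hi2 : (QSub T α' β').indicator
            (fun q => (thetaFun T q.1 * etaFun ψ lam q.2) ^ 3 * wFun T ψ lam s v q.1 q.2 ^ 2) p
            = (thetaFun T p.1 * etaFun ψ lam p.2) ^ 3 * wFun T ψ lam s v p.1 p.2 ^ 2 :=
          indicator_of_mem (show p ∈ QSub T α' β' from ⟨ht, ⟨hxa, hxb⟩⟩) _
        have hi3 : (QSub T 0 α').indicator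
            (fun q => q.2 ^ 2 / a q.2 * (thetaFun T q.1 * etaFun ψ lam q.2) ^ 3
              * wFun T ψ lam s v q.1 q.2 ^ 2) p
            = 0 :=
          indicator_of_notMem
            (show p ∉ QSub T 0 α' from fun hm => absurd hm.2.2 (not_lt.mpr hxa.le)) _
        rw [hi2, hi3]
        have hMx : |a p.2 * (a' p.2 * deriv ψ p.2 + 2 * a p.2 * deriv (deriv ψ) p.2)| ≤ M :=
          hMb p.2 ⟨hxa.le, hxb.le⟩
        obtain ⟨hBl, hBr⟩ := abs_le.mp hMx
        have hmA : a α' ≤ a p.2 :=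
          ha.mono ⟨hα'0.le, hα'1.le⟩ ⟨hx.1.le, hx.2.le⟩ hxa.le
        have base := aux_base_mid C lam M (a α') (a p.2) (a' p.2) (deriv ψ p.2)
          (deriv (deriv ψ) p.2) hCpos hC1 hlampos hmA0 hmA hax hlamM hBl
        have final := mul_le_mul_of_nonneg_right base hP
        exact le_of_eq_of_le (by ring) (le_of_le_of_eq final (by ring))
      · exact absurd hxb hne2
      · -- right region
        have hi2 : (QSub T α' β').indicator
            (fun q => (thetaFun T q.1 * etaFun ψ lam q.2) ^ 3 * wFun T ψ lam s v q.1 q.2 ^ 2) p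
            = 0 :=
          indicator_of_notMem
            (show p ∉ QSub T α' β' from fun hm => absurd hm.2.2 (not_lt.mpr hxb.le)) _
        have hi3 : (QSub T 0 α').indicator
            (fun q => q.2 ^ 2 / a q.2 * (thetaFun T q.1 * etaFun ψ lam q.2) ^ 3
              * wFun T ψ lam s v q.1 q.2 ^ 2) p
            = 0 :=
          indicator_of_notMem
            (show p ∉ QSub T 0 α' from fun hm => absurd hm.2.2 (not_lt.mpr (by linarith))) _
        rw [hi2, hi3]
        have hxmem : p.2 ∈ Ioo β' 1 := ⟨hxb, hx.2⟩
        have hdm : a p.2 * deriv ψ p.2 = -p.2 := by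
          rw [hdR p.2 hxmem]; field_simp
        have hd2m := hd2R p.2 hxmem
        have hA'0 : 0 ≤ a' p.2 := aux_deriv_nonneg a a' ha hx
        have hA1 : a p.2 ≤ a 1 := ha.mono ⟨hx.1.le, hx.2.le⟩ ⟨zero_le_one, le_rfl⟩ hx.2.le
        have e1 : a p.2 ^ 2 * deriv ψ p.2 ^ 4 = p.2 ^ 2 * deriv ψ p.2 ^ 2 := by
          linear_combination (deriv ψ p.2 ^ 2 * (a p.2 * deriv ψ p.2 - p.2)) * hdm
        have e3 : a p.2 * a' p.2 * deriv ψ p.2 ^ 3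
            + 2 * (a p.2 ^ 2 * deriv ψ p.2 ^ 2 * deriv (deriv ψ) p.2)
            + 2 * lam * (a p.2 ^ 2 * deriv ψ p.2 ^ 4)
            = deriv ψ p.2 ^ 2 * (p.2 * a' p.2 - 2 * a p.2)
              + 2 * lam * (p.2 ^ 2 * deriv ψ p.2 ^ 2) := by
          linear_combination (a' p.2 * deriv ψ p.2 ^ 2
            + 2 * lam * deriv ψ p.2 ^ 2 * (a p.2 * deriv ψ p.2 - p.2)) * hdm
            + (2 * deriv ψ p.2 ^ 2) * hd2m
        have base := aux_base_right C lam p.2 β' (a 1) (a p.2) (a' p.2) (deriv ψ p.2)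
          (deriv (deriv ψ) p.2) hC1 hlampos hxb hβ'0 hA'0 hA1 hlamb hx.1 e1 e3
        have final := mul_le_mul_of_nonneg_right base hP
        exact le_of_eq_of_le (by ring) (le_of_le_of_eq final (by ring))
  -- measurability and inclusion facts
  have hQm : MeasurableSet (QSub T 0 1) := measurableSet_Ioo.prod measurableSet_Ioo
  have hS2m : MeasurableSet (QSub T α' β') := measurableSet_Ioo.prod measurableSet_Ioo
  have hS3m : MeasurableSet (QSub T 0 α') := measurableSet_Ioo.prod measurableSet_Ioo
  have hS2sub : QSub T α' β' ⊆ QSub T 0 1 :=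
    Set.prod_mono_right (Ioo_subset_Ioo (by linarith) (by linarith))
  have hS3sub : QSub T 0 α' ⊆ QSub T 0 1 :=
    Set.prod_mono_right (Ioo_subset_Ioo le_rfl hα'1.le)
  have hi2g : Integrable ((QSub T α' β').indicator
      (fun q : ℝ × ℝ => sigmaFun T ψ lam q.1 q.2 ^ 3 * wFun T ψ lam s v q.1 q.2 ^ 2))
      volume := hI2.integrable_indicator hS2m
  have hi3g : Integrable ((QSub T 0 α').indicator
      (fun q : ℝ × ℝ => q.2 ^ 2 / a q.2 * sigmaFun T ψ lam q.1 q.2 ^ 3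
        * wFun T ψ lam s v q.1 q.2 ^ 2)) volume := hI3.integrable_indicator hS3m
  have hint1 : Integrable (fun p : ℝ × ℝ => C * lam ^ 4
      * (a p.2 ^ 2 * |deriv ψ p.2| ^ 4 * sigmaFun T ψ lam p.1 p.2 ^ 3
        * wFun T ψ lam s v p.1 p.2 ^ 2)) (volume.restrict (QSub T 0 1)) :=
    hI1.const_mul _
  have hint2 : Integrable (fun p : ℝ × ℝ => C * lam ^ 3
      * (QSub T α' β').indicator
        (fun q : ℝ × ℝ => sigmaFun T ψ lam q.1 q.2 ^ 3 * wFun T ψ lam s v q.1 q.2 ^ 2) p)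
      (volume.restrict (QSub T 0 1)) := (hi2g.integrableOn).const_mul _
  have hint3 : Integrable (fun p : ℝ × ℝ => C * lam ^ 3
      * (QSub T 0 α').indicator
        (fun q : ℝ × ℝ => q.2 ^ 2 / a q.2 * sigmaFun T ψ lam q.1 q.2 ^ 3
          * wFun T ψ lam s v q.1 q.2 ^ 2) p)
      (volume.restrict (QSub T 0 1)) := (hi3g.integrableOn).const_mul _
  -- almost-everywhere avoidance of the two lines
  have hNae : ∀ᵐ p : ℝ × ℝ ∂volume, p.2 ≠ α' ∧ p.2 ≠ β' := by
    have hnull : volume ((univ : Set ℝ) ×ˢ ({α'} ∪ {β'} : Set ℝ)) = 0 := by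
      rw [show (volume : Measure (ℝ × ℝ)) = (volume : Measure ℝ).prod volume from rfl,
        Measure.prod_prod]
      have h0 : volume ({α'} ∪ {β'} : Set ℝ) = 0 :=
        le_antisymm ((measure_union_le _ _).trans (by simp)) zero_le
      rw [h0, mul_zero]
    rw [ae_iff]
    refine measure_mono_null ?_ hnull
    intro p hp
    simp only [mem_setOf_eq] at hp
    have hpp : p.2 = α' ∨ p.2 = β' := by tauto
    refine ⟨mem_univ _, ?_⟩
    simp only [union_singleton, mem_insert_iff, mem_singleton_iff]
    tauto
  have hle : (fun p : ℝ × ℝ =>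
      C * lam ^ 4 * (a p.2 ^ 2 * |deriv ψ p.2| ^ 4 * sigmaFun T ψ lam p.1 p.2 ^ 3
          * wFun T ψ lam s v p.1 p.2 ^ 2)
        - C * lam ^ 3 * (QSub T α' β').indicator
            (fun q => sigmaFun T ψ lam q.1 q.2 ^ 3 * wFun T ψ lam s v q.1 q.2 ^ 2) p
        + C * lam ^ 3 * (QSub T 0 α').indicator
            (fun q => q.2 ^ 2 / a q.2 * sigmaFun T ψ lam q.1 q.2 ^ 3
              * wFun T ψ lam s v q.1 q.2 ^ 2) p)
      ≤ᵐ[volume.restrict (QSub T 0 1)]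
      (fun p : ℝ × ℝ => a p.2 * pderivX (phiFun T ψ lam) p.1 p.2
        * pderivX (fun t x => a x * pderivX (phiFun T ψ lam) t x ^ 2) p.1 p.2
        * wFun T ψ lam s v p.1 p.2 ^ 2) := by
    filter_upwards [ae_restrict_mem hQm, ae_restrict_of_ae hNae] with p hp hnp
    exact hpt p hp hnp.1 hnp.2
  have hintg : Integrable (fun p : ℝ × ℝ => C * lam ^ 4
      * (a p.2 ^ 2 * |deriv ψ p.2| ^ 4 * sigmaFun T ψ lam p.1 p.2 ^ 3
        * wFun T ψ lam s v p.1 p.2 ^ 2)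
      - C * lam ^ 3 * (QSub T α' β').indicator
          (fun q : ℝ × ℝ => sigmaFun T ψ lam q.1 q.2 ^ 3 * wFun T ψ lam s v q.1 q.2 ^ 2) p
      + C * lam ^ 3 * (QSub T 0 α').indicator
          (fun q : ℝ × ℝ => q.2 ^ 2 / a q.2 * sigmaFun T ψ lam q.1 q.2 ^ 3
            * wFun T ψ lam s v q.1 q.2 ^ 2) p)
      (volume.restrict (QSub T 0 1)) := (hint1.sub hint2).add hint3
  have hmono := integral_mono_ae hintg hI0 hle
  have hint12 : Integrable (fun p : ℝ × ℝ => C * lam ^ 4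
      * (a p.2 ^ 2 * |deriv ψ p.2| ^ 4 * sigmaFun T ψ lam p.1 p.2 ^ 3
        * wFun T ψ lam s v p.1 p.2 ^ 2)
      - C * lam ^ 3 * (QSub T α' β').indicator
          (fun q : ℝ × ℝ => sigmaFun T ψ lam q.1 q.2 ^ 3 * wFun T ψ lam s v q.1 q.2 ^ 2) p)
      (volume.restrict (QSub T 0 1)) := hint1.sub hint2
  simp only [integral_add hint12 hint3, integral_sub hint1 hint2,
    integral_const_mul, setIntegral_indicator hS2m, setIntegral_indicator hS3m,
    inter_eq_self_of_subset_right hS2sub, inter_eq_self_of_subset_right hS3sub] at hmono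
  have hfin := mul_le_mul_of_nonneg_left hmono (by positivity : (0:ℝ) ≤ s ^ 3)
  nlinarith [hfin]
end

section
/- There exists a constant C>0 such that for every λ ≥ 1, every s>0 and every regular solution v of the auxiliary degenerate problem with right-hand side h ∈ L²(Q), setting w = e^{sφ} v, one has −2s² ∬_Q φ_tx a φ_x w² ≥ −C s² λ² ( ∫₀ᵀ ∫₀^{α'} (x²/a) σ³ w² + ∬_{(0,T)×ω'} σ³ w² + ∬_Q a² |ψ'|⁴ σ³ w² ). -/
open MeasureTheory Set Real Filter

section AuxLemmas

open MeasureTheory Set Real Filter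

lemma abs_le_psiSup {ψ : ℝ → ℝ} (hc : ContinuousOn ψ (Icc 0 1)) {x : ℝ}
    (hx : x ∈ Icc (0:ℝ) 1) : |ψ x| ≤ psiSup ψ := by
  have hb : BddAbove (range fun p : Icc (0:ℝ) 1 => |ψ p.1|) := by
    obtain ⟨M, hM⟩ := (isCompact_Icc.image_of_continuousOn hc.abs).bddAbove
    refine ⟨M, ?_⟩
    rintro y ⟨p, rfl⟩
    exact hM ⟨p.1, p.2, rfl⟩
  exact le_ciSup hb ⟨x, hx⟩

lemma theta_hasDerivAt {T t : ℝ} (h : t * (T - t) ≠ 0) :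
    HasDerivAt (thetaFun T)
      (-(4 * (t * (T - t)) ^ 3 * (T - 2 * t)) / ((t * (T - t)) ^ 4) ^ 2) t := by
  have h1 : HasDerivAt (fun τ : ℝ => τ * (T - τ)) (T - 2 * t) t := by
    have := (hasDerivAt_id t).mul ((hasDerivAt_const t T).sub (hasDerivAt_id t))
    exact this.congr_deriv (by show (1:ℝ) * (T - t) + t * (0 - 1) = T - 2 * t; ring)
  have h2 := (h1.pow 4).inv (pow_ne_zero 4 h)
  have h3 : thetaFun T = fun τ : ℝ => ((τ * (T - τ)) ^ 4)⁻¹ := by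
    funext τ; simp [thetaFun]
  rw [h3]
  have e : -(4 * (t * (T - t)) ^ 3 * (T - 2 * t)) / ((t * (T - t)) ^ 4) ^ 2 =
      -(((4:ℕ):ℝ) * (t * (T - t)) ^ (4 - 1) * (T - 2 * t)) /
        ((fun τ : ℝ => τ * (T - τ)) ^ 4) t ^ 2 := by norm_num
  rw [e]
  exact h2

lemma eta_hasDerivAt (ψ : ℝ → ℝ) (lam : ℝ) {x d : ℝ} (hd : HasDerivAt ψ d x) :
    HasDerivAt (etaFun ψ lam) (lam * d * etaFun ψ lam x) x := by
  have h1 : HasDerivAt (fun y => lam * (psiSup ψ + ψ y)) (lam * d) x := by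
    simpa using ((hasDerivAt_const x (psiSup ψ)).add hd).const_mul lam
  have h2 := h1.exp
  simp only [etaFun]
  exact h2.congr_deriv (by ring)

lemma pderivX_phi (T : ℝ) (ψ : ℝ → ℝ) (lam t : ℝ) {x d : ℝ} (hd : HasDerivAt ψ d x) :
    pderivX (phiFun T ψ lam) t x = thetaFun T t * (lam * d * etaFun ψ lam x) := by
  have h := (((eta_hasDerivAt ψ lam hd).sub_const (exp (3 * (lam * psiSup ψ)))).const_mul
    (thetaFun T t))
  exact h.deriv

lemma pderivT_phi (T : ℝ) (ψ : ℝ → ℝ) (lam : ℝ) {t : ℝ} (h : t * (T - t) ≠ 0) (y : ℝ) :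
    pderivT (phiFun T ψ lam) t y =
      -(4 * (t * (T - t)) ^ 3 * (T - 2 * t)) / ((t * (T - t)) ^ 4) ^ 2 *
        (etaFun ψ lam y - exp (3 * (lam * psiSup ψ))) :=
  ((theta_hasDerivAt h).mul_const (etaFun ψ lam y - exp (3 * (lam * psiSup ψ)))).deriv

lemma pderivX_pderivT_phi (T : ℝ) (ψ : ℝ → ℝ) (lam : ℝ) {t x d : ℝ}
    (h : t * (T - t) ≠ 0) (hd : HasDerivAt ψ d x) :
    pderivX (pderivT (phiFun T ψ lam)) t x =
      -(4 * (t * (T - t)) ^ 3 * (T - 2 * t)) / ((t * (T - t)) ^ 4) ^ 2 *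
        (lam * d * etaFun ψ lam x) := by
  have hfe : (fun y => pderivT (phiFun T ψ lam) t y) =
      fun y => -(4 * (t * (T - t)) ^ 3 * (T - 2 * t)) / ((t * (T - t)) ^ 4) ^ 2 *
        (etaFun ψ lam y - exp (3 * (lam * psiSup ψ))) := funext fun y => pderivT_phi T ψ lam h y
  show deriv (fun y => pderivT (phiFun T ψ lam) t y) x = _
  rw [hfe]
  exact (((eta_hasDerivAt ψ lam hd).sub_const _).const_mul _).deriv

end AuxLemmas
section AuxLemmas2

open MeasureTheory Set Real Filter

lemma alg_bound {T t η lam d A W : ℝ} (hT : 0 < T) (ht0 : 0 < t) (htT : t < T)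
    (hη : 1 ≤ η) (hA : 0 ≤ A) (hW : 0 ≤ W) :
    -(4 * (t * (T - t)) ^ 3 * (T - 2 * t)) / ((t * (T - t)) ^ 4) ^ 2 * (lam * d * η) * A *
        (1 / (t * (T - t)) ^ 4 * (lam * d * η)) * W ≤
      T ^ 7 * lam ^ 2 * (A * d ^ 2 * ((1 / (t * (T - t)) ^ 4 * η) ^ 3 * W)) := by
  have hu : 0 < t * (T - t) := mul_pos ht0 (by linarith)
  have hune : t * (T - t) ≠ 0 := ne_of_gt hu
  have hη0 : (0:ℝ) < η := lt_of_lt_of_le one_pos hη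
  have hu3pos : 0 < (t * (T - t)) ^ 3 := pow_pos hu 3
  have hu4 : t * (T - t) ≤ T ^ 2 / 4 := by nlinarith [sq_nonneg (T - 2 * t)]
  have hu3 : (t * (T - t)) ^ 3 ≤ (T ^ 2 / 4) ^ 3 := pow_le_pow_left₀ hu.le hu4 3
  have h1 : 4 * (t * (T - t)) ^ 3 * (2 * t - T) ≤ T ^ 7 := by
    have e1 : 4 * (t * (T - t)) ^ 3 * (2 * t - T) ≤ 4 * (t * (T - t)) ^ 3 * T :=
      mul_le_mul_of_nonneg_left (by linarith) (by linarith)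
    nlinarith [mul_le_mul_of_nonneg_right hu3 hT.le, pow_pos hT 7]
  have hP : 0 ≤ lam ^ 2 * d ^ 2 * A * W :=
    mul_nonneg (mul_nonneg (mul_nonneg (sq_nonneg _) (sq_nonneg _)) hA) hW
  have hη23 : η ^ 2 ≤ η ^ 3 := by nlinarith
  have hL : -(4 * (t * (T - t)) ^ 3 * (T - 2 * t)) / ((t * (T - t)) ^ 4) ^ 2 * (lam * d * η) * A *
      (1 / (t * (T - t)) ^ 4 * (lam * d * η)) * W =
      4 * (t * (T - t)) ^ 3 * (2 * t - T) * (η ^ 2 * (lam ^ 2 * d ^ 2 * A * W)) /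
        (t * (T - t)) ^ 12 := by
    field_simp
    ring
  have hR : T ^ 7 * lam ^ 2 * (A * d ^ 2 * ((1 / (t * (T - t)) ^ 4 * η) ^ 3 * W)) =
      T ^ 7 * (η ^ 3 * (lam ^ 2 * d ^ 2 * A * W)) / (t * (T - t)) ^ 12 := by
    field_simp
  rw [hL, hR]
  rw [div_le_div_iff_of_pos_right (pow_pos hu 12)]
  calc 4 * (t * (T - t)) ^ 3 * (2 * t - T) * (η ^ 2 * (lam ^ 2 * d ^ 2 * A * W))
      ≤ T ^ 7 * (η ^ 2 * (lam ^ 2 * d ^ 2 * A * W)) :=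
        mul_le_mul_of_nonneg_right h1 (mul_nonneg (sq_nonneg _) hP)
    _ ≤ T ^ 7 * (η ^ 3 * (lam ^ 2 * d ^ 2 * A * W)) :=
        mul_le_mul_of_nonneg_left (mul_le_mul_of_nonneg_right hη23 hP) (pow_pos hT 7).le

lemma key_pointwise (T : ℝ) (ψ : ℝ → ℝ) (aa : ℝ → ℝ) (lam s : ℝ) (v : ℝ → ℝ → ℝ)
    {t x d : ℝ} (hT : 0 < T) (ht : t ∈ Ioo 0 T) (hd : HasDerivAt ψ d x)
    (hη : 1 ≤ etaFun ψ lam x) (ha0 : 0 ≤ aa x) :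
    pderivX (pderivT (phiFun T ψ lam)) t x * aa x * pderivX (phiFun T ψ lam) t x *
        wFun T ψ lam s v t x ^ 2 ≤
      T ^ 7 * lam ^ 2 *
        (aa x * d ^ 2 * (sigmaFun T ψ lam t x ^ 3 * wFun T ψ lam s v t x ^ 2)) := by
  have hu : 0 < t * (T - t) := mul_pos ht.1 (by simpa using sub_pos.2 ht.2)
  rw [pderivX_pderivT_phi T ψ lam (ne_of_gt hu) hd, pderivX_phi T ψ lam t hd]
  simp only [sigmaFun, thetaFun]
  exact alg_bound hT ht.1 ht.2 hη ha0 (sq_nonneg _)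

lemma contOn_div_a {a a' : ℝ → ℝ} (ha : DegenCoeff a a') :
    ContinuousOn (fun y => y / a y) (Ioo 0 1) :=
  ContinuousOn.div continuousOn_id (ha.cont.mono (fun z hz => ⟨hz.1.le, hz.2.le⟩))
    (fun z hz => (ha.pos z ⟨hz.1, hz.2.le⟩).ne')

lemma contOn_deriv_psi {ψ : ℝ → ℝ} (h : ContDiffOn ℝ 2 ψ (Icc 0 1)) :
    ContinuousOn (fun x => deriv ψ x) (Ioo 0 1) := by
  have h1 : ContinuousOn (derivWithin ψ (Icc 0 1)) (Icc 0 1) :=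
    h.continuousOn_derivWithin (uniqueDiffOn_Icc one_pos) (by norm_num)
  exact ((h1.mono Ioo_subset_Icc_self).congr
    fun x hx => (derivWithin_of_mem_nhds (Icc_mem_nhds hx.1 hx.2)).symm)

end AuxLemmas2
section AuxLemmas3

open MeasureTheory Set Real Filter

lemma psi_hasDerivAt_right {a a' ψ : ℝ → ℝ} {β' : ℝ}
    (ha : DegenCoeff a a') (hβ'0 : 0 < β') (hβ'1 : β' < 1)
    (hright : ∀ x ∈ Icc β' 1, ψ x = -∫ y in β'..x, y / a y)
    {x : ℝ} (hx : x ∈ Ioo β' 1) : HasDerivAt ψ (-(x / a x)) x := by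
  have hx0 : 0 < x := hβ'0.trans hx.1
  have hcontf : ContinuousOn (fun y => y / a y) (Ioo 0 1) := contOn_div_a ha
  have hint : IntervalIntegrable (fun y => y / a y) volume β' x := by
    apply ContinuousOn.intervalIntegrable
    apply hcontf.mono
    rw [uIcc_of_le hx.1.le]
    intro z hz
    exact ⟨hβ'0.trans_le hz.1, lt_of_le_of_lt hz.2 hx.2⟩
  have hFTC : HasDerivAt (fun u => ∫ y in β'..u, y / a y) (x / a x) x :=
    intervalIntegral.integral_hasDerivAt_right hint
      (ContinuousOn.stronglyMeasurableAtFilter isOpen_Ioo hcontf x ⟨hx0, hx.2⟩)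
      (hcontf.continuousAt (Ioo_mem_nhds hx0 hx.2))
  have hEq : (fun u => -∫ y in β'..u, y / a y) =ᶠ[nhds x] ψ := by
    filter_upwards [Ioo_mem_nhds hx.1 hx.2] with u hu
    exact (hright u ⟨hu.1.le, hu.2.le⟩).symm
  exact hFTC.neg.congr_of_eventuallyEq hEq.symm

lemma psi_hasDerivAt_left {a a' ψ : ℝ → ℝ} {K α' : ℝ}
    (ha : DegenCoeff a a') (hKb : ∀ x ∈ Ioc (0:ℝ) 1, x * a' x ≤ K * a x)
    (hK2 : K < 2) (hα'0 : 0 < α') (hα'1 : α' < 1)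
    (hleft : ∀ x ∈ Ico (0:ℝ) α', ψ x = ∫ y in (0:ℝ)..x, y / a y)
    {x : ℝ} (hx : x ∈ Ioo 0 α') : HasDerivAt ψ (x / a x) x := by
  have hx0 : 0 < x := hx.1
  have hx1 : x < 1 := hx.2.trans hα'1
  have haα' : 0 < a α' := ha.pos α' ⟨hα'0, hα'1.le⟩
  set c : ℝ := a α' / α' ^ K with hc_def
  have hc : 0 < c := div_pos haα' (rpow_pos_of_pos hα'0 K)
  have hlow : ∀ y ∈ Ioc (0:ℝ) α', c * y ^ K ≤ a y := by
    intro y hy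
    have hy0 : 0 < y := hy.1
    have hgd : ∀ z ∈ Ioo y α', HasDerivAt (fun z => a z / z ^ K)
        ((a' z * z ^ K - a z * (K * z ^ (K - 1))) / (z ^ K) ^ 2) z := by
      intro z hz
      have hz0 : 0 < z := hy0.trans hz.1
      have hz1 : z ≤ 1 := (hz.2.trans hα'1).le
      exact (ha.hasDeriv z ⟨hz0, hz1⟩).div
        (Real.hasDerivAt_rpow_const (p := K) (Or.inl hz0.ne'))
        (rpow_pos_of_pos hz0 K).ne'
    have hant : AntitoneOn (fun z => a z / z ^ K) (Icc y α') := by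
      apply antitoneOn_of_deriv_nonpos (convex_Icc y α')
      · apply ContinuousOn.div
        · exact ha.cont.mono (fun z hz => ⟨le_trans hy0.le hz.1, le_trans hz.2 hα'1.le⟩)
        · intro z hz
          exact (Real.continuousAt_rpow_const z K
            (Or.inl (lt_of_lt_of_le hy0 hz.1).ne')).continuousWithinAt
        · intro z hz
          exact (rpow_pos_of_pos (lt_of_lt_of_le hy0 hz.1) K).ne'
      · intro z hz
        rw [interior_Icc] at hz
        exact ((hgd z hz).differentiableAt).differentiableWithinAt
      · intro z hz
        rw [interior_Icc] at hz
        rw [(hgd z hz).deriv]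
        have hz0 : 0 < z := hy0.trans hz.1
        have hz1 : z ≤ 1 := (hz.2.trans hα'1).le
        apply div_nonpos_of_nonpos_of_nonneg _ (sq_nonneg _)
        have hzK : z ^ (K - 1) = z ^ K / z := Real.rpow_sub_one hz0.ne' K
        have hfac : a' z * z ^ K - a z * (K * z ^ (K - 1)) =
            z ^ (K - 1) * (z * a' z - K * a z) := by
          rw [hzK]
          field_simp
        rw [hfac]
        apply mul_nonpos_of_nonneg_of_nonpos (Real.rpow_nonneg hz0.le _)
        have := hKb z ⟨hz0, hz1⟩
        linarith
    have h2 := hant ⟨le_refl y, hy.2⟩ ⟨hy.2, le_refl α'⟩ hy.2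
    simp only at h2
    rw [← hc_def] at h2
    exact (le_div_iff₀ (rpow_pos_of_pos hy0 K)).1 h2
  have hcontf : ContinuousOn (fun y => y / a y) (Ioo 0 1) := contOn_div_a ha
  have hmeasf : AEStronglyMeasurable (fun y => y / a y) (volume.restrict (Ioc 0 x)) := by
    apply ContinuousOn.aestronglyMeasurable _ measurableSet_Ioc
    apply ContinuousOn.div continuousOn_id
    · exact ha.cont.mono (fun z hz => ⟨hz.1.le, hz.2.trans hx1.le⟩)
    · intro z hz
      exact (ha.pos z ⟨hz.1, hz.2.trans hx1.le⟩).ne'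
  have hdom : IntervalIntegrable (fun y => c⁻¹ * y ^ (1 - K)) volume 0 x :=
    (intervalIntegral.intervalIntegrable_rpow' (by linarith)).const_mul c⁻¹
  have hint : IntervalIntegrable (fun y => y / a y) volume 0 x := by
    apply hdom.mono_fun
    · rwa [uIoc_of_le hx0.le]
    · rw [uIoc_of_le hx0.le, Filter.EventuallyLE, ae_restrict_iff' measurableSet_Ioc]
      apply ae_of_all
      intro y hy
      have hy0 : 0 < y := hy.1
      have hyα' : y ≤ α' := le_of_lt (lt_of_le_of_lt hy.2 hx.2)
      have hay : c * y ^ K ≤ a y := hlow y ⟨hy0, hyα'⟩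
      have haypos : 0 < a y := ha.pos y ⟨hy0, hy.2.trans hx1.le⟩
      have hyK : 0 < y ^ K := rpow_pos_of_pos hy0 K
      have h1 : y / a y ≤ c⁻¹ * y ^ (1 - K) := by
        have hstep : y / a y ≤ y / (c * y ^ K) := by
          gcongr
        calc y / a y ≤ y / (c * y ^ K) := hstep
          _ = c⁻¹ * y ^ (1 - K) := by
            rw [Real.rpow_sub hy0, Real.rpow_one]
            field_simp
      have h2 : 0 ≤ y / a y := div_nonneg hy0.le haypos.le
      have h3 : 0 ≤ c⁻¹ * y ^ (1 - K) := by positivity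
      show ‖y / a y‖ ≤ ‖c⁻¹ * y ^ (1 - K)‖
      rw [Real.norm_eq_abs, Real.norm_eq_abs, abs_of_nonneg h2, abs_of_nonneg h3]
      exact h1
  have hFTC : HasDerivAt (fun u => ∫ y in (0:ℝ)..u, y / a y) (x / a x) x :=
    intervalIntegral.integral_hasDerivAt_right hint
      (ContinuousOn.stronglyMeasurableAtFilter isOpen_Ioo hcontf x ⟨hx0, hx1⟩)
      (hcontf.continuousAt (Ioo_mem_nhds hx0 hx1))
  have hEq : (fun u => ∫ y in (0:ℝ)..u, y / a y) =ᶠ[nhds x] ψ := by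
    filter_upwards [Ioo_mem_nhds (show (0:ℝ) < x from hx0) hx.2] with u hu
    exact (hleft u ⟨hu.1.le, hu.2⟩).symm
  exact hFTC.congr_of_eventuallyEq hEq.symm

end AuxLemmas3
set_option maxHeartbeats 1600000

theorem lower_bound_mixed_time_space
    (T αw βw α' β' K : ℝ)
    (hT : 0 < T) (hαw : 0 < αw) (hαα' : αw < α') (hα'β' : α' < β')
    (hβ'β : β' < βw) (hβw : βw < 1)
    (a a' ψ : ℝ → ℝ)
    (ha : DegenCoeff a a')
    (hK : DegenWeak a a' K ∨ DegenStrong a a' K)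
    (hψ : WeightPsi a α' β' ψ) :
    ∃ C > (0:ℝ), ∀ lam ≥ (1:ℝ), ∀ s > (0:ℝ),
      ∀ h v : ℝ → ℝ → ℝ,
        IntegrableOn (fun p : ℝ × ℝ => h p.1 p.2 ^ 2) (QSub T 0 1) →
        RegSol T a h v →
        (BdryWeak T v ∨ BdryStrong T a v) →
        IntegrableOn (fun p : ℝ × ℝ => (pderivX (pderivT (phiFun T ψ lam)) p.1 p.2) * a p.2 * (pderivX (phiFun T ψ lam) p.1 p.2) * (wFun T ψ lam s v p.1 p.2) ^ 2) (QSub T 0 1) →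
        IntegrableOn (fun p : ℝ × ℝ => (p.2 ^ 2 / a p.2) * (sigmaFun T ψ lam p.1 p.2) ^ 3 * (wFun T ψ lam s v p.1 p.2) ^ 2) (QSub T 0 α') →
        IntegrableOn (fun p : ℝ × ℝ => (sigmaFun T ψ lam p.1 p.2) ^ 3 * (wFun T ψ lam s v p.1 p.2) ^ 2) (QSub T α' β') →
        IntegrableOn (fun p : ℝ × ℝ => (a p.2) ^ 2 * |(deriv ψ p.2)| ^ 4 * (sigmaFun T ψ lam p.1 p.2) ^ 3 * (wFun T ψ lam s v p.1 p.2) ^ 2) (QSub T 0 1) →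
        -(2 * s ^ 2) * (∫ p in QSub T 0 1, (pderivX (pderivT (phiFun T ψ lam)) p.1 p.2) * a p.2 * (pderivX (phiFun T ψ lam) p.1 p.2) * (wFun T ψ lam s v p.1 p.2) ^ 2) ≥
          -(C * s ^ 2 * lam ^ 2) * ((∫ p in QSub T 0 α', (p.2 ^ 2 / a p.2) * (sigmaFun T ψ lam p.1 p.2) ^ 3 * (wFun T ψ lam s v p.1 p.2) ^ 2)
          + (∫ p in QSub T α' β', (sigmaFun T ψ lam p.1 p.2) ^ 3 * (wFun T ψ lam s v p.1 p.2) ^ 2)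
          + (∫ p in QSub T 0 1, (a p.2) ^ 2 * |(deriv ψ p.2)| ^ 4 * (sigmaFun T ψ lam p.1 p.2) ^ 3 * (wFun T ψ lam s v p.1 p.2) ^ 2)) := by
  obtain ⟨hK2, hKb⟩ : K < 2 ∧ ∀ x ∈ Ioc (0:ℝ) 1, x * a' x ≤ K * a x := by
    rcases hK with ⟨h0, h1, hb⟩ | ⟨h1, h2, hb, -⟩
    · exact ⟨by linarith, hb⟩
    · exact ⟨h2, hb⟩
  have hα'0 : 0 < α' := lt_trans hαw hαα'
  have hα'1 : α' < 1 := by linarith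
  have hβ'0 : 0 < β' := lt_trans hα'0 hα'β'
  have hβ'1 : β' < 1 := by linarith
  have hψc : ContinuousOn ψ (Icc 0 1) := hψ.smooth.continuousOn
  have hT7 : (0:ℝ) < T ^ 7 := pow_pos hT 7
  obtain ⟨Mψ, hMψ⟩ : ∃ M : ℝ, ∀ x ∈ Icc α' β', |deriv ψ x| ≤ M := by
    obtain ⟨M, hM⟩ := (isCompact_Icc (a := α') (b := β')).exists_bound_of_continuousOn
      ((contOn_deriv_psi hψ.smooth).mono (fun z hz =>
        ⟨lt_of_lt_of_le hα'0 hz.1, lt_of_le_of_lt hz.2 hβ'1⟩))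
    exact ⟨M, fun x hx => by simpa [Real.norm_eq_abs] using hM x hx⟩
  have hMψ0 : 0 ≤ Mψ := le_trans (abs_nonneg _) (hMψ α' ⟨le_refl α', hα'β'.le⟩)
  have hMa : ∀ x ∈ Icc (0:ℝ) 1, a x ≤ a 1 :=
    fun x hx => ha.mono hx ⟨zero_le_one, le_refl 1⟩ hx.2
  have hMa0 : 0 ≤ a 1 := (ha.pos 1 ⟨zero_lt_one, le_refl 1⟩).le
  set c2 : ℝ := a 1 * Mψ ^ 2 with hc2def
  set c3 : ℝ := a 1 / β' ^ 2 with hc3def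
  have hc20 : 0 ≤ c2 := mul_nonneg hMa0 (sq_nonneg _)
  have hc30 : 0 ≤ c3 := div_nonneg hMa0 (sq_nonneg _)
  refine ⟨2 * (T ^ 7 * (1 + c2 + c3)) + 1, by nlinarith, ?_⟩
  intro lam hlam s hs h v _ _ _ hIF hI1 hI2 hI3
  have hetaOne : ∀ x ∈ Icc (0:ℝ) 1, 1 ≤ etaFun ψ lam x := by
    intro x hx
    have habs := abs_le_psiSup hψc hx
    have h1 : 0 ≤ psiSup ψ + ψ x := by
      have := (abs_le.1 habs).1
      linarith
    exact Real.one_le_exp (mul_nonneg (by linarith) h1)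
  have hσ0 : ∀ t x : ℝ, 0 ≤ sigmaFun T ψ lam t x := by
    intro t x
    have h1 : 0 ≤ thetaFun T t := by
      simp only [thetaFun]
      positivity
    exact mul_nonneg h1 (exp_nonneg _)
  have hs1 : QSub T 0 α' ⊆ QSub T 0 1 :=
    fun p hp => ⟨hp.1, hp.2.1, lt_trans hp.2.2 hα'1⟩
  have hs2 : QSub T α' β' ⊆ QSub T 0 1 :=
    fun p hp => ⟨hp.1, lt_trans hα'0 hp.2.1, lt_trans hp.2.2 hβ'1⟩
  have hs3 : QSub T β' 1 ⊆ QSub T 0 1 :=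
    fun p hp => ⟨hp.1, lt_trans hβ'0 hp.2.1, hp.2.2⟩
  have hm1 : MeasurableSet (QSub T 0 α') := measurableSet_Ioo.prod measurableSet_Ioo
  have hm2 : MeasurableSet (QSub T α' β') := measurableSet_Ioo.prod measurableSet_Ioo
  have hm3 : MeasurableSet (QSub T β' 1) := measurableSet_Ioo.prod measurableSet_Ioo
  -- pointwise bounds
  have key1 : ∀ p ∈ QSub T 0 α',
      (pderivX (pderivT (phiFun T ψ lam)) p.1 p.2) * a p.2 * (pderivX (phiFun T ψ lam) p.1 p.2) *
        (wFun T ψ lam s v p.1 p.2) ^ 2 ≤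
      T ^ 7 * lam ^ 2 * ((p.2 ^ 2 / a p.2) * (sigmaFun T ψ lam p.1 p.2) ^ 3 *
        (wFun T ψ lam s v p.1 p.2) ^ 2) := by
    rintro ⟨t, x⟩ hp
    dsimp only
    have ht : t ∈ Ioo 0 T := hp.1
    have hx : x ∈ Ioo 0 α' := hp.2
    have hx1 : x < 1 := lt_trans hx.2 hα'1
    have hapos : 0 < a x := ha.pos x ⟨hx.1, hx1.le⟩
    have hd := psi_hasDerivAt_left ha hKb hK2 hα'0 hα'1 hψ.left hx
    have hkey := key_pointwise T ψ a lam s v hT ht hd (hetaOne x ⟨hx.1.le, hx1.le⟩) hapos.le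
    refine le_trans hkey (le_of_eq ?_)
    have e1 : a x * (x / a x) ^ 2 = x ^ 2 / a x := by
      field_simp
    rw [e1]
    ring
  have key2 : ∀ p ∈ QSub T α' β',
      (pderivX (pderivT (phiFun T ψ lam)) p.1 p.2) * a p.2 * (pderivX (phiFun T ψ lam) p.1 p.2) *
        (wFun T ψ lam s v p.1 p.2) ^ 2 ≤
      T ^ 7 * c2 * lam ^ 2 * ((sigmaFun T ψ lam p.1 p.2) ^ 3 *
        (wFun T ψ lam s v p.1 p.2) ^ 2) := by
    rintro ⟨t, x⟩ hp
    dsimp only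
    have ht : t ∈ Ioo 0 T := hp.1
    have hx : x ∈ Ioo α' β' := hp.2
    have hx0 : 0 < x := lt_trans hα'0 hx.1
    have hx1 : x < 1 := lt_trans hx.2 hβ'1
    have hdiff : DifferentiableAt ℝ ψ x :=
      (hψ.smooth.differentiableOn (by norm_num)).differentiableAt (Icc_mem_nhds hx0 hx1)
    have hd := hdiff.hasDerivAt
    have hkey := key_pointwise T ψ a lam s v hT ht hd (hetaOne x ⟨hx0.le, hx1.le⟩)
      (ha.pos x ⟨hx0, hx1.le⟩).le
    refine le_trans hkey ?_
    have hσW : 0 ≤ sigmaFun T ψ lam t x ^ 3 * wFun T ψ lam s v t x ^ 2 :=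
      mul_nonneg (pow_nonneg (hσ0 t x) 3) (sq_nonneg _)
    have had : a x * deriv ψ x ^ 2 ≤ c2 := by
      have h1 : a x ≤ a 1 := hMa x ⟨hx0.le, hx1.le⟩
      have h2 : |deriv ψ x| ≤ Mψ := hMψ x ⟨hx.1.le, hx.2.le⟩
      have h3 : deriv ψ x ^ 2 ≤ Mψ ^ 2 := by
        rw [← sq_abs]
        exact pow_le_pow_left₀ (abs_nonneg _) h2 2
      have h4 : 0 ≤ a x := (ha.pos x ⟨hx0, hx1.le⟩).le
      rw [hc2def]
      nlinarith [mul_le_mul_of_nonneg_left h3 h4, mul_le_mul_of_nonneg_right h1 (sq_nonneg Mψ)]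
    calc T ^ 7 * lam ^ 2 * (a x * deriv ψ x ^ 2 *
          (sigmaFun T ψ lam t x ^ 3 * wFun T ψ lam s v t x ^ 2))
        ≤ T ^ 7 * lam ^ 2 * (c2 * (sigmaFun T ψ lam t x ^ 3 * wFun T ψ lam s v t x ^ 2)) :=
          mul_le_mul_of_nonneg_left (mul_le_mul_of_nonneg_right had hσW)
            (mul_nonneg hT7.le (sq_nonneg _))
      _ = T ^ 7 * c2 * lam ^ 2 * (sigmaFun T ψ lam t x ^ 3 * wFun T ψ lam s v t x ^ 2) := by
          ring
  have key3 : ∀ p ∈ QSub T β' 1,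
      (pderivX (pderivT (phiFun T ψ lam)) p.1 p.2) * a p.2 * (pderivX (phiFun T ψ lam) p.1 p.2) *
        (wFun T ψ lam s v p.1 p.2) ^ 2 ≤
      T ^ 7 * c3 * lam ^ 2 * ((a p.2) ^ 2 * |(deriv ψ p.2)| ^ 4 *
        (sigmaFun T ψ lam p.1 p.2) ^ 3 * (wFun T ψ lam s v p.1 p.2) ^ 2) := by
    rintro ⟨t, x⟩ hp
    dsimp only
    have ht : t ∈ Ioo 0 T := hp.1
    have hx : x ∈ Ioo β' 1 := hp.2
    have hx0 : 0 < x := lt_trans hβ'0 hx.1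
    have hapos : 0 < a x := ha.pos x ⟨hx0, hx.2.le⟩
    have hd := psi_hasDerivAt_right ha hβ'0 hβ'1 hψ.right hx
    have hderiv_eq : deriv ψ x = -(x / a x) := hd.deriv
    have hkey := key_pointwise T ψ a lam s v hT ht hd (hetaOne x ⟨hx0.le, hx.2.le⟩) hapos.le
    refine le_trans hkey ?_
    have hσW : 0 ≤ sigmaFun T ψ lam t x ^ 3 * wFun T ψ lam s v t x ^ 2 :=
      mul_nonneg (pow_nonneg (hσ0 t x) 3) (sq_nonneg _)
    have key3' : a x * (-(x / a x)) ^ 2 ≤ c3 * (a x ^ 2 * |deriv ψ x| ^ 4) := by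
      rw [hderiv_eq, abs_neg, abs_of_pos (div_pos hx0 hapos)]
      have e1 : a x * (-(x / a x)) ^ 2 = x ^ 2 / a x := by
        field_simp
      have e2 : c3 * (a x ^ 2 * (x / a x) ^ 4) = a 1 * x ^ 4 / (β' ^ 2 * a x ^ 2) := by
        rw [hc3def]
        field_simp
      rw [e1, e2, div_le_div_iff₀ hapos (mul_pos (pow_pos hβ'0 2) (pow_pos hapos 2))]
      have hxM : a x ≤ a 1 := hMa x ⟨hx0.le, hx.2.le⟩
      have hb2 : β' ^ 2 ≤ x ^ 2 := by nlinarith [hx.1, hβ'0]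
      nlinarith [mul_le_mul_of_nonneg_right hb2 (mul_nonneg (sq_nonneg x) (sq_nonneg (a x))),
        mul_le_mul_of_nonneg_right hxM (mul_nonneg (pow_nonneg hx0.le 4) hapos.le)]
    calc T ^ 7 * lam ^ 2 * (a x * (-(x / a x)) ^ 2 *
          (sigmaFun T ψ lam t x ^ 3 * wFun T ψ lam s v t x ^ 2))
        ≤ T ^ 7 * lam ^ 2 * (c3 * (a x ^ 2 * |deriv ψ x| ^ 4) *
          (sigmaFun T ψ lam t x ^ 3 * wFun T ψ lam s v t x ^ 2)) :=
          mul_le_mul_of_nonneg_left (mul_le_mul_of_nonneg_right key3' hσW)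
            (mul_nonneg hT7.le (sq_nonneg _))
      _ = T ^ 7 * c3 * lam ^ 2 * (a x ^ 2 * |deriv ψ x| ^ 4 *
          sigmaFun T ψ lam t x ^ 3 * wFun T ψ lam s v t x ^ 2) := by
          ring
  -- integral bounds
  have hmono1 : (∫ p in QSub T 0 α', (pderivX (pderivT (phiFun T ψ lam)) p.1 p.2) * a p.2 *
        (pderivX (phiFun T ψ lam) p.1 p.2) * (wFun T ψ lam s v p.1 p.2) ^ 2) ≤
      T ^ 7 * lam ^ 2 * ∫ p in QSub T 0 α', (p.2 ^ 2 / a p.2) *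
        (sigmaFun T ψ lam p.1 p.2) ^ 3 * (wFun T ψ lam s v p.1 p.2) ^ 2 := by
    rw [← integral_const_mul]
    exact setIntegral_mono_on (hIF.mono_set hs1) (hI1.const_mul _) hm1 key1
  have hmono2 : (∫ p in QSub T α' β', (pderivX (pderivT (phiFun T ψ lam)) p.1 p.2) * a p.2 *
        (pderivX (phiFun T ψ lam) p.1 p.2) * (wFun T ψ lam s v p.1 p.2) ^ 2) ≤
      T ^ 7 * c2 * lam ^ 2 * ∫ p in QSub T α' β',
        (sigmaFun T ψ lam p.1 p.2) ^ 3 * (wFun T ψ lam s v p.1 p.2) ^ 2 := by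
    rw [← integral_const_mul]
    exact setIntegral_mono_on (hIF.mono_set hs2) (hI2.const_mul _) hm2 key2
  have hmono3 : (∫ p in QSub T β' 1, (pderivX (pderivT (phiFun T ψ lam)) p.1 p.2) * a p.2 *
        (pderivX (phiFun T ψ lam) p.1 p.2) * (wFun T ψ lam s v p.1 p.2) ^ 2) ≤
      T ^ 7 * c3 * lam ^ 2 * ∫ p in QSub T β' 1, (a p.2) ^ 2 * |(deriv ψ p.2)| ^ 4 *
        (sigmaFun T ψ lam p.1 p.2) ^ 3 * (wFun T ψ lam s v p.1 p.2) ^ 2 := by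
    rw [← integral_const_mul]
    exact setIntegral_mono_on (hIF.mono_set hs3) ((hI3.mono_set hs3).const_mul _) hm3 key3
  have hmono3b : (∫ p in QSub T β' 1, (a p.2) ^ 2 * |(deriv ψ p.2)| ^ 4 *
        (sigmaFun T ψ lam p.1 p.2) ^ 3 * (wFun T ψ lam s v p.1 p.2) ^ 2) ≤
      ∫ p in QSub T 0 1, (a p.2) ^ 2 * |(deriv ψ p.2)| ^ 4 *
        (sigmaFun T ψ lam p.1 p.2) ^ 3 * (wFun T ψ lam s v p.1 p.2) ^ 2 := by
    apply setIntegral_mono_set hI3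
    · apply ae_of_all
      intro p
      exact mul_nonneg (mul_nonneg (mul_nonneg (sq_nonneg _) (pow_nonneg (abs_nonneg _) 4))
        (pow_nonneg (hσ0 p.1 p.2) 3)) (sq_nonneg _)
    · exact HasSubset.Subset.eventuallyLE hs3
  have hA3 : (∫ p in QSub T β' 1, (pderivX (pderivT (phiFun T ψ lam)) p.1 p.2) * a p.2 *
        (pderivX (phiFun T ψ lam) p.1 p.2) * (wFun T ψ lam s v p.1 p.2) ^ 2) ≤
      T ^ 7 * c3 * lam ^ 2 * ∫ p in QSub T 0 1, (a p.2) ^ 2 * |(deriv ψ p.2)| ^ 4 *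
        (sigmaFun T ψ lam p.1 p.2) ^ 3 * (wFun T ψ lam s v p.1 p.2) ^ 2 :=
    le_trans hmono3 (mul_le_mul_of_nonneg_left hmono3b
      (mul_nonneg (mul_nonneg hT7.le hc30) (sq_nonneg _)))
  -- splitting
  have hdisj12 : Disjoint (QSub T 0 α') (QSub T α' β') := by
    rw [Set.disjoint_left]
    intro p h1 h2
    have := h1.2.2
    have := h2.2.1
    linarith
  have hdisj13 : Disjoint (QSub T 0 α') (QSub T β' 1) := by
    rw [Set.disjoint_left]
    intro p h1 h2
    have := h1.2.2
    have := h2.2.1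
    linarith
  have hdisj23 : Disjoint (QSub T α' β') (QSub T β' 1) := by
    rw [Set.disjoint_left]
    intro p h1 h2
    have := h1.2.2
    have := h2.2.1
    linarith
  have hdisjU : Disjoint (QSub T 0 α' ∪ QSub T α' β') (QSub T β' 1) :=
    disjoint_union_left.2 ⟨hdisj13, hdisj23⟩
  have hnull2 : volume (Ioo (0:ℝ) T ×ˢ ({α'} ∪ {β'} : Set ℝ)) = 0 := by
    rw [MeasureTheory.Measure.volume_eq_prod, MeasureTheory.Measure.prod_prod]
    have h0 : volume ({α'} ∪ {β'} : Set ℝ) = 0 :=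
      measure_union_null (measure_singleton _) (measure_singleton _)
    rw [h0, mul_zero]
  have hae : QSub T 0 1 =ᵐ[volume]
      ((QSub T 0 α' ∪ QSub T α' β' ∪ QSub T β' 1 : Set (ℝ × ℝ))) := by
    rw [ae_eq_set]
    constructor
    · refine measure_mono_null ?_ hnull2
      rintro ⟨t, x⟩ ⟨hp, hnp⟩
      refine ⟨hp.1, ?_⟩
      have hx : x ∈ Ioo (0:ℝ) 1 := hp.2
      simp only [mem_union, mem_singleton_iff]
      by_contra hcon
      push_neg at hcon
      apply hnp
      rcases lt_trichotomy x α' with hlt | heq | hgt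
      · exact Or.inl (Or.inl ⟨hp.1, hx.1, hlt⟩)
      · exact absurd heq hcon.1
      · rcases lt_trichotomy x β' with hlt' | heq' | hgt'
        · exact Or.inl (Or.inr ⟨hp.1, hgt, hlt'⟩)
        · exact absurd heq' hcon.2
        · exact Or.inr ⟨hp.1, hgt', hx.2⟩
    · have hsub : QSub T 0 α' ∪ QSub T α' β' ∪ QSub T β' 1 ⊆ QSub T 0 1 := by
        rintro p ((hp | hp) | hp)
        · exact hs1 hp
        · exact hs2 hp
        · exact hs3 hp
      rw [diff_eq_empty.mpr hsub]
      exact measure_empty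
  have hsplit : (∫ p in QSub T 0 1, (pderivX (pderivT (phiFun T ψ lam)) p.1 p.2) * a p.2 *
        (pderivX (phiFun T ψ lam) p.1 p.2) * (wFun T ψ lam s v p.1 p.2) ^ 2) =
      (∫ p in QSub T 0 α', (pderivX (pderivT (phiFun T ψ lam)) p.1 p.2) * a p.2 *
        (pderivX (phiFun T ψ lam) p.1 p.2) * (wFun T ψ lam s v p.1 p.2) ^ 2)
      + (∫ p in QSub T α' β', (pderivX (pderivT (phiFun T ψ lam)) p.1 p.2) * a p.2 *
        (pderivX (phiFun T ψ lam) p.1 p.2) * (wFun T ψ lam s v p.1 p.2) ^ 2)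
      + (∫ p in QSub T β' 1, (pderivX (pderivT (phiFun T ψ lam)) p.1 p.2) * a p.2 *
        (pderivX (phiFun T ψ lam) p.1 p.2) * (wFun T ψ lam s v p.1 p.2) ^ 2) := by
    rw [setIntegral_congr_set hae,
      setIntegral_union hdisjU hm3 ((hIF.mono_set hs1).union (hIF.mono_set hs2))
        (hIF.mono_set hs3),
      setIntegral_union hdisj12 hm2 (hIF.mono_set hs1) (hIF.mono_set hs2)]
  -- nonnegativity of the right-hand side integrals
  have hI1nn : 0 ≤ ∫ p in QSub T 0 α', (p.2 ^ 2 / a p.2) *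
      (sigmaFun T ψ lam p.1 p.2) ^ 3 * (wFun T ψ lam s v p.1 p.2) ^ 2 := by
    apply setIntegral_nonneg hm1
    intro p hp
    have hapos := ha.pos p.2 ⟨hp.2.1, (lt_trans hp.2.2 hα'1).le⟩
    exact mul_nonneg (mul_nonneg (div_nonneg (sq_nonneg _) hapos.le)
      (pow_nonneg (hσ0 p.1 p.2) 3)) (sq_nonneg _)
  have hI2nn : 0 ≤ ∫ p in QSub T α' β',
      (sigmaFun T ψ lam p.1 p.2) ^ 3 * (wFun T ψ lam s v p.1 p.2) ^ 2 := by
    apply setIntegral_nonneg hm2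
    intro p _
    exact mul_nonneg (pow_nonneg (hσ0 p.1 p.2) 3) (sq_nonneg _)
  have hI3nn : 0 ≤ ∫ p in QSub T 0 1, (a p.2) ^ 2 * |(deriv ψ p.2)| ^ 4 *
      (sigmaFun T ψ lam p.1 p.2) ^ 3 * (wFun T ψ lam s v p.1 p.2) ^ 2 := by
    apply setIntegral_nonneg (measurableSet_Ioo.prod measurableSet_Ioo)
    intro p _
    exact mul_nonneg (mul_nonneg (mul_nonneg (sq_nonneg _) (pow_nonneg (abs_nonneg _) 4))
      (pow_nonneg (hσ0 p.1 p.2) 3)) (sq_nonneg _)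
  -- conclude
  rw [ge_iff_le, hsplit]
  have hC1 : T ^ 7 * lam ^ 2 *
      (∫ p in QSub T 0 α', (p.2 ^ 2 / a p.2) * (sigmaFun T ψ lam p.1 p.2) ^ 3 *
        (wFun T ψ lam s v p.1 p.2) ^ 2) ≤
      T ^ 7 * (1 + c2 + c3) * lam ^ 2 *
      (∫ p in QSub T 0 α', (p.2 ^ 2 / a p.2) * (sigmaFun T ψ lam p.1 p.2) ^ 3 *
        (wFun T ψ lam s v p.1 p.2) ^ 2) := by
    apply mul_le_mul_of_nonneg_right _ hI1nn
    apply mul_le_mul_of_nonneg_right _ (sq_nonneg lam)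
    nlinarith
  have hC2 : T ^ 7 * c2 * lam ^ 2 *
      (∫ p in QSub T α' β', (sigmaFun T ψ lam p.1 p.2) ^ 3 *
        (wFun T ψ lam s v p.1 p.2) ^ 2) ≤
      T ^ 7 * (1 + c2 + c3) * lam ^ 2 *
      (∫ p in QSub T α' β', (sigmaFun T ψ lam p.1 p.2) ^ 3 *
        (wFun T ψ lam s v p.1 p.2) ^ 2) := by
    apply mul_le_mul_of_nonneg_right _ hI2nn
    apply mul_le_mul_of_nonneg_right _ (sq_nonneg lam)
    nlinarith
  have hC3 : T ^ 7 * c3 * lam ^ 2 *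
      (∫ p in QSub T 0 1, (a p.2) ^ 2 * |(deriv ψ p.2)| ^ 4 * (sigmaFun T ψ lam p.1 p.2) ^ 3 *
        (wFun T ψ lam s v p.1 p.2) ^ 2) ≤
      T ^ 7 * (1 + c2 + c3) * lam ^ 2 *
      (∫ p in QSub T 0 1, (a p.2) ^ 2 * |(deriv ψ p.2)| ^ 4 * (sigmaFun T ψ lam p.1 p.2) ^ 3 *
        (wFun T ψ lam s v p.1 p.2) ^ 2) := by
    apply mul_le_mul_of_nonneg_right _ hI3nn
    apply mul_le_mul_of_nonneg_right _ (sq_nonneg lam)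
    nlinarith
  have hsum : (∫ p in QSub T 0 α', (pderivX (pderivT (phiFun T ψ lam)) p.1 p.2) * a p.2 *
        (pderivX (phiFun T ψ lam) p.1 p.2) * (wFun T ψ lam s v p.1 p.2) ^ 2)
      + (∫ p in QSub T α' β', (pderivX (pderivT (phiFun T ψ lam)) p.1 p.2) * a p.2 *
        (pderivX (phiFun T ψ lam) p.1 p.2) * (wFun T ψ lam s v p.1 p.2) ^ 2)
      + (∫ p in QSub T β' 1, (pderivX (pderivT (phiFun T ψ lam)) p.1 p.2) * a p.2 *
        (pderivX (phiFun T ψ lam) p.1 p.2) * (wFun T ψ lam s v p.1 p.2) ^ 2) ≤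
      T ^ 7 * (1 + c2 + c3) * lam ^ 2 *
      ((∫ p in QSub T 0 α', (p.2 ^ 2 / a p.2) * (sigmaFun T ψ lam p.1 p.2) ^ 3 *
        (wFun T ψ lam s v p.1 p.2) ^ 2)
      + (∫ p in QSub T α' β', (sigmaFun T ψ lam p.1 p.2) ^ 3 * (wFun T ψ lam s v p.1 p.2) ^ 2)
      + (∫ p in QSub T 0 1, (a p.2) ^ 2 * |(deriv ψ p.2)| ^ 4 * (sigmaFun T ψ lam p.1 p.2) ^ 3 *
        (wFun T ψ lam s v p.1 p.2) ^ 2)) := by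
    have hexp : T ^ 7 * (1 + c2 + c3) * lam ^ 2 *
        ((∫ p in QSub T 0 α', (p.2 ^ 2 / a p.2) * (sigmaFun T ψ lam p.1 p.2) ^ 3 *
          (wFun T ψ lam s v p.1 p.2) ^ 2)
        + (∫ p in QSub T α' β', (sigmaFun T ψ lam p.1 p.2) ^ 3 * (wFun T ψ lam s v p.1 p.2) ^ 2)
        + (∫ p in QSub T 0 1, (a p.2) ^ 2 * |(deriv ψ p.2)| ^ 4 * (sigmaFun T ψ lam p.1 p.2) ^ 3 *
          (wFun T ψ lam s v p.1 p.2) ^ 2)) =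
        T ^ 7 * (1 + c2 + c3) * lam ^ 2 *
          (∫ p in QSub T 0 α', (p.2 ^ 2 / a p.2) * (sigmaFun T ψ lam p.1 p.2) ^ 3 *
            (wFun T ψ lam s v p.1 p.2) ^ 2)
        + T ^ 7 * (1 + c2 + c3) * lam ^ 2 *
          (∫ p in QSub T α' β', (sigmaFun T ψ lam p.1 p.2) ^ 3 * (wFun T ψ lam s v p.1 p.2) ^ 2)
        + T ^ 7 * (1 + c2 + c3) * lam ^ 2 *
          (∫ p in QSub T 0 1, (a p.2) ^ 2 * |(deriv ψ p.2)| ^ 4 *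
            (sigmaFun T ψ lam p.1 p.2) ^ 3 * (wFun T ψ lam s v p.1 p.2) ^ 2) := by
      ring
    rw [hexp]
    linarith [hmono1, hmono2, hA3, hC1, hC2, hC3]
  have h2s : (0:ℝ) ≤ 2 * s ^ 2 := by positivity
  have hfin := mul_le_mul_of_nonneg_left hsum h2s
  have h3 : 0 ≤ s ^ 2 * lam ^ 2 *
      ((∫ p in QSub T 0 α', (p.2 ^ 2 / a p.2) * (sigmaFun T ψ lam p.1 p.2) ^ 3 *
        (wFun T ψ lam s v p.1 p.2) ^ 2)
      + (∫ p in QSub T α' β', (sigmaFun T ψ lam p.1 p.2) ^ 3 * (wFun T ψ lam s v p.1 p.2) ^ 2)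
      + (∫ p in QSub T 0 1, (a p.2) ^ 2 * |(deriv ψ p.2)| ^ 4 * (sigmaFun T ψ lam p.1 p.2) ^ 3 *
        (wFun T ψ lam s v p.1 p.2) ^ 2)) := by
    apply mul_nonneg (mul_nonneg (sq_nonneg s) (sq_nonneg lam))
    linarith
  nlinarith [hfin, h3]
end
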